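/- arXiv:1108.5245 — 7 statements merged into one kernel-verified Lean document; each statement's English description precedes it below -/
import Mathlib

section
/- Let P be a finite poset and let (p_1, p_2, …, p_n) be a linear extension of P (an enumeration of the elements of P such that p_i < p_j in P implies i < j). Then for every order ideal I ∈ J(P), the Fon-Der-Flaass action satisfies Ψ(I) = t_{p_1}(t_{p_2}(⋯ t_{p_n}(I)⋯)), i.e. Ψ equals the composition of the toggles t_{p_1} t_{p_2} ⋯ t_{p_n} with t_{p_n} applied first. -/
open Classical

namespace FDF

variable {α : Type*} [PartialOrder α] [DecidableEq α]

/-- `I` is an order ideal (down-set) of the poset `α`. -/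
def IsIdeal (I : Finset α) : Prop := ∀ ⦃x y : α⦄, y ∈ I → x ≤ y → x ∈ I

/-- The toggle `t_p`: remove `p` if it is a maximal element of `I`; insert `p` if
`p ∉ I` and `I ∪ {p}` is an order ideal; otherwise do nothing. -/
noncomputable def toggle (p : α) (I : Finset α) : Finset α :=
  if p ∈ I ∧ ∀ y ∈ I, ¬ p < y then I.erase p
  else if p ∉ I ∧ IsIdeal (insert p I) then insert p I
  else I

variable [Fintype α]

/-- The Fon-Der-Flaass action on finsets: `fdf I` is the set of elements lying below
some minimal element of the complement of `I`, i.e. the unique order ideal whose maximal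
elements are the minimal elements of the complement of `I`. -/
noncomputable def fdf (I : Finset α) : Finset α :=
  Finset.univ.filter (fun x => ∃ y, y ∉ I ∧ (∀ z, z < y → z ∈ I) ∧ x ≤ y)

end FDF

section Aux

variable {P : Type*} [PartialOrder P] [Fintype P] [DecidableEq P]

lemma mem_fdf {I : Finset P} {x : P} :
    x ∈ FDF.fdf I ↔ ∃ y, y ∉ I ∧ (∀ z, z < y → z ∈ I) ∧ x ≤ y := by
  simp [FDF.fdf]

lemma fdf_lt_mem {I : Finset P} {x y : P} (hxy : x < y) (hy : y ∈ FDF.fdf I) : x ∈ I := by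
  obtain ⟨m, hm, hmin, hym⟩ := mem_fdf.mp hy
  exact hmin x (lt_of_lt_of_le hxy hym)

lemma fdf_mono {I : Finset P} {x y : P} (hxy : x ≤ y) (hy : y ∈ FDF.fdf I) :
    x ∈ FDF.fdf I := by
  obtain ⟨m, hm, hmin, hym⟩ := mem_fdf.mp hy
  exact mem_fdf.mpr ⟨m, hm, hmin, hxy.trans hym⟩

lemma exists_gt_of_mem_both {I : Finset P} {p : P} (h1 : p ∈ I) (h2 : p ∈ FDF.fdf I) :
    ∃ m, m ∈ FDF.fdf I ∧ p < m := by
  obtain ⟨m, hm, hmin, hpm⟩ := mem_fdf.mp h2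
  refine ⟨m, mem_fdf.mpr ⟨m, hm, hmin, le_refl m⟩, lt_of_le_of_ne hpm ?_⟩
  rintro rfl; exact hm h1

lemma exists_lt_not_mem {I : Finset P} {p : P} (h1 : p ∉ I) (h2 : p ∉ FDF.fdf I) :
    ∃ z, z < p ∧ z ∉ I := by
  by_contra h
  push_neg at h
  exact h2 (mem_fdf.mpr ⟨p, h1, fun z hz => h z hz, le_refl p⟩)

end Aux

/-- If `(p_1, …, p_n)` is a linear extension of a finite poset `P`, then for every order
ideal `I` of `P`, the Fon-Der-Flaass action satisfies
`Ψ(I) = t_{p_1}(t_{p_2}(⋯ t_{p_n}(I)⋯))`, with `t_{p_n}` applied first. -/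
theorem fdf_eq_foldr_toggle_of_linearExtension
    {P : Type*} [PartialOrder P] [Fintype P] [DecidableEq P]
    (e : Fin (Fintype.card P) ≃ P)
    (he : ∀ i j : Fin (Fintype.card P), e i < e j → i < j)
    (I : Finset P) (hI : FDF.IsIdeal I) :
    FDF.fdf I = (List.ofFn (fun i => e i)).foldr FDF.toggle I := by
  classical
  set idx : P → ℕ := fun x => ((e.symm x : Fin (Fintype.card P)) : ℕ) with hidxdef
  have hidx_lt : ∀ x y : P, x < y → idx x < idx y := by
    intro x y h
    have hxy : e (e.symm x) < e (e.symm y) := by simpa using h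
    exact he _ _ hxy
  have hidx_bound : ∀ x : P, idx x < Fintype.card P := fun x => (e.symm x).isLt
  set M : ℕ → Finset P := fun k =>
    Finset.univ.filter (fun x => (idx x < k ∧ x ∈ I) ∨ (k ≤ idx x ∧ x ∈ FDF.fdf I)) with hMdef
  have hMmem : ∀ k x, x ∈ M k ↔ (idx x < k ∧ x ∈ I) ∨ (k ≤ idx x ∧ x ∈ FDF.fdf I) := by
    intro k x; simp [hMdef]
  have hMn : M (Fintype.card P) = I := by
    ext x
    rw [hMmem]
    have hb := hidx_bound x
    constructor
    · rintro (⟨_, h⟩ | ⟨h, _⟩) <;> [exact h; omega]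
    · intro h; exact Or.inl ⟨hb, h⟩
  have hM0 : M 0 = FDF.fdf I := by
    ext x
    rw [hMmem]
    constructor
    · rintro (⟨h, _⟩ | ⟨_, h⟩) <;> [omega; exact h]
    · intro h; exact Or.inr ⟨Nat.zero_le _, h⟩
  -- the key step
  have step : ∀ (k : ℕ) (hk : k < Fintype.card P),
      FDF.toggle (e ⟨k, hk⟩) (M (k + 1)) = M k := by
    intro k hk
    set p : P := e ⟨k, hk⟩ with hp
    have hidxp : idx p = k := by simp [hidxdef, hp]
    have hxp : ∀ x : P, idx x = k → x = p := by
      intro x hx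
      have h1 : e.symm x = (⟨k, hk⟩ : Fin (Fintype.card P)) := Fin.ext hx
      have h2 := congrArg e h1
      simpa using h2
    by_cases hpI : p ∈ I <;> by_cases hpf : p ∈ FDF.fdf I
    · -- p ∈ I, p ∈ fdf I : toggle does nothing, M (k+1) = M k
      have hMeq : M (k + 1) = M k := by
        ext x
        rw [hMmem, hMmem]
        rcases lt_trichotomy (idx x) k with h | h | h
        · constructor
          · rintro (⟨_, hxI⟩ | ⟨hb, _⟩) <;> [exact Or.inl ⟨h, hxI⟩; omega]
          · rintro (⟨_, hxI⟩ | ⟨hb, _⟩) <;> [exact Or.inl ⟨by omega, hxI⟩; omega]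
        · have hxpe := hxp x h
          subst hxpe
          constructor
          · intro _; exact Or.inr ⟨by omega, hpf⟩
          · intro _; exact Or.inl ⟨by omega, hpI⟩
        · constructor
          · rintro (⟨hb, _⟩ | ⟨_, hxf⟩) <;> [omega; exact Or.inr ⟨by omega, hxf⟩]
          · rintro (⟨hb, _⟩ | ⟨_, hxf⟩) <;> [omega; exact Or.inr ⟨by omega, hxf⟩]
      obtain ⟨m, hmf, hpm⟩ := exists_gt_of_mem_both hpI hpf
      have hmM : m ∈ M (k + 1) := by
        refine (hMmem _ m).mpr (Or.inr ⟨?_, hmf⟩)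
        have h1 := hidx_lt p m hpm
        omega
      have hpM : p ∈ M (k + 1) := (hMmem _ p).mpr (Or.inl ⟨by omega, hpI⟩)
      have hc1 : ¬ (p ∈ M (k + 1) ∧ ∀ y ∈ M (k + 1), ¬ p < y) := by
        rintro ⟨-, h2⟩; exact (h2 m hmM) hpm
      have hc2 : ¬ (p ∉ M (k + 1) ∧ FDF.IsIdeal (insert p (M (k + 1)))) := by
        rintro ⟨h1, -⟩; exact h1 hpM
      rw [FDF.toggle, if_neg hc1, if_neg hc2, hMeq]
    · -- p ∈ I, p ∉ fdf I : toggle removes p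
      have hpM : p ∈ M (k + 1) := (hMmem _ p).mpr (Or.inl ⟨by omega, hpI⟩)
      have hmax : ∀ y ∈ M (k + 1), ¬ p < y := by
        intro y hy hlt
        rcases (hMmem _ y).mp hy with ⟨hb, _⟩ | ⟨_, hyf⟩
        · have := hidx_lt p y hlt; omega
        · exact hpf (fdf_mono hlt.le hyf)
      rw [FDF.toggle, if_pos ⟨hpM, hmax⟩]
      ext x
      rw [Finset.mem_erase, hMmem, hMmem]
      constructor
      · rintro ⟨hne, ⟨hb, hxI⟩ | ⟨hb, hxf⟩⟩
        · refine Or.inl ⟨?_, hxI⟩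
          rcases Nat.lt_or_ge (idx x) k with h | h
          · exact h
          · exact absurd (hxp x (by omega)) hne
        · exact Or.inr ⟨by omega, hxf⟩
      · rintro (⟨hb, hxI⟩ | ⟨hb, hxf⟩)
        · refine ⟨?_, Or.inl ⟨by omega, hxI⟩⟩
          intro hxe; subst hxe; omega
        · have hxk : k + 1 ≤ idx x := by
            rcases Nat.lt_or_ge (idx x) (k + 1) with h | h
            · have hxe : x = p := hxp x (by omega)
              rw [hxe] at hxf
              exact absurd hxf hpf
            · exact h
          refine ⟨?_, Or.inr ⟨hxk, hxf⟩⟩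
          intro hxe; rw [hxe] at hxk; omega
    · -- p ∉ I, p ∈ fdf I : toggle inserts p
      have hpM : p ∉ M (k + 1) := by
        rw [hMmem]
        rintro (⟨_, h⟩ | ⟨hb, _⟩) <;> [exact hpI h; omega]
      have hideal : FDF.IsIdeal (insert p (M (k + 1))) := by
        intro x y hy hxy
        rcases Finset.mem_insert.mp hy with rfl | hyM
        · -- y = p
          rcases eq_or_lt_of_le hxy with rfl | hlt
          · exact Finset.mem_insert_self _ _
          · have hxI : x ∈ I := fdf_lt_mem hlt hpf
            have h1 := hidx_lt x p hlt
            exact Finset.mem_insert_of_mem ((hMmem _ x).mpr (Or.inl ⟨by omega, hxI⟩))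
        · rcases eq_or_lt_of_le hxy with rfl | hlt
          · exact Finset.mem_insert_of_mem hyM
          rcases (hMmem _ y).mp hyM with ⟨hb, hyI⟩ | ⟨hb, hyf⟩
          · have hxI : x ∈ I := hI hyI hxy
            have h1 := hidx_lt x y hlt
            exact Finset.mem_insert_of_mem ((hMmem _ x).mpr (Or.inl ⟨by omega, hxI⟩))
          · have hxf : x ∈ FDF.fdf I := fdf_mono hxy hyf
            rcases Nat.lt_or_ge (idx x) (k + 1) with h | h
            · rcases Nat.lt_or_ge (idx x) k with h' | h'
              · have hxI : x ∈ I := fdf_lt_mem hlt hyf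
                exact Finset.mem_insert_of_mem ((hMmem _ x).mpr (Or.inl ⟨by omega, hxI⟩))
              · have hxk : idx x = k := by omega
                exact (hxp x hxk) ▸ Finset.mem_insert_self _ _
            · exact Finset.mem_insert_of_mem ((hMmem _ x).mpr (Or.inr ⟨h, hxf⟩))
      have hc1 : ¬ (p ∈ M (k + 1) ∧ ∀ y ∈ M (k + 1), ¬ p < y) := by
        rintro ⟨h1, -⟩; exact hpM h1
      rw [FDF.toggle, if_neg hc1, if_pos ⟨hpM, hideal⟩]
      ext x
      rw [Finset.mem_insert, hMmem, hMmem]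
      constructor
      · rintro (hxe | ⟨hb, hxI⟩ | ⟨hb, hxf⟩)
        · rw [hxe]
          exact Or.inr ⟨hidxp.ge, hpf⟩
        · rcases Nat.lt_or_ge (idx x) k with h | h
          · exact Or.inl ⟨h, hxI⟩
          · have hxe : x = p := hxp x (by omega)
            rw [hxe] at hxI
            exact absurd hxI hpI
        · exact Or.inr ⟨by omega, hxf⟩
      · rintro (⟨hb, hxI⟩ | ⟨hb, hxf⟩)
        · rcases Nat.lt_or_ge (idx x) k with h | h
          · exact Or.inr (Or.inl ⟨by omega, hxI⟩)
          · exact Or.inl (hxp x (by omega))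
        · rcases Nat.lt_or_ge (idx x) (k + 1) with h | h
          · exact Or.inl (hxp x (by omega))
          · exact Or.inr (Or.inr ⟨h, hxf⟩)
    · -- p ∉ I, p ∉ fdf I : toggle does nothing
      have hpM : p ∉ M (k + 1) := by
        rw [hMmem]
        rintro (⟨_, h⟩ | ⟨_, h⟩) <;> [exact hpI h; exact hpf h]
      obtain ⟨z, hzp, hzI⟩ := exists_lt_not_mem hpI hpf
      have hzk : idx z < k := by have := hidx_lt z p hzp; omega
      have hzM : z ∉ M (k + 1) := by
        rw [hMmem]
        rintro (⟨_, h⟩ | ⟨hb, _⟩) <;> [exact hzI h; omega]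
      have hMeq : M (k + 1) = M k := by
        ext x
        rw [hMmem, hMmem]
        rcases lt_trichotomy (idx x) k with h | h | h
        · constructor
          · rintro (⟨_, hxI⟩ | ⟨hb, _⟩) <;> [exact Or.inl ⟨h, hxI⟩; omega]
          · rintro (⟨_, hxI⟩ | ⟨hb, _⟩) <;> [exact Or.inl ⟨by omega, hxI⟩; omega]
        · have hxpe := hxp x h
          subst hxpe
          constructor
          · rintro (⟨_, hxI⟩ | ⟨hb, _⟩) <;> [exact absurd hxI hpI; omega]
          · rintro (⟨hb, _⟩ | ⟨_, hxf⟩) <;> [omega; exact absurd hxf hpf]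
        · constructor
          · rintro (⟨hb, _⟩ | ⟨_, hxf⟩) <;> [omega; exact Or.inr ⟨by omega, hxf⟩]
          · rintro (⟨hb, _⟩ | ⟨_, hxf⟩) <;> [omega; exact Or.inr ⟨by omega, hxf⟩]
      have hc1 : ¬ (p ∈ M (k + 1) ∧ ∀ y ∈ M (k + 1), ¬ p < y) := by
        rintro ⟨h1, -⟩; exact hpM h1
      have hc2 : ¬ (p ∉ M (k + 1) ∧ FDF.IsIdeal (insert p (M (k + 1)))) := by
        rintro ⟨-, h2⟩
        have hz : z ∈ insert p (M (k + 1)) := h2 (Finset.mem_insert_self p _) hzp.le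
        rcases Finset.mem_insert.mp hz with rfl | h
        · exact absurd hzp (lt_irrefl _)
        · exact hzM h
      rw [FDF.toggle, if_neg hc1, if_neg hc2, hMeq]
  -- main downward induction
  have main : ∀ j, j ≤ Fintype.card P →
      List.foldr FDF.toggle I
        ((List.ofFn (fun i : Fin (Fintype.card P) => e i)).drop (Fintype.card P - j)) =
      M (Fintype.card P - j) := by
    intro j
    induction j with
    | zero =>
      intro _
      simp only [Nat.sub_zero]
      rw [List.drop_eq_nil_of_le (by simp), hMn]
      rfl
    | succ j ih =>
      intro hj
      have hk : Fintype.card P - (j + 1) < Fintype.card P := by omega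
      have hk1 : Fintype.card P - (j + 1) + 1 = Fintype.card P - j := by omega
      have hlen : Fintype.card P - (j + 1) <
          (List.ofFn (fun i : Fin (Fintype.card P) => e i)).length := by simpa using hk
      rw [List.drop_eq_getElem_cons hlen, List.foldr_cons, hk1, ih (by omega)]
      have hget : (List.ofFn (fun i : Fin (Fintype.card P) => e i))[Fintype.card P - (j + 1)]'hlen
          = e ⟨Fintype.card P - (j + 1), hk⟩ := by
        simp [List.getElem_ofFn]
      rw [hget, show Fintype.card P - j = Fintype.card P - (j + 1) + 1 from hk1.symm]
      exact step _ hk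
  have hmain := main (Fintype.card P) (le_refl _)
  rw [Nat.sub_self, List.drop_zero, hM0] at hmain
  exact hmain.symm
end

section
/- Let P be a finite ranked poset with rank function r taking maximum value R, let P_i = {p ∈ P : r(p) = i}, and let t_i denote the composition of the toggles t_p over all p ∈ P_i (well defined, since toggles at elements of equal rank commute). Then for every permutation σ of {0, 1, …, R}, the map Ψ_σ := t_{σ(0)} ∘ t_{σ(1)} ∘ ⋯ ∘ t_{σ(R)} is conjugate to the Fon-Der-Flaass action Ψ = t_0 ∘ t_1 ∘ ⋯ ∘ t_R inside the toggle group G(P). -/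
open Classical

namespace FDF

variable {α : Type*} [PartialOrder α] [DecidableEq α]

variable [Fintype α]

theorem isIdeal_fdf (I : Finset α) : IsIdeal (fdf I) := by
  intro x y hy hxy
  simp only [fdf, Finset.mem_filter, Finset.mem_univ, true_and] at *
  obtain ⟨y', h1, h2, h3⟩ := hy
  exact ⟨y', h1, h2, le_trans hxy h3⟩

theorem mem_iff_fdf {I : Finset α} (hI : IsIdeal I) (x : α) :
    x ∈ I ↔ ∀ y, (y ∈ fdf I ∧ ∀ z ∈ fdf I, ¬ y < z) → ¬ y ≤ x := by
  constructor
  · rintro hx y ⟨hyf, hymax⟩ hyx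
    -- y is a maximal element of fdf I; show y ∈ U(I), i.e. y ∉ I, contradiction with y ≤ x ∈ I
    simp only [fdf, Finset.mem_filter, Finset.mem_univ, true_and] at hyf
    obtain ⟨y', h1, h2, h3⟩ := hyf
    have hy'f : y' ∈ fdf I := by
      simp only [fdf, Finset.mem_filter, Finset.mem_univ, true_and]
      exact ⟨y', h1, h2, le_refl _⟩
    have : y = y' := by
      rcases lt_or_eq_of_le h3 with h | h
      · exact absurd h (hymax y' hy'f)
      · exact h
    subst this
    exact h1 (hI hx hyx)
  · intro h
    by_contra hx
    -- find a minimal element of the complement below x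
    have hne : (Finset.univ.filter (fun z => z ∉ I ∧ z ≤ x)).Nonempty :=
      ⟨x, by simp [hx]⟩
    obtain ⟨y, hy, hymin⟩ : ∃ y ∈ Finset.univ.filter (fun z => z ∉ I ∧ z ≤ x),
        ∀ z ∈ Finset.univ.filter (fun z => z ∉ I ∧ z ≤ x), ¬ z < y := by
      obtain ⟨y, hy⟩ := Finset.exists_minimal hne
      exact ⟨y, hy.1, fun z hz hzy => lt_irrefl _ (lt_of_lt_of_le hzy (hy.2 hz hzy.le))⟩
    simp only [Finset.mem_filter, Finset.mem_univ, true_and] at hy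
    have hUy : y ∉ I ∧ ∀ z, z < y → z ∈ I := by
      refine ⟨hy.1, fun z hz => ?_⟩
      by_contra hzI
      exact hymin z (by simp [hzI, le_trans hz.le hy.2]) hz
    have hyf : y ∈ fdf I := by
      simp only [fdf, Finset.mem_filter, Finset.mem_univ, true_and]
      exact ⟨y, hUy.1, hUy.2, le_refl _⟩
    refine h y ⟨hyf, ?_⟩ hy.2
    intro t htf hyt
    simp only [fdf, Finset.mem_filter, Finset.mem_univ, true_and] at htf
    obtain ⟨y'', h1, h2, h3⟩ := htf
    exact hUy.1 (h2 y (lt_of_lt_of_le hyt h3))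

/-- The type of order ideals of `α`. -/
abbrev Ideals (α : Type*) [PartialOrder α] := {I : Finset α // IsIdeal I}

noncomputable instance : Fintype (Ideals α) := Fintype.ofFinite _

/-- The Fon-Der-Flaass action as a permutation of the set of order ideals. -/
noncomputable def fdfPerm (α : Type*) [PartialOrder α] [Fintype α] [DecidableEq α] :
    Equiv.Perm (Ideals α) :=
  Equiv.ofBijective (fun I => ⟨fdf I.1, isIdeal_fdf I.1⟩)
    (Finite.injective_iff_bijective.mp (by
      rintro ⟨I, hI⟩ ⟨J, hJ⟩ h
      have h' : fdf I = fdf J := congrArg Subtype.val h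
      refine Subtype.ext (Finset.ext fun x => ?_)
      rw [mem_iff_fdf hI, mem_iff_fdf hJ, h']))

theorem isIdeal_toggle (p : α) {I : Finset α} (hI : IsIdeal I) : IsIdeal (toggle p I) := by
  unfold toggle
  split_ifs with h1 h2
  · intro x y hy hxy
    rw [Finset.mem_erase] at hy ⊢
    refine ⟨fun hxp => ?_, hI hy.2 hxy⟩
    subst hxp
    rcases lt_or_eq_of_le hxy with h | h
    · exact h1.2 y hy.2 h
    · exact hy.1 h.symm
  · exact h2.2
  · exact hI

theorem toggle_toggle (p : α) {I : Finset α} (hI : IsIdeal I) : toggle p (toggle p I) = I := by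
  by_cases h1 : p ∈ I ∧ ∀ y ∈ I, ¬ p < y
  · have e1 : toggle p I = I.erase p := by unfold toggle; rw [if_pos h1]
    rw [e1]
    have h2 : ¬ (p ∈ I.erase p ∧ ∀ y ∈ I.erase p, ¬ p < y) := by
      simp [Finset.mem_erase]
    have h3 : p ∉ I.erase p ∧ IsIdeal (insert p (I.erase p)) := by
      refine ⟨by simp, ?_⟩
      rw [Finset.insert_erase h1.1]
      exact hI
    unfold toggle
    rw [if_neg h2, if_pos h3, Finset.insert_erase h1.1]
  · by_cases h2 : p ∉ I ∧ IsIdeal (insert p I)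
    · have e1 : toggle p I = insert p I := by unfold toggle; rw [if_neg h1, if_pos h2]
      rw [e1]
      have h3 : p ∈ insert p I ∧ ∀ y ∈ insert p I, ¬ p < y := by
        refine ⟨Finset.mem_insert_self _ _, fun y hy hpy => ?_⟩
        rcases Finset.mem_insert.mp hy with h | h
        · subst h; exact lt_irrefl _ hpy
        · exact h2.1 (hI h hpy.le)
      unfold toggle
      rw [if_pos h3, Finset.erase_insert h2.1]
    · have e1 : toggle p I = I := by unfold toggle; rw [if_neg h1, if_neg h2]
      rw [e1]
      unfold toggle
      rw [if_neg h1, if_neg h2]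

/-- The toggle `t_p` as a permutation of the set of order ideals. -/
noncomputable def togglePerm (p : α) : Equiv.Perm (Ideals α) where
  toFun I := ⟨toggle p I.1, isIdeal_toggle p I.2⟩
  invFun I := ⟨toggle p I.1, isIdeal_toggle p I.2⟩
  left_inv I := Subtype.ext (toggle_toggle p I.2)
  right_inv I := Subtype.ext (toggle_toggle p I.2)

/-- The toggle group `G(P)`. -/
noncomputable def toggleGroup (α : Type*) [PartialOrder α] [Fintype α] [DecidableEq α] :
    Subgroup (Equiv.Perm (Ideals α)) :=
  Subgroup.closure (Set.range (togglePerm (α := α)))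

end FDF


namespace FDFAux

open FDF List

/-! ### Generic list lemmas about pair sublists -/

lemma pair_sublist_total : ∀ (l : List ℕ) {a b : ℕ}, a ∈ l → b ∈ l → a ≠ b →
    [a, b] <+ l ∨ [b, a] <+ l := by
  intro l
  induction l with
  | nil => intro a b ha _ _; simp at ha
  | cons c t ih =>
    intro a b ha hb hab
    rcases eq_or_ne a c with rfl | hac
    · left
      have hbt : b ∈ t := by
        rcases List.mem_cons.mp hb with h | h
        · exact absurd h.symm hab
        · exact h
      exact (List.singleton_sublist.mpr hbt).cons₂ a
    · rcases eq_or_ne b c with rfl | hbc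
      · right
        have hat : a ∈ t := by
          rcases List.mem_cons.mp ha with h | h
          · exact absurd h hac
          · exact h
        exact (List.singleton_sublist.mpr hat).cons₂ b
      · have ha' : a ∈ t := by
          rcases List.mem_cons.mp ha with h | h
          · exact absurd h hac
          · exact h
        have hb' : b ∈ t := by
          rcases List.mem_cons.mp hb with h | h
          · exact absurd h hbc
          · exact h
        exact (ih ha' hb' hab).imp (·.cons c) (·.cons c)

lemma mem_right_of_pair_sublist {a b : ℕ} {l₁ l₂ : List ℕ}
    (ha1 : a ∉ l₁) (ha2 : a ∉ l₂)
    (h : [a, b] <+ l₁ ++ a :: l₂) (hab : a ≠ b) : b ∈ l₂ := by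
  obtain ⟨s, t, hst, hs, ht⟩ := List.sublist_append_iff.mp h
  match s, hst with
  | [], hst =>
    have ht' : [a, b] <+ a :: l₂ := by
      rw [List.nil_append] at hst; rw [← hst] at ht; exact ht
    rcases List.sublist_cons_iff.mp ht' with h' | ⟨r, hr, hr'⟩
    · exact absurd (h'.subset (by simp)) ha2
    · have hrb : r = [b] := by injection hr with _ h2; rw [h2]
      rw [hrb] at hr'
      exact List.singleton_sublist.mp hr'
  | [x], hst =>
    injection hst with h1 _
    exact absurd (hs.subset (by simp [← h1])) ha1
  | x :: y :: s', hst =>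
    injection hst with h1 _
    exact absurd (hs.subset (by simp [← h1])) ha1

lemma mem_left_of_pair_sublist {a b : ℕ} {l₁ l₂ : List ℕ}
    (ha1 : a ∉ l₁) (ha2 : a ∉ l₂)
    (h : [b, a] <+ l₁ ++ a :: l₂) (hab : a ≠ b) : b ∈ l₁ := by
  obtain ⟨s, t, hst, hs, ht⟩ := List.sublist_append_iff.mp h
  match s, hst with
  | [], hst =>
    have ht' : [b, a] <+ a :: l₂ := by
      rw [List.nil_append] at hst; rw [← hst] at ht; exact ht
    rcases List.sublist_cons_iff.mp ht' with h' | ⟨r, hr, hr'⟩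
    · exact absurd (h'.subset (by simp)) ha2
    · injection hr with h1 _
      exact absurd h1.symm hab
  | [x], hst =>
    injection hst with h1 _
    exact hs.subset (by simp [← h1])
  | x :: y :: s', hst =>
    injection hst with h1 _
    exact hs.subset (by simp [← h1])

lemma not_mem_left_of_decomp {a : ℕ} {l₁ l₂ : List ℕ} (hnd : (l₁ ++ a :: l₂).Nodup) :
    a ∉ l₁ ∧ a ∉ l₂ ∧ l₁.Nodup ∧ l₂.Nodup := by
  rw [List.nodup_append] at hnd
  obtain ⟨h1, h2, h3⟩ := hnd
  rw [List.nodup_cons] at h2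
  exact ⟨fun h => h3 a h a (by simp) rfl, h2.1, h1, h2.2⟩

lemma pair_sublist_asymm {a b : ℕ} {l : List ℕ} (hnd : l.Nodup) (hab : a ≠ b)
    (h1 : [a, b] <+ l) (h2 : [b, a] <+ l) : False := by
  obtain ⟨s, t, rfl⟩ := List.append_of_mem (show a ∈ l from h1.subset (by simp))
  obtain ⟨hs, ht, hsnd, htnd⟩ := not_mem_left_of_decomp hnd
  have hb1 : b ∈ t := mem_right_of_pair_sublist hs ht h1 hab
  have hb2 : b ∈ s := mem_left_of_pair_sublist hs ht h2 hab
  rw [List.nodup_append] at hnd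
  exact hnd.2.2 b hb2 b (by simp [hb1]) rfl

lemma pair_sublist_trans {a b c : ℕ} {l : List ℕ} (hnd : l.Nodup) (hab : a ≠ b)
    (hbc : b ≠ c) (h1 : [a, b] <+ l) (h2 : [b, c] <+ l) : [a, c] <+ l := by
  obtain ⟨s, t, rfl⟩ := List.append_of_mem (show b ∈ l from h1.subset (by simp))
  obtain ⟨hs, ht, hsnd, htnd⟩ := not_mem_left_of_decomp hnd
  have hina : a ∈ s := mem_left_of_pair_sublist hs ht h1 (Ne.symm hab)
  have hinc : c ∈ t := mem_right_of_pair_sublist hs ht h2 hbc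
  have : ([a] ++ [c]) <+ s ++ (b :: t) :=
    (List.singleton_sublist.mpr hina).append
      ((List.singleton_sublist.mpr hinc).trans (List.sublist_cons_self b t))
  exact this

lemma eq_range_of_no_desc {n : ℕ} {l : List ℕ} (hperm : l.Perm (List.range n))
    (h : ∀ i : ℕ, ¬ [i+1, i] <+ l) : l = List.range n := by
  have hnd : l.Nodup := hperm.nodup_iff.mpr List.nodup_range
  have hmem : ∀ a : ℕ, a ∈ l ↔ a < n := fun a => hperm.mem_iff.trans List.mem_range
  have hstep : ∀ i : ℕ, i + 1 < n → [i, i+1] <+ l := by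
    intro i hi
    rcases pair_sublist_total l ((hmem i).mpr (by omega)) ((hmem (i+1)).mpr hi)
      (by omega) with h' | h'
    · exact h'
    · exact absurd h' (h i)
  have hup : ∀ d i : ℕ, i + d + 1 < n → [i, i + d + 1] <+ l := by
    intro d
    induction d with
    | zero => intro i hi; exact hstep i hi
    | succ d ih =>
      intro i hi
      have h1 : [i, i + d + 1] <+ l := ih i (by omega)
      have h2 : [i + d + 1, i + d + 1 + 1] <+ l := hstep (i + d + 1) (by omega)
      have h3 := pair_sublist_trans hnd (by omega) (by omega) h1 h2
      have he : i + d + 1 + 1 = i + (d+1) + 1 := by omega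
      rw [he] at h3
      exact h3
  have hpw : l.Pairwise (· < ·) := by
    rw [List.pairwise_iff_forall_sublist]
    intro a b hab
    have hnd' := hab.nodup hnd
    have hne : a ≠ b := by
      intro h'; rw [h'] at hnd'; simp at hnd'
    rcases lt_or_gt_of_ne hne with h' | h'
    · exact h'
    · exfalso
      have han : a < n := (hmem a).mp (hab.subset (by simp))
      have hba : [b, a] <+ l := by
        have h4 := hup (a - b - 1) b (by omega)
        have he : b + (a - b - 1) + 1 = a := by omega
        rw [he] at h4
        exact h4
      exact pair_sublist_asymm hnd hne hab hba
  have hs1 : l.Pairwise (· ≤ ·) := List.Pairwise.imp le_of_lt hpw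
  have hs2 : (List.range n).Pairwise (· ≤ ·) :=
    List.Pairwise.imp le_of_lt List.pairwise_lt_range
  exact List.Perm.eq_of_pairwise' hs1 hs2 hperm

/-! ### The abstract conjugation lemma -/

/-- A measure counting weighted descents of a word. -/
def lwt (n : ℕ) (l : List ℕ) : ℕ :=
  ∑ i ∈ Finset.range n, (if [i+1, i] <+ l then n - i else 0)

lemma lwt_eq (n : ℕ) (l : List ℕ) :
    lwt n l = ∑ i ∈ Finset.range n, (if [i+1, i] <+ l then n - i else 0) := rfl

lemma conj_word {G : Type*} [Group G] (f : ℕ → G) (n : ℕ)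
    (hcomm : ∀ i j : ℕ, i + 2 ≤ j → Commute (f i) (f j)) :
    ∀ (N : ℕ) (l : List ℕ), lwt n l ≤ N → l.Perm (List.range n) →
      ∃ g ∈ Subgroup.closure (Set.range f),
        g * (l.map f).prod * g⁻¹ = ((List.range n).map f).prod := by
  intro N
  induction N with
  | zero =>
    intro l hN hperm
    have hl : l = List.range n := by
      apply eq_range_of_no_desc hperm
      intro i hi
      have hin : i ∈ l := hi.subset (by simp)
      have hiltn : i < n := List.mem_range.mp (hperm.subset hin)
      have hle : (if [i+1, i] <+ l then n - i else 0) ≤ lwt n l :=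
        Finset.single_le_sum (f := fun j => if [j+1, j] <+ l then n - j else 0)
          (fun j _ => Nat.zero_le _) (Finset.mem_range.mpr hiltn)
      rw [if_pos hi] at hle
      omega
    subst hl
    exact ⟨1, Subgroup.one_mem _, by group⟩
  | succ N ihN =>
    intro l hN hperm
    have hnd : l.Nodup := hperm.nodup_iff.mpr List.nodup_range
    have hmem : ∀ a : ℕ, a ∈ l ↔ a < n := fun a => hperm.mem_iff.trans List.mem_range
    by_cases hall : ∀ i : ℕ, ¬ [i+1, i] <+ l
    · rw [eq_range_of_no_desc hperm hall]
      exact ⟨1, Subgroup.one_mem _, by group⟩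
    push_neg at hall
    have hbadne : (Finset.filter (fun i => [i+1, i] <+ l) (Finset.range n)).Nonempty := by
      obtain ⟨i, hi⟩ := hall
      exact ⟨i, Finset.mem_filter.mpr ⟨Finset.mem_range.mpr
        ((hmem i).mp (hi.subset (by simp))), hi⟩⟩
    set bad := Finset.filter (fun i => [i+1, i] <+ l) (Finset.range n) with hbaddef
    set i := bad.max' hbadne with hidef
    have hibad : i ∈ bad := bad.max'_mem hbadne
    have hiltn : i < n := Finset.mem_range.mp (Finset.mem_filter.mp hibad).1
    set k := i + 1 with hkdef
    have hdesc : [k, i] <+ l := by rw [hkdef]; exact (Finset.mem_filter.mp hibad).2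
    have himax : ∀ j, [j+1, j] <+ l → j < n → j ≤ i := by
      intro j hj hjn
      exact bad.le_max' j (Finset.mem_filter.mpr ⟨Finset.mem_range.mpr hjn, hj⟩)
    have hkl : k ∈ l := hdesc.subset (by simp)
    have hkn : k < n := List.mem_range.mp (hperm.subset hkl)
    obtain ⟨l₁, l₂, hldec⟩ := List.append_of_mem hkl
    have hnd' : (l₁ ++ k :: l₂).Nodup := hldec ▸ hnd
    obtain ⟨hk1, hk2, hnd1, hnd2⟩ := not_mem_left_of_decomp hnd'
    have hil2 : i ∈ l₂ := mem_right_of_pair_sublist hk1 hk2 (hldec ▸ hdesc) (by omega)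
    have hinl1 : i ∉ l₁ := by
      intro h
      rw [List.nodup_append] at hnd'
      exact hnd'.2.2 i h i (by simp [hil2]) rfl
    have hnodesck : ¬ [k+1, k] <+ l := by
      intro h
      have hk1n : k + 1 < n := List.mem_range.mp (hperm.subset (h.subset (by simp)))
      have := himax k h (by omega)
      omega
    have hk1nl1 : k + 1 ∉ l₁ := by
      intro h
      have hk1l : k + 1 ∈ l := by rw [hldec]; simp [h]
      rcases pair_sublist_total l hkl hk1l (by omega) with h' | h'
      · have hk1l2 : k + 1 ∈ l₂ := mem_right_of_pair_sublist hk1 hk2 (hldec ▸ h') (by omega)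
        rw [List.nodup_append] at hnd'
        exact hnd'.2.2 (k+1) h (k+1) (by simp [hk1l2]) rfl
      · exact hnodesck h'
    have hcomk : ∀ j ∈ l₁, Commute (f k) (f j) := by
      intro j hj
      have hji : j ≠ i := fun h => hinl1 (h ▸ hj)
      have hjk : j ≠ k := fun h => hk1 (h ▸ hj)
      have hjk1 : j ≠ k + 1 := fun h => hk1nl1 (h ▸ hj)
      rcases lt_or_gt_of_ne hjk with h' | h'
      · exact (hcomm j k (by omega)).symm
      · exact hcomm k j (by omega)
    have hA : Commute (f k) ((l₁.map f).prod) := by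
      apply Commute.list_prod_right
      intro x hx
      obtain ⟨j, hj, rfl⟩ := List.mem_map.mp hx
      exact hcomk j hj
    have e1 : (l.map f).prod = f k * ((l₁ ++ l₂).map f).prod := by
      rw [hldec]
      calc (List.map f (l₁ ++ k :: l₂)).prod
          = (List.map f l₁).prod * (f k * (List.map f l₂).prod) := by
            simp [List.prod_append]
        _ = ((List.map f l₁).prod * f k) * (List.map f l₂).prod := by
            rw [mul_assoc]
        _ = (f k * (List.map f l₁).prod) * (List.map f l₂).prod := by
            rw [hA.eq]
        _ = f k * ((List.map f l₁).prod * (List.map f l₂).prod) := by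
            rw [mul_assoc]
        _ = f k * (List.map f (l₁ ++ l₂)).prod := by
            simp [List.prod_append]
    have e2 : (((l₁ ++ l₂) ++ [k]).map f).prod = ((l₁ ++ l₂).map f).prod * f k := by
      simp [List.prod_append, mul_assoc]
    have hperm' : ((l₁ ++ l₂) ++ [k]).Perm (List.range n) := by
      have p1 : ((l₁ ++ l₂) ++ [k]).Perm (k :: (l₁ ++ l₂)) :=
        List.perm_append_singleton k (l₁ ++ l₂)
      have p2 : (l₁ ++ k :: l₂).Perm (k :: (l₁ ++ l₂)) := List.perm_middle
      exact (p1.trans p2.symm).trans (hldec ▸ hperm)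
    -- transfer of pair sublists
    have hsubl : ∀ a b : ℕ, a ≠ k → b ≠ k → (([a, b] <+ l) ↔ ([a, b] <+ l₁ ++ l₂)) := by
      intro a b hak hbk
      constructor
      · intro h
        have h2 := h.erase k
        rwa [List.erase_of_not_mem (by simp [Ne.symm hak, Ne.symm hbk]), hldec,
          List.erase_append_right _ hk1, List.erase_cons_head] at h2
      · intro h
        rw [hldec]
        exact h.trans ((List.Sublist.refl l₁).append (List.sublist_cons_self k l₂))
    have hsubl' : ∀ a b : ℕ, a ≠ k → b ≠ k →
        (([a, b] <+ (l₁ ++ l₂) ++ [k]) ↔ ([a, b] <+ l₁ ++ l₂)) := by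
      intro a b hak hbk
      constructor
      · intro h
        have h2 := h.erase k
        rwa [List.erase_of_not_mem (by simp [Ne.symm hak, Ne.symm hbk]),
          List.erase_append_right _ (by simp [hk1, hk2] : k ∉ l₁ ++ l₂),
          List.erase_cons_head, List.append_nil] at h2
      · intro h
        exact h.trans (List.sublist_append_left _ _)
    have hF1 : ∀ j, j ≠ i → j ≠ k →
        (([j+1, j] <+ (l₁ ++ l₂) ++ [k]) ↔ ([j+1, j] <+ l)) := by
      intro j hji hjk
      rw [hsubl' (j+1) j (by omega) hjk, hsubl (j+1) j (by omega) hjk]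
    have hF2 : ¬ ([k, i] <+ (l₁ ++ l₂) ++ [k]) := by
      intro h
      obtain ⟨s, t, hst, hs, ht⟩ := List.sublist_append_iff.mp h
      match s, hst with
      | [], hst =>
        rw [List.nil_append] at hst
        rw [← hst] at ht
        have := ht.length_le
        simp at this
      | [x], hst =>
        rw [List.cons_append, List.nil_append] at hst
        injection hst with h1 h2
        rw [← h2] at ht
        have hik : i ∈ [k] := ht.subset (by simp)
        simp at hik
        omega
      | x :: y :: s', hst =>
        have : k ∈ l₁ ++ l₂ := by
          have hx : x = k := by
            rw [List.cons_append] at hst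
            injection hst with h1 _
            exact h1.symm
          rw [← hx]
          exact hs.subset (by simp)
        rcases List.mem_append.mp this with h' | h'
        · exact hk1 h'
        · exact hk2 h'
    -- the measure decreases
    have e_i : ∀ (l0 : List ℕ),
        ∑ j ∈ Finset.range n, (if [j+1, j] <+ l0 then n - j else 0)
          = (if [k, i] <+ l0 then n - i else 0)
            + ∑ j ∈ (Finset.range n).erase i, (if [j+1, j] <+ l0 then n - j else 0) :=
      fun l0 => (Finset.add_sum_erase _ _ (Finset.mem_range.mpr hiltn)).symm
    have hkmem : k ∈ (Finset.range n).erase i :=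
      Finset.mem_erase.mpr ⟨by omega, Finset.mem_range.mpr hkn⟩
    have e_k : ∀ (l0 : List ℕ),
        ∑ j ∈ (Finset.range n).erase i, (if [j+1, j] <+ l0 then n - j else 0)
          = (if [k+1, k] <+ l0 then n - k else 0)
            + ∑ j ∈ ((Finset.range n).erase i).erase k,
                (if [j+1, j] <+ l0 then n - j else 0) :=
      fun l0 => (Finset.add_sum_erase _ _ hkmem).symm
    have hAeq : ∑ j ∈ ((Finset.range n).erase i).erase k,
          (if [j+1, j] <+ (l₁ ++ l₂) ++ [k] then n - j else 0)
        = ∑ j ∈ ((Finset.range n).erase i).erase k,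
            (if [j+1, j] <+ l then n - j else 0) := by
      apply Finset.sum_congr rfl
      intro j hj
      obtain ⟨hjk, hj2⟩ := Finset.mem_erase.mp hj
      obtain ⟨hji, _⟩ := Finset.mem_erase.mp hj2
      simp only [hF1 j hji hjk]
    have hdec : lwt n ((l₁ ++ l₂) ++ [k]) + 1 ≤ lwt n l := by
      rw [lwt_eq, lwt_eq, e_i l, e_i ((l₁ ++ l₂) ++ [k]), e_k l, e_k ((l₁ ++ l₂) ++ [k]),
        hAeq, if_pos hdesc, if_neg hnodesck, if_neg hF2]
      have hle : (if [k+1, k] <+ (l₁ ++ l₂) ++ [k] then n - k else 0) ≤ n - k := by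
        split_ifs <;> omega
      omega
    obtain ⟨g', hg', hgeq⟩ := ihN ((l₁ ++ l₂) ++ [k]) (by omega) hperm'
    refine ⟨g' * (f k)⁻¹, Subgroup.mul_mem _ hg'
      (Subgroup.inv_mem _ (Subgroup.subset_closure ⟨k, rfl⟩)), ?_⟩
    have e3 : (f k)⁻¹ * (l.map f).prod * (f k) = (((l₁ ++ l₂) ++ [k]).map f).prod := by
      rw [e1, e2]; group
    calc g' * (f k)⁻¹ * (l.map f).prod * (g' * (f k)⁻¹)⁻¹
        = g' * ((f k)⁻¹ * (l.map f).prod * (f k)) * g'⁻¹ := by group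
      _ = g' * (((l₁ ++ l₂) ++ [k]).map f).prod * g'⁻¹ := by rw [e3]
      _ = ((List.range n).map f).prod := hgeq

end FDFAux

namespace FDFAux

open FDF

/-! ### Membership lemmas for toggles -/

section ToggleLemmas

variable {α : Type*} [PartialOrder α] [Fintype α] [DecidableEq α]

lemma mem_toggle_ne (S : Finset α) {x p : α} (h : x ≠ p) :
    x ∈ FDF.toggle p S ↔ x ∈ S := by
  unfold FDF.toggle
  split_ifs with h1 h2
  · simp [Finset.mem_erase, h]
  · simp [Finset.mem_insert, h]
  · exact Iff.rfl

lemma insert_ideal_iff {S : Finset α} (hS : IsIdeal S) (p : α) :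
    IsIdeal (insert p S) ↔ ∀ z, z < p → z ∈ S := by
  constructor
  · intro h z hz
    have hz' := h (Finset.mem_insert_self p S) hz.le
    rcases Finset.mem_insert.mp hz' with h' | h'
    · exact absurd h' (ne_of_lt hz)
    · exact h'
  · intro h x y hy hxy
    rcases Finset.mem_insert.mp hy with rfl | hy'
    · rcases eq_or_lt_of_le hxy with rfl | hlt
      · exact Finset.mem_insert_self _ _
      · exact Finset.mem_insert_of_mem (h x hlt)
    · exact Finset.mem_insert_of_mem (hS hy' hxy)

lemma mem_toggle_self {S : Finset α} (hS : IsIdeal S) (p : α) :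
    p ∈ FDF.toggle p S ↔
      ((p ∈ S ∧ ∃ y ∈ S, p < y) ∨ (p ∉ S ∧ ∀ z, z < p → z ∈ S)) := by
  unfold FDF.toggle
  split_ifs with h1 h2
  · constructor
    · intro h; exact absurd rfl (Finset.mem_erase.mp h).1
    · rintro (⟨_, y, hy, hpy⟩ | ⟨hp, _⟩)
      · exact absurd hpy (h1.2 y hy)
      · exact absurd h1.1 hp
  · constructor
    · intro _; exact Or.inr ⟨h2.1, (insert_ideal_iff hS p).mp h2.2⟩
    · intro _; exact Finset.mem_insert_self p S
  · constructor
    · intro hp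
      left
      refine ⟨hp, ?_⟩
      by_contra hno
      push_neg at hno
      exact h1 ⟨hp, hno⟩
    · rintro (⟨hp, _⟩ | ⟨hp, hins⟩)
      · exact hp
      · exact absurd ⟨hp, (insert_ideal_iff hS p).mpr hins⟩ h2

lemma toggle_transfer_ex {S : Finset α} (hS : IsIdeal S) {p q : α}
    (hpq : p ≠ q) (h1 : ¬ p ⋖ q) :
    (∃ y ∈ FDF.toggle q S, p < y) ↔ (∃ y ∈ S, p < y) := by
  constructor
  · rintro ⟨y, hy, hpy⟩
    by_cases hyq : y = q
    · subst hyq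
      obtain ⟨z, hpz, hzq⟩ := (not_covBy_iff hpy).mp h1
      rcases (mem_toggle_self hS y).mp hy with ⟨hqS, _⟩ | ⟨_, hall⟩
      · exact ⟨z, hS hqS hzq.le, hpz⟩
      · exact ⟨z, hall z hzq, hpz⟩
    · exact ⟨y, (mem_toggle_ne S hyq).mp hy, hpy⟩
  · rintro ⟨y, hy, hpy⟩
    by_cases hyq : y = q
    · subst hyq
      obtain ⟨z, hpz, hzq⟩ := (not_covBy_iff hpy).mp h1
      have hz : z ∈ S := hS hy hzq.le
      exact ⟨z, (mem_toggle_ne S (ne_of_lt hzq)).mpr hz, hpz⟩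
    · exact ⟨y, (mem_toggle_ne S hyq).mpr hy, hpy⟩

lemma toggle_transfer_all {S : Finset α} (hS : IsIdeal S) {p q : α}
    (hpq : p ≠ q) (h2 : ¬ q ⋖ p) :
    (∀ z, z < p → z ∈ FDF.toggle q S) ↔ (∀ z, z < p → z ∈ S) := by
  constructor
  · intro h z hz
    by_cases hzq : z = q
    · subst hzq
      obtain ⟨w, hqw, hwp⟩ := (not_covBy_iff hz).mp h2
      have hw : w ∈ FDF.toggle z S := h w hwp
      have hwS : w ∈ S := (mem_toggle_ne S (ne_of_gt hqw)).mp hw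
      exact hS hwS hqw.le
    · exact (mem_toggle_ne S hzq).mp (h z hz)
  · intro h z hz
    by_cases hzq : z = q
    · subst hzq
      obtain ⟨w, hqw, hwp⟩ := (not_covBy_iff hz).mp h2
      rw [mem_toggle_self hS]
      exact Or.inl ⟨h z hz, w, h w hwp, hqw⟩
    · exact (mem_toggle_ne S hzq).mpr (h z hz)

lemma toggle_comm {S : Finset α} (hS : IsIdeal S) {p q : α} (hpq : p ≠ q)
    (h1 : ¬ p ⋖ q) (h2 : ¬ q ⋖ p) :
    FDF.toggle p (FDF.toggle q S) = FDF.toggle q (FDF.toggle p S) := by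
  have hq' : IsIdeal (FDF.toggle q S) := isIdeal_toggle q hS
  have hp' : IsIdeal (FDF.toggle p S) := isIdeal_toggle p hS
  ext x
  by_cases hxp : x = p
  · subst hxp
    rw [mem_toggle_self hq', toggle_transfer_ex hS hpq h1,
      toggle_transfer_all hS hpq h2, mem_toggle_ne S hpq, ← mem_toggle_self hS,
      mem_toggle_ne (FDF.toggle x S) hpq]
  · by_cases hxq : x = q
    · subst hxq
      rw [mem_toggle_ne (FDF.toggle x S) (Ne.symm hpq), mem_toggle_self hp',
        toggle_transfer_ex hS (Ne.symm hpq) h2, toggle_transfer_all hS (Ne.symm hpq) h1,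
        mem_toggle_ne S (Ne.symm hpq), ← mem_toggle_self hS]
    · rw [mem_toggle_ne (FDF.toggle q S) hxp, mem_toggle_ne (FDF.toggle p S) hxq,
        mem_toggle_ne S hxq, mem_toggle_ne S hxp]

end ToggleLemmas

section PermLemmas

variable {α : Type*} [PartialOrder α] [Fintype α] [DecidableEq α]

lemma togglePerm_val (p : α) (S : FDF.Ideals α) :
    (FDF.togglePerm p S).1 = FDF.toggle p S.1 := rfl

lemma togglePerm_comm {p q : α} (hpq : p ≠ q) (h1 : ¬ p ⋖ q) (h2 : ¬ q ⋖ p) :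
    Commute (FDF.togglePerm p) (FDF.togglePerm q) := by
  unfold Commute SemiconjBy
  apply Equiv.ext
  intro I
  rw [Equiv.Perm.mul_apply, Equiv.Perm.mul_apply]
  exact Subtype.ext (toggle_comm I.2 hpq h1 h2)

lemma mem_fdf_iff_forall {I : Finset α} {p : α} (hp : p ∉ I) :
    p ∈ FDF.fdf I ↔ ∀ z, z < p → z ∈ I := by
  simp only [FDF.fdf, Finset.mem_filter, Finset.mem_univ, true_and]
  constructor
  · rintro ⟨y, hyI, hymin, hpy⟩ z hz
    rcases eq_or_lt_of_le hpy with rfl | hlt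
    · exact hymin z hz
    · exact absurd (hymin p hlt) hp
  · intro h; exact ⟨p, hp, h, le_refl p⟩

lemma mem_fdf_iff_exists {I : Finset α} (hI : IsIdeal I) {p : α} (hp : p ∈ I) :
    p ∈ FDF.fdf I ↔ ∃ y, p < y ∧ y ∈ FDF.fdf I := by
  constructor
  · intro h
    have h' := h
    simp only [FDF.fdf, Finset.mem_filter, Finset.mem_univ, true_and] at h'
    obtain ⟨y, h1, h2, h3⟩ := h'
    have hne : p ≠ y := fun e => h1 (e ▸ hp)
    refine ⟨y, lt_of_le_of_ne h3 hne, ?_⟩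
    simp only [FDF.fdf, Finset.mem_filter, Finset.mem_univ, true_and]
    exact ⟨y, h1, h2, le_refl _⟩
  · rintro ⟨y, h1, h2⟩
    exact isIdeal_fdf I h2 h1.le

end PermLemmas

/-! ### Rank functions -/

section Rank

variable {P : Type*} [PartialOrder P] [Fintype P]

lemma rlt (r : P → ℤ) (hrcov : ∀ x y : P, y ⋖ x → r x = r y + 1) :
    ∀ y x : P, x < y → r x < r y := by
  haveI : WellFoundedLT P := Finite.to_wellFoundedLT
  intro y
  induction y using WellFoundedLT.induction with
  | _ y IH =>
    intro x hxy
    obtain ⟨z, hz, hzmax⟩ : ∃ z ∈ Finset.univ.filter (fun z => x ≤ z ∧ z < y),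
        ∀ w ∈ Finset.univ.filter (fun z => x ≤ z ∧ z < y), ¬ z < w := by
      obtain ⟨z, hz⟩ := Finset.exists_maximal
        (s := Finset.univ.filter fun z => x ≤ z ∧ z < y) ⟨x, by simp [hxy]⟩
      exact ⟨z, hz.1, fun w hw hzw => lt_irrefl _ (lt_of_le_of_lt (hz.2 hw hzw.le) hzw)⟩
    simp only [Finset.mem_filter, Finset.mem_univ, true_and] at hz hzmax
    have hcov : z ⋖ y := by
      refine ⟨hz.2, fun w hzw hwy => ?_⟩
      exact hzmax w ⟨le_trans hz.1 hzw.le, hwy⟩ hzw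
    have hy := hrcov y z hcov
    rcases eq_or_lt_of_le hz.1 with rfl | hxz
    · omega
    · have := IH z hz.2 x hxz
      omega

lemma rnonneg (r : P → ℤ) (hr0 : ∀ p : P, (∀ q : P, ¬ q < p) → r p = 0)
    (hrcov : ∀ x y : P, y ⋖ x → r x = r y + 1) :
    ∀ x : P, 0 ≤ r x := by
  haveI : WellFoundedLT P := Finite.to_wellFoundedLT
  intro x
  induction x using WellFoundedLT.induction with
  | _ x IH =>
    by_cases hmin : ∀ q : P, ¬ q < x
    · rw [hr0 x hmin]
    · push_neg at hmin
      obtain ⟨q, hq⟩ := hmin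
      obtain ⟨z, hz, hzmax⟩ : ∃ z ∈ Finset.univ.filter (fun z => z < x),
          ∀ w ∈ Finset.univ.filter (fun z => z < x), ¬ z < w := by
        obtain ⟨z, hz⟩ := Finset.exists_maximal
          (s := Finset.univ.filter fun z => z < x) ⟨q, by simp [hq]⟩
        exact ⟨z, hz.1, fun w hw hzw => lt_irrefl _ (lt_of_le_of_lt (hz.2 hw hzw.le) hzw)⟩
      simp only [Finset.mem_filter, Finset.mem_univ, true_and] at hz hzmax
      have hcov : z ⋖ x := ⟨hz, fun w hzw hwx => hzmax w hwx hzw⟩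
      have h1 := hrcov x z hcov
      have h2 := IH z hz
      omega

end Rank

/-! ### The Cameron--Fon-Der-Flaass theorem: toggling ranks top-to-bottom is `fdf` -/

section CFF

variable {P : Type*} [PartialOrder P] [Fintype P] [DecidableEq P]

lemma toggle_step (r : P → ℤ) (hrcov : ∀ x y : P, y ⋖ x → r x = r y + 1)
    {I S : Finset P} (hI : IsIdeal I) (hS : IsIdeal S) (p : P)
    (habove : ∀ x, r p < r x → (x ∈ S ↔ x ∈ FDF.fdf I))
    (hbelow : ∀ x, r x < r p → (x ∈ S ↔ x ∈ I))
    (hp : p ∈ S ↔ p ∈ I) :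
    (p ∈ FDF.toggle p S ↔ p ∈ FDF.fdf I) := by
  have hrlt := rlt r hrcov
  rw [mem_toggle_self hS]
  by_cases hpI : p ∈ I
  · have hpS : p ∈ S := hp.mpr hpI
    rw [mem_fdf_iff_exists hI hpI]
    constructor
    · rintro (⟨_, y, hyS, hpy⟩ | ⟨hn, _⟩)
      · exact ⟨y, hpy, (habove y (hrlt y p hpy)).mp hyS⟩
      · exact absurd hpS hn
    · rintro ⟨y, hpy, hyf⟩
      exact Or.inl ⟨hpS, y, (habove y (hrlt y p hpy)).mpr hyf, hpy⟩
  · have hpS : p ∉ S := fun h => hpI (hp.mp h)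
    rw [mem_fdf_iff_forall hpI]
    constructor
    · rintro (⟨h, _⟩ | ⟨_, h⟩)
      · exact absurd h hpS
      · exact fun z hz => (hbelow z (hrlt p z hz)).mp (h z hz)
    · intro h
      exact Or.inr ⟨hpS, fun z hz => (hbelow z (hrlt p z hz)).mpr (h z hz)⟩

lemma rank_fold (r : P → ℤ) (hrcov : ∀ x y : P, y ⋖ x → r x = r y + 1)
    {I : Finset P} (hI : IsIdeal I) (k : ℤ) :
    ∀ l : List P, l.Nodup → (∀ p ∈ l, r p = k) → ∀ S : FDF.Ideals P,
      (∀ x, k < r x → (x ∈ S.1 ↔ x ∈ FDF.fdf I)) →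
      (∀ x, r x < k → (x ∈ S.1 ↔ x ∈ I)) →
      (∀ p ∈ l, (p ∈ S.1 ↔ p ∈ I)) →
      ∀ x, (x ∈ (((l.map FDF.togglePerm).prod) S).1 ↔
        (if x ∈ l then x ∈ FDF.fdf I else x ∈ S.1)) := by
  intro l
  induction l with
  | nil =>
    intro _ _ S _ _ _ x
    simp
  | cons p t ih =>
    intro hnd hrk S habove hbelow hmem x
    have hpt : p ∉ t := (List.nodup_cons.mp hnd).1
    have hrp : r p = k := hrk p List.mem_cons_self
    rw [List.map_cons, List.prod_cons, Equiv.Perm.mul_apply]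
    set S' := ((t.map FDF.togglePerm).prod) S with hS'def
    have hres : ∀ y, (y ∈ S'.1 ↔ (if y ∈ t then y ∈ FDF.fdf I else y ∈ S.1)) :=
      ih (List.nodup_cons.mp hnd).2
        (fun q hq => hrk q (List.mem_cons_of_mem _ hq)) S habove hbelow
        (fun q hq => hmem q (List.mem_cons_of_mem _ hq))
    rw [togglePerm_val]
    by_cases hxp : x = p
    · subst hxp
      rw [if_pos (List.mem_cons_self (a := x) (l := t))]
      apply toggle_step r hrcov hI S'.2 x
      · intro y hy
        have hyt : y ∉ t := by
          intro h
          have := hrk y (List.mem_cons_of_mem _ h)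
          omega
        rw [hres y, if_neg hyt]
        exact habove y (by omega)
      · intro y hy
        have hyt : y ∉ t := by
          intro h
          have := hrk y (List.mem_cons_of_mem _ h)
          omega
        rw [hres y, if_neg hyt]
        exact hbelow y (by omega)
      · rw [hres x, if_neg hpt]
        exact hmem x List.mem_cons_self
    · rw [mem_toggle_ne S'.1 hxp, hres x]
      by_cases hxt : x ∈ t
      · rw [if_pos hxt, if_pos (List.mem_cons_of_mem _ hxt)]
      · rw [if_neg hxt, if_neg (by simp [List.mem_cons, hxp, hxt])]

end CFF

end FDFAux

namespace FDFAux

/-- The composite toggle of a whole rank. -/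
noncomputable def rankToggle {P : Type*} [PartialOrder P] [Fintype P] [DecidableEq P]
    (L : ℕ → List P) (k : ℕ) : Equiv.Perm (FDF.Ideals P) :=
  ((L k).map FDF.togglePerm).prod

lemma rankToggle_def {P : Type*} [PartialOrder P] [Fintype P] [DecidableEq P]
    (L : ℕ → List P) (k : ℕ) :
    rankToggle L k = ((L k).map FDF.togglePerm).prod := rfl

end FDFAux

/-- For a finite ranked poset `P` with rank function `r` of maximum value `R`, and
`t_i` the composition of the toggles at the rank-`i` elements, the map
`Ψ_σ = t_{σ(0)} ∘ t_{σ(1)} ∘ ⋯ ∘ t_{σ(R)}` is conjugate, inside the toggle group `G(P)`,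
to the Fon-Der-Flaass action `Ψ = t_0 ∘ t_1 ∘ ⋯ ∘ t_R`. -/
theorem fdfPerm_isConj_rank_toggles
    {P : Type*} [PartialOrder P] [Fintype P] [DecidableEq P]
    (r : P → ℤ)
    (hr0 : ∀ p : P, (∀ q : P, ¬ q < p) → r p = 0)
    (hrcov : ∀ x y : P, y ⋖ x → r x = r y + 1)
    (R : ℕ) (hRle : ∀ p : P, r p ≤ (R : ℤ)) (hRmax : ∃ p : P, r p = (R : ℤ))
    (L : ℕ → List P) (hLnd : ∀ i : ℕ, (L i).Nodup)
    (hLmem : ∀ (i : ℕ) (p : P), p ∈ L i ↔ r p = (i : ℤ))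
    (σ : Equiv.Perm (Fin (R + 1))) :
    ∃ g ∈ FDF.toggleGroup P,
      g * (List.ofFn (fun i : Fin (R + 1) =>
            ((L (σ i)).map FDF.togglePerm).prod)).prod * g⁻¹ = FDF.fdfPerm P := by
  have hTcomm : ∀ i j : ℕ, i + 2 ≤ j →
      Commute (FDFAux.rankToggle L i) (FDFAux.rankToggle L j) := by
    intro i j hij
    rw [FDFAux.rankToggle_def, FDFAux.rankToggle_def]
    apply Commute.list_prod_right
    intro x hx
    obtain ⟨q, hq, rfl⟩ := List.mem_map.mp hx
    apply Commute.list_prod_left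
    intro y hy
    obtain ⟨p, hp, rfl⟩ := List.mem_map.mp hy
    have hrp : r p = (i : ℤ) := (hLmem i p).mp hp
    have hrq : r q = (j : ℤ) := (hLmem j q).mp hq
    have hij' : (i : ℤ) + 2 ≤ (j : ℤ) := by exact_mod_cast hij
    refine FDFAux.togglePerm_comm ?_ ?_ ?_
    · intro h; rw [h, hrq] at hrp; omega
    · intro hcov; have h := hrcov q p hcov; rw [hrp, hrq] at h; omega
    · intro hcov; have h := hrcov p q hcov; rw [hrp, hrq] at h; omega
  have hdesc : ∀ (c m : ℕ), m + c = R + 1 → ∀ (I : FDF.Ideals P) (x : P),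
      (x ∈ ((((List.range' m c).map (FDFAux.rankToggle L)).prod) I).1 ↔
        if (m : ℤ) ≤ r x then x ∈ FDF.fdf I.1 else x ∈ I.1) := by
    intro c
    induction c with
    | zero =>
      intro m hm I x
      rw [show List.range' m 0 = [] from rfl]
      simp only [List.map_nil, List.prod_nil, Equiv.Perm.one_apply]
      rw [if_neg (by have := hRle x; push_cast; omega)]
    | succ c ih =>
      intro m hm I x
      rw [List.range'_succ, List.map_cons, List.prod_cons, Equiv.Perm.mul_apply]
      set S := (((List.range' (m+1) c).map (FDFAux.rankToggle L)).prod) I with hSdef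
      have hres : ∀ y : P, (y ∈ S.1 ↔
          if (m : ℤ) + 1 ≤ r y then y ∈ FDF.fdf I.1 else y ∈ I.1) := by
        intro y
        have h := ih (m+1) (by omega) I y
        push_cast at h
        exact h
      have hrf := FDFAux.rank_fold r hrcov I.2 (m : ℤ) (L m) (hLnd m)
        (fun p hp => (hLmem m p).mp hp) S
        (fun y hy => by rw [hres y, if_pos (by omega)])
        (fun y hy => by rw [hres y, if_neg (by omega)])
        (fun p hp => by
          have hrp := (hLmem m p).mp hp
          rw [hres p, if_neg (by omega)])
      rw [FDFAux.rankToggle_def, hrf x]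
      by_cases hx : x ∈ L m
      · have hrx := (hLmem m x).mp hx
        rw [if_pos hx, if_pos (le_of_eq hrx.symm)]
      · have hne : r x ≠ (m : ℤ) := fun h => hx ((hLmem m x).mpr h)
        rw [if_neg hx, hres x]
        by_cases h2 : (m : ℤ) ≤ r x
        · rw [if_pos (by omega), if_pos h2]
        · rw [if_neg (by omega), if_neg h2]
  have hW : ((List.range (R+1)).map (FDFAux.rankToggle L)).prod = FDF.fdfPerm P := by
    apply Equiv.ext
    intro I
    apply Subtype.ext
    apply Finset.ext
    intro x
    rw [List.range_eq_range', hdesc (R+1) 0 (by omega) I x,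
      if_pos (by simpa using FDFAux.rnonneg r hr0 hrcov x)]
    exact Iff.rfl
  set lσ := List.ofFn (fun i : Fin (R+1) => ((σ i : Fin (R+1)) : ℕ)) with hlσ
  have hword : (List.ofFn (fun i : Fin (R + 1) =>
      ((L (σ i)).map FDF.togglePerm).prod)).prod = (lσ.map (FDFAux.rankToggle L)).prod := by
    rw [hlσ, List.map_ofFn]
    rfl
  have hlnd : lσ.Nodup := by
    rw [hlσ]
    exact List.nodup_ofFn.mpr (Fin.val_injective.comp σ.injective)
  have hlperm : lσ.Perm (List.range (R+1)) := by
    rw [List.perm_ext_iff_of_nodup hlnd List.nodup_range]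
    intro a
    rw [List.mem_range, hlσ]
    constructor
    · intro ha
      obtain ⟨i, hi⟩ := List.mem_ofFn.mp ha
      exact hi ▸ (σ i).isLt
    · intro ha
      exact List.mem_ofFn.mpr ⟨σ⁻¹ ⟨a, ha⟩, by simp⟩
  obtain ⟨g, hg, hgeq⟩ := FDFAux.conj_word (FDFAux.rankToggle L) (R+1) hTcomm
    (FDFAux.lwt (R+1) lσ) lσ le_rfl hlperm
  refine ⟨g, ?_, ?_⟩
  · have hsub : Subgroup.closure (Set.range (FDFAux.rankToggle L)) ≤ FDF.toggleGroup P := by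
      rw [Subgroup.closure_le]
      rintro x ⟨k, rfl⟩
      show FDFAux.rankToggle L k ∈ FDF.toggleGroup P
      rw [FDFAux.rankToggle_def]
      apply Subgroup.list_prod_mem
      intro y hy
      obtain ⟨p, hp, rfl⟩ := List.mem_map.mp hy
      exact Subgroup.subset_closure ⟨p, rfl⟩
    exact hsub hg
  · rw [hword, hgeq]
    exact hW
end

section
/- Let (W, S) be a Coxeter system, let w ∈ W be fully commutative with reduced word s_{i_1} s_{i_2} ⋯ s_{i_ℓ}, and let P_w be the associated heap on {1, …, ℓ}. Then the set of reduced words for w is exactly the set of words s_{i_{π(1)}} s_{i_{π(2)}} ⋯ s_{i_{π(ℓ)}} as π ranges over the reverse linear extensions of P_w (i.e., the bijections π : {1,…,ℓ} → {1,…,ℓ} such that π(a) < π(b) in the heap order implies a > b). -/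
namespace Heap

variable {B : Type*} {W : Type*} [Group W] {M : CoxeterMatrix B}

/-- `l₂` is obtained from `l₁` by swapping one adjacent pair of commuting letters. -/
def CommSwap (cs : CoxeterSystem M W) (l₁ l₂ : List B) : Prop :=
  ∃ (a b : List B) (x y : B), Commute (cs.simple x) (cs.simple y) ∧
    l₁ = a ++ x :: y :: b ∧ l₂ = a ++ y :: x :: b

/-- `l` is a reduced word for `w`. -/
def IsReducedWordFor (cs : CoxeterSystem M W) (w : W) (l : List B) : Prop :=
  cs.wordProd l = w ∧ cs.IsReduced l

/-- `w` is fully commutative: any two reduced words for `w` are related by a sequence of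
swaps of adjacent commuting letters. -/
def FullyCommutative (cs : CoxeterSystem M W) (w : W) : Prop :=
  ∀ l₁ l₂ : List B, IsReducedWordFor cs w l₁ → IsReducedWordFor cs w l₂ →
    Relation.ReflTransGen (CommSwap cs) l₁ l₂

/-- The heap (strict) order on positions of the word `ω`: the transitive closure of the
relations `j' <ₕ j` for all integers `j < j'` such that the letters in positions `j`, `j'`
do not commute. -/
def heapLT (cs : CoxeterSystem M W) (ω : List B) : Fin ω.length → Fin ω.length → Prop :=
  Relation.TransGen (fun a b : Fin ω.length =>
    b.val < a.val ∧ ¬ Commute (cs.simple (ω.get a)) (cs.simple (ω.get b)))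

end Heap

namespace HeapProof

open Heap

variable {B : Type*} {W : Type*} [Group W] {M : CoxeterMatrix B}

lemma heapLT_lt {cs : CoxeterSystem M W} {ω : List B} {a b : Fin ω.length}
    (h : heapLT cs ω a b) : b < a := by
  have h' : Relation.TransGen (fun a b : Fin ω.length => b < a) a b :=
    Relation.TransGen.mono (r := fun a b : Fin ω.length => b.val < a.val ∧
      ¬ Commute (cs.simple (ω.get a)) (cs.simple (ω.get b)))
      (fun x y hxy => Fin.lt_def.mpr hxy.1) a b h
  clear h
  induction h' with
  | single hx => exact hx
  | tail _ hx ih => exact lt_trans hx ih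

lemma ofFn_decomp {α : Type*} {n : ℕ} (f : Fin n → α) (k₀ : ℕ) (h : k₀ + 1 < n) :
    List.ofFn f = (List.ofFn f).take k₀ ++
      f ⟨k₀, by omega⟩ :: f ⟨k₀ + 1, h⟩ :: (List.ofFn f).drop (k₀ + 2) := by
  conv_lhs => rw [← List.take_append_drop k₀ (List.ofFn f)]
  congr 1
  rw [List.drop_eq_getElem_cons (by simp; omega)]
  congr 1
  · simp
  rw [List.drop_eq_getElem_cons (by simp; omega)]
  congr 1
  · simp

lemma ofFn_comp_swap {α : Type*} {n : ℕ} (f : Fin n → α) (k₀ : ℕ) (h : k₀ + 1 < n) :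
    List.ofFn (fun i => f (Equiv.swap ⟨k₀, by omega⟩ ⟨k₀ + 1, h⟩ i)) =
      (List.ofFn f).take k₀ ++ f ⟨k₀ + 1, h⟩ :: f ⟨k₀, by omega⟩ ::
        (List.ofFn f).drop (k₀ + 2) := by
  set k : Fin n := ⟨k₀, by omega⟩ with hk
  set k' : Fin n := ⟨k₀ + 1, h⟩ with hk'
  rw [ofFn_decomp (fun i => f (Equiv.swap k k' i)) k₀ h]
  have h1 : (List.ofFn (fun i => f (Equiv.swap k k' i))).take k₀ = (List.ofFn f).take k₀ := by
    apply List.ext_getElem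
    · simp
    · intro i h₁ h₂
      have hik : i < k₀ := by simp at h₁; omega
      rw [List.getElem_take, List.getElem_take, List.getElem_ofFn, List.getElem_ofFn,
        Equiv.swap_apply_of_ne_of_ne]
      · exact Fin.ne_of_val_ne (by simpa using Nat.ne_of_lt hik)
      · exact Fin.ne_of_val_ne (by simp [hk, hk']; omega)
  have h2 : (List.ofFn (fun i => f (Equiv.swap k k' i))).drop (k₀ + 2) =
      (List.ofFn f).drop (k₀ + 2) := by
    apply List.ext_getElem
    · simp
    · intro i h₁ h₂
      rw [List.getElem_drop, List.getElem_drop, List.getElem_ofFn, List.getElem_ofFn,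
        Equiv.swap_apply_of_ne_of_ne]
      · exact Fin.ne_of_val_ne (by simp [hk, hk']; omega)
      · exact Fin.ne_of_val_ne (by simp [hk, hk']; omega)
  rw [h1, h2]
  congr 1
  congr 1
  · show f (Equiv.swap k k' k) = f k'
    rw [Equiv.swap_apply_left]
  congr 1
  · show f (Equiv.swap k k' k') = f k
    rw [Equiv.swap_apply_right]

lemma commSwap_wordProd {cs : CoxeterSystem M W} {l₁ l₂ : List B}
    (h : CommSwap cs l₁ l₂) : cs.wordProd l₁ = cs.wordProd l₂ := by
  obtain ⟨a, b, x, y, hc, rfl, rfl⟩ := h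
  simp only [CoxeterSystem.wordProd_append, CoxeterSystem.wordProd_cons, ← mul_assoc]
  rw [mul_assoc (cs.wordProd a), hc.eq, ← mul_assoc]

lemma not_heapLT {cs : CoxeterSystem M W} {ω : List B} (π : Equiv.Perm (Fin ω.length))
    (hP : ∀ a b, heapLT cs ω (π a) (π b) → b < a)
    {k k' : Fin ω.length} (hkk' : k'.val = k.val + 1)
    (hns : ¬ ((π k).val < (π k').val ∧
      ¬ Commute (cs.simple (ω.get (π k'))) (cs.simple (ω.get (π k))))) :
    ¬ heapLT cs ω (π k') (π k) := by
  intro hlt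
  cases hlt with
  | single hstep => exact hns ⟨hstep.1, hstep.2⟩
  | tail h' hstep =>
    rename_i c
    have h1 : heapLT cs ω (π k') (π (π.symm c)) := by
      rw [Equiv.apply_symm_apply]; exact h'
    have h2 : heapLT cs ω (π (π.symm c)) (π k) := by
      rw [Equiv.apply_symm_apply]; exact Relation.TransGen.single hstep
    have hlt1 := Fin.lt_def.mp (hP k' (π.symm c) h1)
    have hlt2 := Fin.lt_def.mp (hP (π.symm c) k h2)
    omega

lemma pres {cs : CoxeterSystem M W} {ω : List B} (π : Equiv.Perm (Fin ω.length))
    (hP : ∀ a b, heapLT cs ω (π a) (π b) → b < a)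
    {k k' : Fin ω.length} (hkk' : k'.val = k.val + 1)
    (hns : ¬ ((π k).val < (π k').val ∧
      ¬ Commute (cs.simple (ω.get (π k'))) (cs.simple (ω.get (π k))))) :
    ∀ a b, heapLT cs ω (π (Equiv.swap k k' a)) (π (Equiv.swap k k' b)) → b < a := by
  have key : ∀ x : Fin ω.length, x ≠ k → x ≠ k' → Equiv.swap k k' x = x :=
    fun x hx1 hx2 => Equiv.swap_apply_of_ne_of_ne hx1 hx2
  intro a b hab
  have h1 : Equiv.swap k k' b < Equiv.swap k k' a := hP _ _ hab
  rcases eq_or_ne a k with rfl | hak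
  · rcases eq_or_ne b a with rfl | hbk
    · rw [Equiv.swap_apply_left] at h1; exact absurd h1 (lt_irrefl _)
    rcases eq_or_ne b k' with rfl | hbk'
    · rw [Equiv.swap_apply_left, Equiv.swap_apply_right] at hab
      exact absurd hab (not_heapLT π hP hkk' hns)
    · rw [Equiv.swap_apply_left, key b hbk hbk'] at h1
      have hb : b.val ≠ a.val := fun hh => hbk (Fin.ext hh)
      rw [Fin.lt_def] at h1 ⊢; omega
  rcases eq_or_ne a k' with rfl | hak'
  · rcases eq_or_ne b k with rfl | hbk
    · rw [Fin.lt_def]; omega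
    rcases eq_or_ne b a with rfl | hbk'
    · rw [Equiv.swap_apply_right] at h1; exact absurd h1 (lt_irrefl _)
    · rw [Equiv.swap_apply_right, key b hbk hbk'] at h1
      rw [Fin.lt_def] at h1 ⊢; omega
  · rcases eq_or_ne b k with rfl | hbk
    · rw [key a hak hak', Equiv.swap_apply_left] at h1
      rw [Fin.lt_def] at h1 ⊢; omega
    rcases eq_or_ne b k' with rfl | hbk'
    · rw [key a hak hak', Equiv.swap_apply_right] at h1
      have ha : a.val ≠ b.val := fun hh => hak' (Fin.ext hh)
      rw [Fin.lt_def] at h1 ⊢; omega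
    · rwa [key a hak hak', key b hbk hbk'] at h1

def nu {n : ℕ} (π : Equiv.Perm (Fin n)) : ℕ := ∑ i : Fin n, (π i).val * (n - i.val)

lemma nu_swap_lt {n : ℕ} (π : Equiv.Perm (Fin n)) {k k' : Fin n}
    (hkk' : k'.val = k.val + 1) (hd : (π k').val < (π k).val) :
    nu ((Equiv.swap k k').trans π) < nu π := by
  have hkne : k ≠ k' := fun h => by rw [h] at hkk'; omega
  have hk'n : k.val + 1 < n := hkk' ▸ k'.isLt
  have hstep : nu ((Equiv.swap k k').trans π)
      = ∑ i : Fin n, (π i).val * (n - (Equiv.swap k k' i).val) := by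
    unfold nu
    rw [← Equiv.sum_comp (Equiv.swap k k')
      (fun i => (π i).val * (n - (Equiv.swap k k' i).val))]
    apply Finset.sum_congr rfl
    intro i _
    simp [Equiv.trans_apply, Equiv.swap_apply_self]
  rw [hstep]
  unfold nu
  have hk'mem : k' ∈ Finset.univ.erase k :=
    Finset.mem_erase.mpr ⟨hkne.symm, Finset.mem_univ _⟩
  have split : ∀ F : Fin n → ℕ, ∑ i : Fin n, F i =
      ∑ i ∈ (Finset.univ.erase k).erase k', F i + F k' + F k := by
    intro F
    rw [Finset.sum_erase_add _ _ hk'mem, Finset.sum_erase_add _ _ (Finset.mem_univ k)]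
  rw [split (fun i => (π i).val * (n - (Equiv.swap k k' i).val)),
    split (fun i => (π i).val * (n - i.val))]
  have hSS : ∑ i ∈ (Finset.univ.erase k).erase k',
      (π i).val * (n - (Equiv.swap k k' i).val) =
      ∑ i ∈ (Finset.univ.erase k).erase k', (π i).val * (n - i.val) := by
    apply Finset.sum_congr rfl
    intro i hi
    rw [Finset.mem_erase] at hi
    have hi2 := (Finset.mem_erase.mp hi.2).1
    rw [Equiv.swap_apply_of_ne_of_ne hi2 hi.1]
  rw [hSS, add_assoc, add_assoc]
  apply Nat.add_lt_add_left
  rw [Equiv.swap_apply_left, Equiv.swap_apply_right]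
  have e1 : n - k.val = (n - (k.val + 1)) + 1 := by omega
  rw [hkk', e1]
  set a := (π k).val
  set b := (π k').val
  set t := n - (k.val + 1)
  have ea : a * (t + 1) = a * t + a := by ring
  have eb : b * (t + 1) = b * t + b := by ring
  rw [ea, eb]
  -- goal: b * t + b + a * t < b * t + (a * t + a)
  have : b < a := hd
  omega

lemma perm_eq_id {n : ℕ} (π : Equiv.Perm (Fin n))
    (hmono : ∀ (k₀ : ℕ) (h : k₀ + 1 < n), π ⟨k₀, by omega⟩ < π ⟨k₀ + 1, h⟩) :
    ∀ i, π i = i := by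
  have hsm : StrictMono ⇑π := by
    cases n with
    | zero => intro a; exact a.elim0
    | succ m =>
      exact Fin.strictMono_iff_lt_succ.mpr fun i => hmono i.val (Nat.succ_lt_succ i.isLt)
  intro i
  have he : StrictMono.orderIsoOfSurjective ⇑π hsm π.surjective = OrderIso.refl (Fin n) :=
    Subsingleton.elim _ _
  calc π i = (StrictMono.orderIsoOfSurjective ⇑π hsm π.surjective) i := rfl
    _ = i := by rw [he]; rfl

lemma prod_eq {cs : CoxeterSystem M W} {ω : List B} (m : ℕ) :
    ∀ π : Equiv.Perm (Fin ω.length), nu π = m →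
    (∀ a b, heapLT cs ω (π a) (π b) → b < a) →
    cs.wordProd (List.ofFn fun a => ω.get (π a)) = cs.wordProd ω := by
  induction m using Nat.strong_induction_on with
  | _ m ih =>
  intro π hm hP
  by_cases hdesc : ∃ (k₀ : ℕ) (h : k₀ + 1 < ω.length),
      (π ⟨k₀ + 1, h⟩).val < (π ⟨k₀, by omega⟩).val
  · obtain ⟨k₀, h, hd⟩ := hdesc
    set k : Fin ω.length := ⟨k₀, by omega⟩ with hkdef
    set k' : Fin ω.length := ⟨k₀ + 1, h⟩ with hk'def
    have hkk' : k'.val = k.val + 1 := rfl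
    have hcomm : Commute (cs.simple (ω.get (π k))) (cs.simple (ω.get (π k'))) := by
      by_contra hnc
      have hlt : heapLT cs ω (π k) (π k') := Relation.TransGen.single ⟨hd, hnc⟩
      have := Fin.lt_def.mp (hP k k' hlt)
      omega
    have hns : ¬ ((π k).val < (π k').val ∧
        ¬ Commute (cs.simple (ω.get (π k'))) (cs.simple (ω.get (π k)))) :=
      fun hcon => absurd hcon.1 (by omega)
    set π₂ := (Equiv.swap k k').trans π with hπ₂
    have hP₂ : ∀ a b, heapLT cs ω (π₂ a) (π₂ b) → b < a := fun a b hab =>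
      pres π hP hkk' hns a b hab
    have hlt := nu_swap_lt π hkk' hd
    have hmain := ih (nu π₂) (hm ▸ hlt) π₂ rfl hP₂
    rw [← hmain]
    have e1 := ofFn_decomp (fun a => ω.get (π a)) k₀ h
    have e2 : List.ofFn (fun a => ω.get (π₂ a)) =
        (List.ofFn (fun a => ω.get (π a))).take k₀ ++
          ω.get (π k') :: ω.get (π k) ::
            (List.ofFn (fun a => ω.get (π a))).drop (k₀ + 2) :=
      ofFn_comp_swap (fun a => ω.get (π a)) k₀ h
    rw [e1, e2]
    exact commSwap_wordProd ⟨_, _, _, _, hcomm, rfl, rfl⟩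
  · push_neg at hdesc
    have hmono : ∀ (k₀ : ℕ) (hh : k₀ + 1 < ω.length),
        π ⟨k₀, by omega⟩ < π ⟨k₀ + 1, hh⟩ := by
      intro k₀ hh
      have hle := hdesc k₀ hh
      have hne : π ⟨k₀, by omega⟩ ≠ π ⟨k₀ + 1, hh⟩ :=
        fun hcon => by have := π.injective hcon; simp [Fin.ext_iff] at this
      rw [Fin.lt_def]
      rcases Nat.lt_or_ge (π ⟨k₀, by omega⟩).val (π ⟨k₀ + 1, hh⟩).val with h1 | h1
      · exact h1
      · exact absurd (Fin.ext (by omega)) hne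
    have hid := perm_eq_id π hmono
    have : (fun a => ω.get (π a)) = ω.get := funext fun a => by rw [hid a]
    rw [this, List.ofFn_get]

end HeapProof

open Heap in
/-- The reduced words for a fully commutative element `w` are exactly the words read off
from the reverse linear extensions of its heap. -/
theorem isReducedWordFor_iff_reverseLinearExtension
    {B : Type*} {W : Type*} [Group W] {M : CoxeterMatrix B}
    (cs : CoxeterSystem M W) (ω : List B)
    (hred : cs.IsReduced ω) (hfc : FullyCommutative cs (cs.wordProd ω))
    (l : List B) :
    IsReducedWordFor cs (cs.wordProd ω) l ↔
      ∃ π : Equiv.Perm (Fin ω.length),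
        (∀ a b : Fin ω.length, heapLT cs ω (π a) (π b) → b < a) ∧
        l = List.ofFn (fun a => ω.get (π a)) := by
  constructor
  · intro hl
    have hchain := hfc ω l ⟨rfl, hred⟩ hl
    clear hl
    induction hchain with
    | refl =>
      exact ⟨Equiv.refl _, fun a b h => HeapProof.heapLT_lt h,
        by simp [List.ofFn_get]⟩
    | tail hc hsw ih =>
      obtain ⟨π, hP, hb⟩ := ih
      obtain ⟨A, Bl, x, y, hcomm, rfl, rfl⟩ := hsw
      have hlen : A.length + 1 < ω.length := by
        have := congrArg List.length hb
        simp at this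
        omega
      set k₀ := A.length with hk₀
      set k : Fin ω.length := ⟨k₀, by omega⟩ with hkdef
      set k' : Fin ω.length := ⟨k₀ + 1, hlen⟩ with hk'def
      have hx : ω.get (π k) = x := by
        have h1 : (A ++ x :: y :: Bl)[k₀]'(by simp; omega) = x := by
          rw [List.getElem_append_right (Nat.le_refl k₀)]
          simp [hk₀]
        simp only [hb, List.getElem_ofFn] at h1
        exact h1
      have hy : ω.get (π k') = y := by
        have h1 : (A ++ x :: y :: Bl)[k₀ + 1]'(by simp; omega) = y := by
          rw [List.getElem_append_right (by omega)]
          simp [hk₀]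
        simp only [hb, List.getElem_ofFn] at h1
        exact h1
      have hcomm' : Commute (cs.simple (ω.get (π k))) (cs.simple (ω.get (π k'))) := by
        rw [hx, hy]; exact hcomm
      have hns : ¬ ((π k).val < (π k').val ∧
          ¬ Commute (cs.simple (ω.get (π k'))) (cs.simple (ω.get (π k)))) :=
        fun hcon => hcon.2 hcomm'.symm
      refine ⟨(Equiv.swap k k').trans π,
        fun a b hab => HeapProof.pres π hP rfl hns a b hab, ?_⟩
      have e2 : List.ofFn (fun a => ω.get (((Equiv.swap k k').trans π) a)) =
          (List.ofFn (fun a => ω.get (π a))).take k₀ ++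
            ω.get (π k') :: ω.get (π k) ::
              (List.ofFn (fun a => ω.get (π a))).drop (k₀ + 2) :=
        HeapProof.ofFn_comp_swap (fun a => ω.get (π a)) k₀ hlen
      rw [e2, ← hb, hx, hy]
      have ht : (A ++ x :: y :: Bl).take k₀ = A := List.take_left' hk₀.symm
      have hd2 : (A ++ x :: y :: Bl).drop (k₀ + 2) = Bl := by
        have hsplit : A ++ x :: y :: Bl = (A ++ [x, y]) ++ Bl := by simp
        rw [hsplit, List.drop_left' (by simp [hk₀])]
      rw [ht, hd2]
  · rintro ⟨π, hP, rfl⟩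
    have hprod := HeapProof.prod_eq (HeapProof.nu π) π rfl hP
    refine ⟨hprod, ?_⟩
    show cs.length (cs.wordProd _) = _
    rw [hprod, List.length_ofFn]
    exact hred
end

section
/- Let (W, S) be a Coxeter system, let w ∈ W be fully commutative with reduced word s_{i_1} ⋯ s_{i_ℓ} and heap P_w. For an order ideal I of P_w, choose any linear extension ρ of P_w whose first |I| values ρ(1), …, ρ(|I|) enumerate I, and set φ(I) = s_{i_{ρ(|I|)}} ⋯ s_{i_{ρ(2)}} s_{i_{ρ(1)}}. Then φ(I) is independent of the chosen linear extension, and φ is an order isomorphism from J(P_w) (ordered by inclusion) onto the set {x ∈ W : x ≤_L w} ordered by the left weak Bruhat order. -/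
namespace Heap

variable {B : Type*} {W : Type*} [Group W] {M : CoxeterMatrix B}

/-- An order ideal of the heap of `ω`. -/
def HeapIdeal (cs : CoxeterSystem M W) (ω : List B) (I : Finset (Fin ω.length)) : Prop :=
  ∀ ⦃x y : Fin ω.length⦄, y ∈ I → heapLT cs ω x y → x ∈ I

/-- `ρ` is a linear extension of the heap of `ω`: it lists the heap elements in an order
compatible with the heap order. -/
def IsLinearExtension (cs : CoxeterSystem M W) (ω : List B)
    (ρ : Equiv.Perm (Fin ω.length)) : Prop :=
  ∀ a b : Fin ω.length, heapLT cs ω (ρ a) (ρ b) → a < b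

/-- The first `|I|` values of `ρ` enumerate `I`. -/
def EnumeratesFirst (ω : List B) (ρ : Equiv.Perm (Fin ω.length))
    (I : Finset (Fin ω.length)) : Prop :=
  ∀ a : Fin ω.length, ρ a ∈ I ↔ a.val < I.card

/-- The element `φ(I) = s_{i_{ρ(|I|)}} ⋯ s_{i_{ρ(2)}} s_{i_{ρ(1)}}` read from a linear
extension `ρ` whose first `|I|` values enumerate `I`. -/
def phiWord (cs : CoxeterSystem M W) (ω : List B) (ρ : Equiv.Perm (Fin ω.length))
    (I : Finset (Fin ω.length)) : W :=
  cs.wordProd (((List.ofFn (fun a => ω.get (ρ a))).take I.card).reverse)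

/-- The left weak Bruhat order: `x ≤_L w` iff `ℓ(x) + ℓ(w x⁻¹) = ℓ(w)`. -/
def LeftWeakLE (cs : CoxeterSystem M W) (x w : W) : Prop :=
  cs.length x + cs.length (w * x⁻¹) = cs.length w

end Heap

namespace HeapAux

open Heap List

variable {B : Type*} {W : Type*} [Group W] {M : CoxeterMatrix B}
variable (cs : CoxeterSystem M W) (ω : List B)

/-- The base (covering) relation of the heap order. -/
def R (a b : Fin ω.length) : Prop :=
  b.val < a.val ∧ ¬ Commute (cs.simple (ω.get a)) (cs.simple (ω.get b))

lemma heapLT_def : heapLT cs ω = Relation.TransGen (R cs ω) := rfl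

/-- A list of positions is compatible with the heap order. -/
def Compat (L : List (Fin ω.length)) : Prop :=
  L.Pairwise fun x y => ¬ R cs ω y x

/-- The group element read off from a list of positions (reversed). -/
def q (L : List (Fin ω.length)) : W := cs.wordProd ((L.map ω.get).reverse)

lemma commute_wordProd {g : W} {l : List B} (h : ∀ b ∈ l, Commute g (cs.simple b)) :
    Commute g (cs.wordProd l) := by
  induction l with
  | nil => simpa [CoxeterSystem.wordProd_nil] using Commute.one_right g
  | cons a t ih =>
      rw [cs.wordProd_cons]
      exact (h a (by simp)).mul_right (ih fun b hb => h b (by simp [hb]))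

lemma q_mid (A Bl : List (Fin ω.length)) (h : Fin ω.length)
    (hcomm : ∀ z ∈ A, Commute (cs.simple (ω.get h)) (cs.simple (ω.get z))) :
    q cs ω (A ++ h :: Bl) = q cs ω (A ++ Bl) * cs.simple (ω.get h) := by
  have hc : Commute (cs.simple (ω.get h)) (cs.wordProd ((A.map ω.get).reverse)) := by
    apply commute_wordProd
    intro b hb
    rw [List.mem_reverse, List.mem_map] at hb
    obtain ⟨z, hz, rfl⟩ := hb
    exact hcomm z hz
  have hsing : cs.wordProd [ω.get h] = cs.simple (ω.get h) := by
    rw [cs.wordProd_cons, cs.wordProd_nil, mul_one]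
  unfold q
  simp only [List.map_append, List.map_cons, List.reverse_append, List.reverse_cons,
    CoxeterSystem.wordProd_append]
  rw [hsing, mul_assoc, hc.eq, ← mul_assoc]

lemma q_cons (h : Fin ω.length) (T : List (Fin ω.length)) :
    q cs ω (h :: T) = q cs ω T * cs.simple (ω.get h) := by
  simpa using q_mid cs ω [] T h (by simp)

/-- Key invariance: two compatible nodup listings of the same set of positions give
the same group element. -/
lemma q_eq : ∀ (L' L : List (Fin ω.length)), L.Nodup → L'.Nodup →
    (∀ x, x ∈ L ↔ x ∈ L') → Compat cs ω L → Compat cs ω L' →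
    q cs ω L = q cs ω L' := by
  intro L'
  induction L' with
  | nil =>
    intro L _ _ hmem _ _
    have : L = [] := List.eq_nil_iff_forall_not_mem.mpr fun x hx => by
      simpa using (hmem x).mp hx
    rw [this]
  | cons h T ih =>
    intro L hL hL' hmem hcL hcL'
    have hhL : h ∈ L := (hmem h).mpr (by simp)
    obtain ⟨A, Bl, rfl⟩ := List.append_of_mem hhL
    rw [List.nodup_append] at hL
    obtain ⟨hAnd, hhBlnd, hdisj⟩ := hL
    rw [List.nodup_cons] at hhBlnd
    have hhA : h ∉ A := fun hh => hdisj h hh h (by simp) rfl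
    rw [List.nodup_cons] at hL'
    have hhT : h ∉ T := hL'.1
    -- every element of A commutes with h
    have hAcomm : ∀ z ∈ A, Commute (cs.simple (ω.get h)) (cs.simple (ω.get z)) := by
      intro z hz
      have hzh : z ≠ h := fun e => hhA (e ▸ hz)
      have hvne : z.val ≠ h.val := fun e => hzh (Fin.ext e)
      rcases lt_or_gt_of_ne hvne with hlt | hgt
      · have hzhP : ¬ R cs ω h z :=
          (List.pairwise_append.mp hcL).2.2 z hz h (by simp)
        by_contra hc
        exact hzhP ⟨hlt, fun hc' => hc hc'⟩
      · have hzT : z ∈ T := by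
          have hz' : z ∈ h :: T := (hmem z).mp (by simp [hz])
          rw [List.mem_cons] at hz'
          exact hz'.resolve_left hzh
        have hhzP : ¬ R cs ω z h := (List.pairwise_cons.mp hcL').1 z hzT
        by_contra hc
        exact hhzP ⟨hgt, fun hc' => hc hc'.symm⟩
    have hsub1 : A ++ Bl <+ A ++ h :: Bl := (List.sublist_cons_self h Bl).append_left A
    rw [q_mid cs ω A Bl h hAcomm, q_cons cs ω h T]
    congr 1
    apply ih (A ++ Bl)
    · exact hsub1.nodup (List.nodup_append.mpr
        ⟨hAnd, List.nodup_cons.mpr ⟨hhBlnd.1, hhBlnd.2⟩, hdisj⟩)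
    · exact hL'.2
    · intro x
      constructor
      · intro hx
        have hxh : x ≠ h := by
          rintro rfl
          rw [List.mem_append] at hx
          rcases hx with hx | hx
          · exact hhA hx
          · exact hhBlnd.1 hx
        have hx2 : x ∈ h :: T := (hmem x).mp (by
          rw [List.mem_append] at hx ⊢
          rcases hx with hx | hx
          · exact Or.inl hx
          · exact Or.inr (by simp [hx]))
        rw [List.mem_cons] at hx2
        exact hx2.resolve_left hxh
      · intro hx
        have hxh : x ≠ h := fun e => hhT (e ▸ hx)
        have hx3 : x ∈ A ++ h :: Bl := (hmem x).mpr (by simp [hx])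
        rw [List.mem_append, List.mem_cons] at hx3
        rw [List.mem_append]
        rcases hx3 with hx' | hx'
        · exact Or.inl hx'
        · exact Or.inr (hx'.resolve_left hxh)
    · exact hcL.sublist hsub1
    · exact hcL'.sublist (List.sublist_cons_self h T)

lemma transGen_closed {α : Type*} {r : α → α → Prop} {I : α → Prop}
    (hc : ∀ u v, r u v → I v → I u) {a b : α} (h : Relation.TransGen r a b) : I b → I a := by
  induction h with
  | single h => exact hc _ _ h
  | tail _ h2 ih => exact fun hb => ih (hc _ _ h2 hb)

/-- Transport a compatible position-listing along a chain of commutation moves. -/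
lemma tracking {l₁ l₂ : List B} (h : Relation.ReflTransGen (CommSwap cs) l₁ l₂) :
    ∀ L : List (Fin ω.length), L.Nodup → Compat cs ω L → (L.map ω.get).reverse = l₁ →
    ∃ L', L'.Nodup ∧ Compat cs ω L' ∧ (L'.map ω.get).reverse = l₂ ∧ ∀ x, (x ∈ L' ↔ x ∈ L) := by
  induction h with
  | refl => exact fun L h1 h2 h3 => ⟨L, h1, h2, h3, fun _ => Iff.rfl⟩
  | tail _ hstep ih =>
    intro L h1 h2 h3
    obtain ⟨L', n', c', e', m'⟩ := ih L h1 h2 h3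
    obtain ⟨a, b, x, y, hxy, hm, hl2⟩ := hstep
    have hmap : L'.map ω.get = b.reverse ++ y :: x :: a.reverse := by
      have := congrArg List.reverse e'
      rw [List.reverse_reverse] at this
      rw [this, hm]
      simp
    obtain ⟨Lb, rest, hsplit, hLb, hrest⟩ := List.map_eq_append_iff.mp hmap
    obtain ⟨j, rest2, hr1, hj, hrest2⟩ := List.map_eq_cons_iff.mp hrest
    obtain ⟨i, La, hr2, hi, hLa⟩ := List.map_eq_cons_iff.mp hrest2
    subst hr2 hr1 hsplit
    refine ⟨Lb ++ i :: j :: La, ?_, ?_, ?_, ?_⟩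
    case _ =>
      exact ((List.Perm.swap j i La).append_left Lb).nodup_iff.mpr n'
    case _ =>
      have hRji : ¬ R cs ω j i := by
        intro hr
        exact hr.2 (by rw [hj, hi]; exact hxy.symm)
      have hRij : ¬ R cs ω i j := by
        intro hr
        exact hr.2 (by rw [hj, hi]; exact hxy)
      unfold Compat at c' ⊢
      rw [List.pairwise_append] at c' ⊢
      obtain ⟨cb, cji, cross⟩ := c'
      rw [List.pairwise_cons] at cji
      obtain ⟨cj, cia⟩ := cji
      rw [List.pairwise_cons] at cia
      obtain ⟨ci, ca⟩ := cia
      refine ⟨cb, ?_, ?_⟩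
      · rw [List.pairwise_cons]
        constructor
        · intro z hz
          rw [List.mem_cons] at hz
          rcases hz with rfl | hz
          · exact hRji
          · exact ci z hz
        · rw [List.pairwise_cons]
          exact ⟨fun z hz => cj z (by simp [hz]), ca⟩
      · intro u hu v hv
        apply cross u hu v
        rw [List.mem_cons] at hv ⊢
        rcases hv with rfl | hv
        · right; simp
        · rw [List.mem_cons] at hv
          rcases hv with rfl | hv
          · left; rfl
          · right; simp [hv]
    case _ =>
      rw [hl2]
      simp only [List.map_append, List.map_cons, hLb, hLa, hi, hj]
      simp
    case _ =>
      intro z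
      rw [((List.Perm.swap j i La).append_left Lb).mem_iff]
      exact m' z

/-- Two occurrences of the same letter in a reduced word are comparable in the heap. -/
lemma label_chain (hred : cs.IsReduced ω) (p p' : Fin ω.length)
    (hlt : p.val < p'.val) (hlab : ω.get p = ω.get p') :
    heapLT cs ω p' p := by
  by_cases hex : ∃ t : Fin ω.length, p.val < t.val ∧ t.val < p'.val ∧
      ¬ Commute (cs.simple (ω.get t)) (cs.simple (ω.get p))
  · obtain ⟨t, h1, h2, h3⟩ := hex
    have step1 : Relation.TransGen (R cs ω) t p := Relation.TransGen.single ⟨h1, h3⟩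
    have step2 : Relation.TransGen (R cs ω) p' t := by
      apply Relation.TransGen.single
      refine ⟨h2, fun hc => h3 ?_⟩
      rw [hlab]
      exact hc.symm
    show Relation.TransGen (R cs ω) p' p
    exact Relation.TransGen.trans step2 step1
  · exfalso
    push_neg at hex
    -- decompose ω
    set pv := p.val with hpv
    set pv' := p'.val with hpv'
    have hplen : pv < ω.length := p.isLt
    have hplen' : pv' < ω.length := p'.isLt
    set A := ω.take pv with hA
    set Bl := (ω.drop (pv+1)).take (pv' - pv - 1) with hB
    set C := ω.drop (pv'+1) with hC
    have hgetp : ω.get p = ω[pv] := rfl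
    have hgetp' : ω.get p' = ω[pv'] := rfl
    have hdec : ω = A ++ ω.get p :: (Bl ++ ω.get p' :: C) := by
      conv_lhs => rw [← List.take_append_drop pv ω]
      congr 1
      rw [List.drop_eq_getElem_cons hplen, ← hgetp]
      congr 1
      conv_lhs => rw [← List.take_append_drop (pv' - pv - 1) (ω.drop (pv+1))]
      congr 1
      rw [List.drop_drop, hgetp']
      have : pv + 1 + (pv' - pv - 1) = pv' := by omega
      rw [this, List.drop_eq_getElem_cons hplen']
    have hcomm : ∀ b ∈ Bl, Commute (cs.simple (ω.get p)) (cs.simple b) := by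
      intro b hb
      rw [List.mem_iff_getElem] at hb
      obtain ⟨jj, hjj, rfl⟩ := hb
      have hjj2 : jj < pv' - pv - 1 := by
        have := hjj
        simp only [hB, List.length_take, List.length_drop] at this
        omega
      have hBj : Bl[jj] = ω[pv + 1 + jj]'(by omega) := by
        simp only [hB, List.getElem_take, List.getElem_drop]
      set t : Fin ω.length := ⟨pv + 1 + jj, by omega⟩ with ht
      have hct := hex t (by simp [ht]; omega) (by simp [ht]; omega)
      have hgt : ω.get t = Bl[jj] := by rw [hBj]; rfl
      rw [← hgt]
      exact hct.symm
    have hprod : cs.wordProd ω = cs.wordProd (A ++ (Bl ++ C)) := by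
      conv_lhs => rw [hdec]
      rw [CoxeterSystem.wordProd_append, cs.wordProd_cons, CoxeterSystem.wordProd_append,
        cs.wordProd_cons, CoxeterSystem.wordProd_append, CoxeterSystem.wordProd_append]
      have hc : Commute (cs.simple (ω.get p)) (cs.wordProd Bl) := commute_wordProd cs hcomm
      have hlab2 : cs.simple (ω.get p') = cs.simple (ω.get p) := by rw [hlab]
      rw [hlab2]
      calc cs.wordProd A * (cs.simple (ω.get p) * (cs.wordProd Bl *
              (cs.simple (ω.get p) * cs.wordProd C)))
          = cs.wordProd A * (cs.simple (ω.get p) * cs.wordProd Bl *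
              (cs.simple (ω.get p) * cs.wordProd C)) := by rw [mul_assoc]
        _ = cs.wordProd A * (cs.wordProd Bl * cs.simple (ω.get p) *
              (cs.simple (ω.get p) * cs.wordProd C)) := by rw [hc.eq]
        _ = cs.wordProd A * (cs.wordProd Bl * (cs.simple (ω.get p) *
              cs.simple (ω.get p)) * cs.wordProd C) := by group
        _ = cs.wordProd A * (cs.wordProd Bl * cs.wordProd C) := by
              rw [cs.simple_mul_simple_self, mul_one]
    have hlen : cs.length (cs.wordProd ω) ≤ ω.length - 2 := by
      rw [hprod]
      calc cs.length (cs.wordProd (A ++ (Bl ++ C))) ≤ (A ++ (Bl ++ C)).length :=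
            cs.length_wordProd_le _
        _ = A.length + (Bl.length + C.length) := by simp
        _ ≤ ω.length - 2 := by
            simp only [hA, hB, hC, List.length_take, List.length_drop]
            omega
    rw [hred] at hlen
    omega

/-- The canonical value of φ on an ideal: product of the subword at positions `I`. -/
def Fmap (I : Finset (Fin ω.length)) : W :=
  cs.wordProd ((I.sort (· ≤ ·)).map ω.get)

lemma compat_rev_sort (s : Finset (Fin ω.length)) :
    Compat cs ω ((s.sort (· ≤ ·)).reverse) := by
  unfold Compat
  rw [List.pairwise_reverse]
  refine (Finset.pairwise_sort (r := (· ≤ ·)) (s := s)).imp ?_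
  intro a b hab hr
  exact absurd hr.1 (not_lt.mpr hab)

lemma nodup_rev_sort (s : Finset (Fin ω.length)) : ((s.sort (· ≤ ·)).reverse).Nodup :=
  (List.nodup_reverse).mpr (s.sort_nodup (· ≤ ·))

lemma mem_rev_sort (s : Finset (Fin ω.length)) (x : Fin ω.length) :
    x ∈ (s.sort (· ≤ ·)).reverse ↔ x ∈ s := by
  rw [List.mem_reverse, Finset.mem_sort]

lemma q_rev_sort (s : Finset (Fin ω.length)) :
    q cs ω ((s.sort (· ≤ ·)).reverse) = Fmap cs ω s := by
  unfold q Fmap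
  rw [List.map_reverse, List.reverse_reverse]

lemma q_two_blocks (s t : Finset (Fin ω.length)) :
    q cs ω ((s.sort (· ≤ ·)).reverse ++ (t.sort (· ≤ ·)).reverse) =
      Fmap cs ω t * Fmap cs ω s := by
  unfold q Fmap
  rw [List.map_append, List.reverse_append, List.map_reverse, List.map_reverse,
    List.reverse_reverse, List.reverse_reverse, CoxeterSystem.wordProd_append]

lemma compat_two_blocks {I K : Finset (Fin ω.length)} (hI : HeapIdeal cs ω I)
    (hdisj : ∀ x ∈ K, x ∉ I) :
    Compat cs ω ((I.sort (· ≤ ·)).reverse ++ (K.sort (· ≤ ·)).reverse) := by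
  unfold Compat
  rw [List.pairwise_append]
  refine ⟨compat_rev_sort cs ω I, compat_rev_sort cs ω K, ?_⟩
  intro a ha b hb hr
  rw [mem_rev_sort ω] at ha hb
  have : heapLT cs ω b a := Relation.TransGen.single hr
  exact hdisj b hb (hI ha this)

/-- Decomposition of `Fmap J` for a subideal `I ⊆ J`. -/
lemma decomp_subset {I J : Finset (Fin ω.length)} (hI : HeapIdeal cs ω I) (hIJ : I ⊆ J) :
    Fmap cs ω J = Fmap cs ω (J \ I) * Fmap cs ω I := by
  rw [← q_rev_sort, ← q_two_blocks]
  apply q_eq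
  · exact nodup_rev_sort ω J
  · rw [List.nodup_append]
    refine ⟨nodup_rev_sort ω I, nodup_rev_sort ω (J \ I), ?_⟩
    intro a ha b hb hab
    rw [mem_rev_sort ω] at ha hb
    rw [Finset.mem_sdiff] at hb
    exact hb.2 (hab ▸ ha)
  · intro x
    rw [List.mem_append, mem_rev_sort ω, mem_rev_sort ω, mem_rev_sort ω, Finset.mem_sdiff]
    constructor
    · intro hx
      by_cases hxI : x ∈ I
      · exact Or.inl hxI
      · exact Or.inr ⟨hx, hxI⟩
    · rintro (hx | hx)
      · exact hIJ hx
      · exact hx.1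
  · exact compat_rev_sort cs ω J
  · exact compat_two_blocks cs ω hI (fun x hx => (Finset.mem_sdiff.mp hx).2)

lemma sort_univ_map_get : ((Finset.univ : Finset (Fin ω.length)).sort (· ≤ ·)).map ω.get = ω := by
  have h1 : (Finset.univ : Finset (Fin ω.length)).sort (· ≤ ·) = List.finRange ω.length := by
    refine List.Perm.eq_of_pairwise' (Finset.pairwise_sort _ _)
      (List.Pairwise.imp le_of_lt (List.pairwise_lt_finRange _)) ?_
    apply List.perm_of_nodup_nodup_toFinset_eq
    · exact Finset.sort_nodup _ _
    · exact List.nodup_finRange _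
    · ext x
      simp [Finset.mem_sort]
  rw [h1]
  exact List.map_get_finRange ω

lemma Fmap_univ : Fmap cs ω (Finset.univ : Finset (Fin ω.length)) = cs.wordProd ω := by
  unfold Fmap
  rw [sort_univ_map_get]

lemma univ_ideal : HeapIdeal cs ω (Finset.univ : Finset (Fin ω.length)) :=
  fun x _ _ _ => Finset.mem_univ x

/-- The fundamental length/decomposition facts for an ideal. -/
lemma ideal_lengths (hred : cs.IsReduced ω) {I : Finset (Fin ω.length)}
    (hI : HeapIdeal cs ω I) :
    cs.wordProd ω = Fmap cs ω Iᶜ * Fmap cs ω I ∧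
      cs.length (Fmap cs ω I) = I.card ∧
      cs.length (Fmap cs ω Iᶜ) = ω.length - I.card := by
  have hdec : Fmap cs ω (Finset.univ : Finset (Fin ω.length)) =
      Fmap cs ω (Finset.univ \ I) * Fmap cs ω I :=
    decomp_subset cs ω hI (Finset.subset_univ I)
  rw [Fmap_univ, ← Finset.compl_eq_univ_sdiff] at hdec
  have hcard : I.card ≤ ω.length := by
    simpa using Finset.card_le_univ I
  have hccard : Iᶜ.card = ω.length - I.card := by
    rw [Finset.card_compl]
    simp
  have hlen1 : cs.length (Fmap cs ω I) ≤ I.card := by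
    calc cs.length (Fmap cs ω I) ≤ ((I.sort (· ≤ ·)).map ω.get).length :=
          cs.length_wordProd_le _
      _ = I.card := by rw [List.length_map, Finset.length_sort]
  have hlen2 : cs.length (Fmap cs ω Iᶜ) ≤ ω.length - I.card := by
    calc cs.length (Fmap cs ω Iᶜ) ≤ ((Iᶜ.sort (· ≤ ·)).map ω.get).length :=
          cs.length_wordProd_le _
      _ = ω.length - I.card := by rw [List.length_map, Finset.length_sort, hccard]
  have htot : cs.length (cs.wordProd ω) = ω.length := hred
  have hmul : cs.length (cs.wordProd ω) ≤ cs.length (Fmap cs ω Iᶜ) + cs.length (Fmap cs ω I) := by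
    rw [hdec]; exact cs.length_mul_le _ _
  exact ⟨hdec, by omega, by omega⟩

lemma tracked_of_reduced (hred : cs.IsReduced ω)
    (hfc : FullyCommutative cs (cs.wordProd ω)) (l : List B)
    (hp : cs.wordProd l = cs.wordProd ω) (hl : l.length = ω.length) :
    ∃ L : List (Fin ω.length), L.Nodup ∧ Compat cs ω L ∧ (∀ x, x ∈ L) ∧
      L.map ω.get = l.reverse := by
  have hredl : cs.IsReduced l := by
    show cs.length (cs.wordProd l) = l.length
    rw [hp, hl]
    exact hred
  have hchain := hfc ω l ⟨rfl, hred⟩ ⟨hp, hredl⟩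
  have hcompat : Compat cs ω (List.finRange ω.length).reverse := by
    unfold Compat
    rw [List.pairwise_reverse]
    refine (List.pairwise_lt_finRange _).imp ?_
    intro a b hab hr
    exact absurd hr.1 (not_lt.mpr hab.le)
  obtain ⟨L, h1, h2, h3, h4⟩ := tracking cs ω hchain (List.finRange ω.length).reverse
    ((List.nodup_reverse).mpr (List.nodup_finRange _)) hcompat
    (by rw [List.map_reverse, List.reverse_reverse, List.map_get_finRange])
  refine ⟨L, h1, h2, ?_, ?_⟩
  · intro x
    rw [h4 x]
    simp
  · rw [← h3, List.reverse_reverse]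

lemma ideal_of_prefix (L1 L2 : List (Fin ω.length)) (hnd : (L1 ++ L2).Nodup)
    (hc : Compat cs ω (L1 ++ L2)) (hall : ∀ x, x ∈ L1 ++ L2) :
    HeapIdeal cs ω L1.toFinset ∧
      Fmap cs ω L1.toFinset = cs.wordProd ((L1.map ω.get).reverse) ∧
      L1.toFinset.card = L1.length := by
  unfold Compat at hc
  have hnd1 : L1.Nodup := ((List.sublist_append_left L1 L2).nodup hnd)
  have hideal : HeapIdeal cs ω L1.toFinset := by
    intro u v hv hlt
    rw [List.mem_toFinset] at hv ⊢
    refine transGen_closed ?_ hlt hv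
    intro a b hr hb
    rcases List.mem_append.mp (hall a) with ha | ha
    · exact ha
    · exact absurd hr ((List.pairwise_append.mp hc).2.2 b hb a ha)
  refine ⟨hideal, ?_, List.toFinset_card_of_nodup hnd1⟩
  have := q_eq cs ω L1 ((L1.toFinset.sort (· ≤ ·)).reverse)
    (nodup_rev_sort ω _) hnd1
    (by intro x; rw [mem_rev_sort ω, List.mem_toFinset])
    (compat_rev_sort cs ω _)
    ((List.pairwise_append.mp hc).1)
  rw [q_rev_sort] at this
  exact this

lemma perm_of_chain {l₁ l₂ : List B} (h : Relation.ReflTransGen (CommSwap cs) l₁ l₂) :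
    l₁.Perm l₂ := by
  induction h with
  | refl => exact List.Perm.refl _
  | tail _ hstep ih =>
    obtain ⟨a, b, x, y, _, hm, hl2⟩ := hstep
    refine ih.trans ?_
    rw [hm, hl2]
    exact (List.Perm.swap y x b).append_left a

lemma phiWord_eq_q (ρ : Equiv.Perm (Fin ω.length)) (I : Finset (Fin ω.length)) :
    phiWord cs ω ρ I = q cs ω ((List.ofFn (fun a => ρ a)).take I.card) := by
  unfold phiWord q
  have h1 : (List.ofFn (fun a => ω.get (ρ a))) = ((List.ofFn (fun a => ρ a)).map ω.get) := by
    rw [List.map_ofFn]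
    rfl
  rw [h1, List.map_take]

lemma nodup_take_ofFn (ρ : Equiv.Perm (Fin ω.length)) (k : ℕ) :
    ((List.ofFn (fun a => ρ a)).take k).Nodup :=
  (List.take_sublist _ _).nodup (List.nodup_ofFn.mpr (fun _ _ h => ρ.injective h))

lemma compat_take_ofFn (ρ : Equiv.Perm (Fin ω.length)) (hρ : IsLinearExtension cs ω ρ)
    (k : ℕ) : Compat cs ω ((List.ofFn (fun a => ρ a)).take k) := by
  have h1 : Compat cs ω (List.ofFn (fun a => ρ a)) := by
    unfold Compat
    rw [List.pairwise_ofFn]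
    intro a b hab hr
    exact absurd (hρ b a (Relation.TransGen.single hr)) (not_lt.mpr hab.le)
  exact h1.sublist (List.take_sublist _ _)

lemma mem_take_ofFn (ρ : Equiv.Perm (Fin ω.length)) (I : Finset (Fin ω.length))
    (henum : EnumeratesFirst ω ρ I) (x : Fin ω.length) :
    x ∈ (List.ofFn (fun a => ρ a)).take I.card ↔ x ∈ I := by
  rw [List.mem_iff_getElem]
  simp only [List.getElem_take, List.length_take, List.length_ofFn, List.getElem_ofFn]
  constructor
  · rintro ⟨i, hi, rfl⟩
    have h1 : i < I.card := lt_of_lt_of_le hi inf_le_left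
    exact (henum ⟨i, lt_of_lt_of_le hi inf_le_right⟩).mpr h1
  · intro hx
    have ha : ρ (ρ.symm x) = x := ρ.apply_symm_apply x
    have hlt : (ρ.symm x).val < I.card := (henum (ρ.symm x)).mp (by rw [ha]; exact hx)
    refine ⟨(ρ.symm x).val, lt_inf_iff.mpr ⟨hlt, (ρ.symm x).isLt⟩, ?_⟩
    rw [Fin.eta]
    exact ha

lemma Fmap_inj (hred : cs.IsReduced ω) (hfc : FullyCommutative cs (cs.wordProd ω))
    {I J : Finset (Fin ω.length)} (hI : HeapIdeal cs ω I) (hJ : HeapIdeal cs ω J)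
    (h : Fmap cs ω I = Fmap cs ω J) : I = J := by
  classical
  obtain ⟨hdecI, hlenI, hlenIc⟩ := ideal_lengths cs ω hred hI
  obtain ⟨hdecJ, hlenJ, hlenJc⟩ := ideal_lengths cs ω hred hJ
  have hcard : I.card = J.card := by rw [← hlenI, ← hlenJ, h]
  have hcardle : I.card ≤ ω.length := by simpa using Finset.card_le_univ I
  have hlu : ((I.sort (· ≤ ·)).map ω.get).length = I.card := by
    rw [List.length_map, Finset.length_sort]
  have hlv : ((J.sort (· ≤ ·)).map ω.get).length = J.card := by
    rw [List.length_map, Finset.length_sort]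
  have hlc : ((Iᶜ.sort (· ≤ ·)).map ω.get).length = ω.length - I.card := by
    rw [List.length_map, Finset.length_sort, Finset.card_compl]
    simp
  have hw1 : cs.wordProd ((Iᶜ.sort (· ≤ ·)).map ω.get ++ (I.sort (· ≤ ·)).map ω.get) =
      cs.wordProd ω := by
    rw [CoxeterSystem.wordProd_append]
    exact hdecI.symm
  have hw2 : cs.wordProd ((Iᶜ.sort (· ≤ ·)).map ω.get ++ (J.sort (· ≤ ·)).map ω.get) =
      cs.wordProd ω := by
    rw [CoxeterSystem.wordProd_append]
    show Fmap cs ω Iᶜ * Fmap cs ω J = _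
    rw [← h]
    exact hdecI.symm
  have hr1 : IsReducedWordFor cs (cs.wordProd ω)
      ((Iᶜ.sort (· ≤ ·)).map ω.get ++ (I.sort (· ≤ ·)).map ω.get) := by
    refine ⟨hw1, ?_⟩
    show cs.length (cs.wordProd _) = _
    rw [hw1, hred, List.length_append, hlu, hlc]
    omega
  have hr2 : IsReducedWordFor cs (cs.wordProd ω)
      ((Iᶜ.sort (· ≤ ·)).map ω.get ++ (J.sort (· ≤ ·)).map ω.get) := by
    refine ⟨hw2, ?_⟩
    show cs.length (cs.wordProd _) = _
    rw [hw2, hred, List.length_append, hlv, hlc, ← hcard]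
    omega
  have hperm := perm_of_chain cs (hfc _ _ hr1 hr2)
  have huv : ((I.sort (· ≤ ·)).map ω.get).Perm ((J.sort (· ≤ ·)).map ω.get) :=
    (List.perm_append_left_iff _).mp hperm
  -- count of each label in an ideal's subword equals the filter cardinality
  have hcnt : ∀ (K : Finset (Fin ω.length)) (β : B),
      (K.filter (fun q => ω.get q = β)).card =
        ((K.sort (· ≤ ·)).map ω.get).countP (fun b => decide (b = β)) := by
    intro K β
    rw [List.countP_map, List.countP_eq_length_filter]
    have hnd : ((K.sort (· ≤ ·)).filter ((fun b => decide (b = β)) ∘ ω.get)).Nodup :=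
      (K.sort_nodup _).filter _
    rw [← List.toFinset_card_of_nodup hnd]
    congr 1
    ext q
    simp [List.mem_filter, Finset.mem_sort, Function.comp]
  -- upward closedness of label classes in an ideal
  have hup : ∀ (K : Finset (Fin ω.length)), HeapIdeal cs ω K → ∀ (β : B),
      ∀ q ∈ K.filter (fun q => ω.get q = β), ∀ q' : Fin ω.length, ω.get q' = β →
      q.val ≤ q'.val → q' ∈ K.filter (fun q => ω.get q = β) := by
    intro K hK β q hq q' hq' hle
    rw [Finset.mem_filter] at hq ⊢
    rcases eq_or_lt_of_le hle with heq | hlt2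
    · have hqq : q = q' := Fin.ext heq
      exact ⟨hqq ▸ hq.1, hq'⟩
    · have hchain := label_chain cs ω hred q q' hlt2 (by rw [hq.2, hq'])
      exact ⟨hK hq.1 hchain, hq'⟩
  -- main inclusion
  have key : ∀ (I' J' : Finset (Fin ω.length)), HeapIdeal cs ω I' → HeapIdeal cs ω J' →
      (∀ β : B, (I'.filter (fun q => ω.get q = β)).card =
        (J'.filter (fun q => ω.get q = β)).card) → I' ⊆ J' := by
    intro I' J' hI' hJ' hcounts p hp
    by_contra hpJ
    set β := ω.get p with hβ
    set SI := I'.filter (fun q => ω.get q = β) with hSI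
    set SJ := J'.filter (fun q => ω.get q = β) with hSJ
    have hpSI : p ∈ SI := by rw [hSI, Finset.mem_filter]; exact ⟨hp, rfl⟩
    have hpSJ : p ∉ SJ := fun hx => hpJ (Finset.mem_filter.mp hx).1
    have hsub : SJ ⊆ SI.erase p := by
      intro q hq
      have hqlab : ω.get q = β := (Finset.mem_filter.mp hq).2
      have hgt : p.val < q.val := by
        by_contra hle
        push_neg at hle
        exact hpSJ (hup J' hJ' β q hq p rfl hle)
      rw [Finset.mem_erase]
      exact ⟨fun e => hpSJ (e ▸ hq), hup I' hI' β p hpSI q hqlab (le_of_lt hgt)⟩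
    have hcc : SJ.card ≤ SI.card - 1 := by
      calc SJ.card ≤ (SI.erase p).card := Finset.card_le_card hsub
        _ = SI.card - 1 := Finset.card_erase_of_mem hpSI
    have hpos : 0 < SI.card := Finset.card_pos.mpr ⟨p, hpSI⟩
    have hceq := hcounts β
    rw [← hSI, ← hSJ] at hceq
    omega
  have hcounts : ∀ β : B, (I.filter (fun q => ω.get q = β)).card =
      (J.filter (fun q => ω.get q = β)).card := by
    intro β
    rw [hcnt I β, hcnt J β, huv.countP_eq]
  exact Finset.Subset.antisymm (key I J hI hJ hcounts)
    (key J I hJ hI (fun β => (hcounts β).symm))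

lemma phiWord_eq_Fmap (ρ : Equiv.Perm (Fin ω.length)) (I : Finset (Fin ω.length))
    (hρ : IsLinearExtension cs ω ρ) (henum : EnumeratesFirst ω ρ I) :
    phiWord cs ω ρ I = Fmap cs ω I := by
  rw [phiWord_eq_q, ← q_rev_sort]
  apply q_eq
  · exact nodup_take_ofFn ω ρ I.card
  · exact nodup_rev_sort ω I
  · intro x
    rw [mem_take_ofFn ω ρ I henum x, mem_rev_sort ω]
  · exact compat_take_ofFn cs ω ρ hρ I.card
  · exact compat_rev_sort cs ω I

end HeapAux


open Heap in
/-- `φ` is well defined (independent of the chosen linear extension) and is an order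
isomorphism from the order ideals of the heap of a fully commutative element `w`,
ordered by inclusion, onto `{x ∈ W : x ≤_L w}` with the left weak Bruhat order. -/
theorem phiWord_wellDefined_and_orderIso
    {B : Type*} {W : Type*} [Group W] {M : CoxeterMatrix B}
    (cs : CoxeterSystem M W) (ω : List B)
    (hred : cs.IsReduced ω) (hfc : FullyCommutative cs (cs.wordProd ω)) :
    (∀ I : Finset (Fin ω.length), HeapIdeal cs ω I →
      ∀ ρ ρ' : Equiv.Perm (Fin ω.length),
        IsLinearExtension cs ω ρ → IsLinearExtension cs ω ρ' →
        EnumeratesFirst ω ρ I → EnumeratesFirst ω ρ' I →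
        phiWord cs ω ρ I = phiWord cs ω ρ' I) ∧
    ∃ F : {I : Finset (Fin ω.length) // HeapIdeal cs ω I} → W,
      (∀ (I : {I : Finset (Fin ω.length) // HeapIdeal cs ω I})
          (ρ : Equiv.Perm (Fin ω.length)),
          IsLinearExtension cs ω ρ → EnumeratesFirst ω ρ I.1 →
          F I = phiWord cs ω ρ I.1) ∧
      (∀ I, LeftWeakLE cs (F I) (cs.wordProd ω)) ∧
      (∀ x : W, LeftWeakLE cs x (cs.wordProd ω) → ∃ I, F I = x) ∧
      (∀ I J, I.1 ⊆ J.1 ↔ LeftWeakLE cs (F I) (F J)) := by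
  classical
  constructor
  · intro I _ ρ ρ' hρ hρ' he he'
    rw [HeapAux.phiWord_eq_Fmap cs ω ρ I hρ he, HeapAux.phiWord_eq_Fmap cs ω ρ' I hρ' he']
  · refine ⟨fun I => HeapAux.Fmap cs ω I.1, ?_, ?_, ?_, ?_⟩
    · intro I ρ hρ he
      exact (HeapAux.phiWord_eq_Fmap cs ω ρ I.1 hρ he).symm
    · intro I
      obtain ⟨hdec, hlen, hlenc⟩ := HeapAux.ideal_lengths cs ω hred I.2
      show cs.length _ + cs.length _ = cs.length _
      have hinv : cs.wordProd ω * (HeapAux.Fmap cs ω I.1)⁻¹ = HeapAux.Fmap cs ω I.1ᶜ := by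
        rw [hdec]; group
      rw [hinv, hlen, hlenc, hred]
      have hcle : I.1.card ≤ ω.length := by simpa using Finset.card_le_univ I.1
      omega
    · -- surjectivity
      intro x hx
      have hx' : cs.length x + cs.length (cs.wordProd ω * x⁻¹) = cs.length (cs.wordProd ω) := hx
      obtain ⟨la, hla, hpa⟩ := cs.exists_reduced_word x
      obtain ⟨lc, hlc, hpc⟩ := cs.exists_reduced_word (cs.wordProd ω * x⁻¹)
      replace hla : la.length = cs.length x := by
        rw [hpa]; exact (show cs.length (cs.wordProd la) = la.length from hla).symm
      replace hlc : lc.length = cs.length (cs.wordProd ω * x⁻¹) := by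
        rw [hpc]; exact (show cs.length (cs.wordProd lc) = lc.length from hlc).symm
      have hp : cs.wordProd (lc ++ la) = cs.wordProd ω := by
        rw [CoxeterSystem.wordProd_append, ← hpa, ← hpc]
        group
      have hl : (lc ++ la).length = ω.length := by
        rw [hred] at hx'
        rw [List.length_append, hla, hlc]
        omega
      obtain ⟨L, hnd, hcomp, hall, hmap⟩ := HeapAux.tracked_of_reduced cs ω hred hfc _ hp hl
      rw [List.reverse_append] at hmap
      obtain ⟨La, Lc, rfl, hLa, hLc⟩ := List.map_eq_append_iff.mp hmap
      obtain ⟨hideal, hFq, hcard⟩ := HeapAux.ideal_of_prefix cs ω La Lc hnd hcomp hall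
      refine ⟨⟨La.toFinset, hideal⟩, ?_⟩
      show HeapAux.Fmap cs ω La.toFinset = x
      rw [hFq, hLa, List.reverse_reverse]
      exact hpa.symm
    · -- order isomorphism
      intro I J
      constructor
      · intro hsub
        obtain ⟨_, hlenI, _⟩ := HeapAux.ideal_lengths cs ω hred I.2
        obtain ⟨_, hlenJ, _⟩ := HeapAux.ideal_lengths cs ω hred J.2
        have hdec := HeapAux.decomp_subset cs ω I.2 hsub
        show cs.length _ + cs.length _ = cs.length _
        have hinv : HeapAux.Fmap cs ω J.1 * (HeapAux.Fmap cs ω I.1)⁻¹ =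
            HeapAux.Fmap cs ω (J.1 \ I.1) := by rw [hdec]; group
        rw [hinv, hlenI, hlenJ]
        have h1 : cs.length (HeapAux.Fmap cs ω (J.1 \ I.1)) ≤ J.1.card - I.1.card := by
          calc cs.length (HeapAux.Fmap cs ω (J.1 \ I.1))
              ≤ (((J.1 \ I.1).sort (· ≤ ·)).map ω.get).length := cs.length_wordProd_le _
            _ = (J.1 \ I.1).card := by rw [List.length_map, Finset.length_sort]
            _ = J.1.card - I.1.card := Finset.card_sdiff_of_subset hsub
        have h2 : J.1.card ≤ cs.length (HeapAux.Fmap cs ω (J.1 \ I.1)) + I.1.card := by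
          rw [← hlenI, ← hlenJ, hdec]
          exact cs.length_mul_le _ _
        have hIJcard : I.1.card ≤ J.1.card := Finset.card_le_card hsub
        omega
      · intro hle
        have hle' : cs.length (HeapAux.Fmap cs ω I.1) +
            cs.length (HeapAux.Fmap cs ω J.1 * (HeapAux.Fmap cs ω I.1)⁻¹) =
            cs.length (HeapAux.Fmap cs ω J.1) := hle
        obtain ⟨hdecJ, hlenJ, hlenJc⟩ := HeapAux.ideal_lengths cs ω hred J.2
        obtain ⟨_, hlenI, _⟩ := HeapAux.ideal_lengths cs ω hred I.2
        obtain ⟨la, hla, hpa⟩ := cs.exists_reduced_word (HeapAux.Fmap cs ω I.1)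
        obtain ⟨lb, hlb, hpb⟩ := cs.exists_reduced_word
          (HeapAux.Fmap cs ω J.1 * (HeapAux.Fmap cs ω I.1)⁻¹)
        obtain ⟨lcc, hlcc, hpcc⟩ := cs.exists_reduced_word
          (cs.wordProd ω * (HeapAux.Fmap cs ω J.1)⁻¹)
        replace hla : la.length = cs.length (HeapAux.Fmap cs ω I.1) := by
          rw [hpa]; exact (show cs.length (cs.wordProd la) = la.length from hla).symm
        replace hlb : lb.length =
            cs.length (HeapAux.Fmap cs ω J.1 * (HeapAux.Fmap cs ω I.1)⁻¹) := by
          rw [hpb]; exact (show cs.length (cs.wordProd lb) = lb.length from hlb).symm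
        replace hlcc : lcc.length = cs.length (cs.wordProd ω * (HeapAux.Fmap cs ω J.1)⁻¹) := by
          rw [hpcc]; exact (show cs.length (cs.wordProd lcc) = lcc.length from hlcc).symm
        have hzlen : cs.length (cs.wordProd ω * (HeapAux.Fmap cs ω J.1)⁻¹) =
            ω.length - J.1.card := by
          have hzz : cs.wordProd ω * (HeapAux.Fmap cs ω J.1)⁻¹ = HeapAux.Fmap cs ω J.1ᶜ := by
            rw [hdecJ]; group
          rw [hzz, hlenJc]
        have hp : cs.wordProd (lcc ++ (lb ++ la)) = cs.wordProd ω := by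
          rw [CoxeterSystem.wordProd_append, CoxeterSystem.wordProd_append,
            ← hpa, ← hpb, ← hpcc]
          group
        have hJcard : J.1.card ≤ ω.length := by simpa using Finset.card_le_univ J.1
        have hl : (lcc ++ (lb ++ la)).length = ω.length := by
          simp only [List.length_append]
          rw [hlenI] at hla hle'
          rw [hlenJ] at hle'
          rw [hzlen] at hlcc
          omega
        obtain ⟨L, hnd, hcomp, hall, hmap⟩ := HeapAux.tracked_of_reduced cs ω hred hfc _ hp hl
        rw [List.reverse_append, List.reverse_append] at hmap
        obtain ⟨Lab, Lc, rfl, hLab, hLc⟩ := List.map_eq_append_iff.mp hmap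
        obtain ⟨La, Lb, rfl, hLa, hLb⟩ := List.map_eq_append_iff.mp hLab
        have hnd' : (La ++ (Lb ++ Lc)).Nodup := by rw [← List.append_assoc]; exact hnd
        have hcomp' : HeapAux.Compat cs ω (La ++ (Lb ++ Lc)) := by
          rw [HeapAux.Compat, ← List.append_assoc]; exact hcomp
        have hall' : ∀ y, y ∈ La ++ (Lb ++ Lc) := by
          intro y; rw [← List.append_assoc]; exact hall y
        have hpre1 := HeapAux.ideal_of_prefix cs ω La (Lb ++ Lc) hnd' hcomp' hall'
        have hpre2 := HeapAux.ideal_of_prefix cs ω (La ++ Lb) Lc hnd hcomp hall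
        have hFI : HeapAux.Fmap cs ω La.toFinset = HeapAux.Fmap cs ω I.1 := by
          rw [hpre1.2.1, hLa, List.reverse_reverse]
          exact hpa.symm
        have hFJ : HeapAux.Fmap cs ω (La ++ Lb).toFinset = HeapAux.Fmap cs ω J.1 := by
          rw [hpre2.2.1, hLab, List.reverse_append, List.reverse_reverse,
            List.reverse_reverse, CoxeterSystem.wordProd_append, ← hpa, ← hpb]
          group
        have hIeq := HeapAux.Fmap_inj cs ω hred hfc hpre1.1 I.2 hFI
        have hJeq := HeapAux.Fmap_inj cs ω hred hfc hpre2.1 J.2 hFJ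
        rw [← hIeq, ← hJeq]
        intro y hy
        rw [List.mem_toFinset] at hy ⊢
        rw [List.mem_append]
        exact Or.inl hy
end

section
/- Let (W, S) be a Coxeter system, let w ∈ W be fully commutative with reduced word s_{i_1} ⋯ s_{i_ℓ} and heap P_w, and fix a generator s_k ∈ S with C_k = {j : s_{i_j} = s_k}. Then for every order ideal I of P_w, the order ideal obtained from I by applying the toggles t_j for all j ∈ C_k (in any order; these toggles pairwise commute) differs from I in at most one element. -/
open Classical in
/-- The toggle `t_p` of a finite set at an element `p`, with respect to a relation `lt`. -/
noncomputable def rtoggle {γ : Type*} [DecidableEq γ] (lt : γ → γ → Prop) (p : γ)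
    (I : Finset γ) : Finset γ :=
  if p ∈ I ∧ ∀ y ∈ I, ¬ lt p y then I.erase p
  else if p ∉ I ∧ ∀ ⦃x y : γ⦄, y ∈ insert p I → lt x y → x ∈ insert p I then insert p I
  else I


section Aux
open Heap

variable {B : Type*} {W : Type*} [Group W] {M : CoxeterMatrix B}

lemma heapLT_val {cs : CoxeterSystem M W} {ω : List B} {x y : Fin ω.length}
    (h : heapLT cs ω x y) : y.val < x.val := by
  induction h with
  | single h => exact h.1
  | tail _ h ih => exact lt_trans h.1 ih

/-- In a reduced word, strictly between two positions carrying the same letter there is a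
position whose letter does not commute with it. -/
lemma heap_exists_between (cs : CoxeterSystem M W) {ω : List B} (hred : cs.IsReduced ω)
    {a b : Fin ω.length} (hk : ω.get a = ω.get b) (hab : a.val < b.val) :
    ∃ c : Fin ω.length, a.val < c.val ∧ c.val < b.val ∧
      ¬ Commute (cs.simple (ω.get a)) (cs.simple (ω.get c)) := by
  by_contra hcon
  push_neg at hcon
  set x := ω.get a with hx
  set mid := (ω.drop (a.val + 1)).take (b.val - (a.val + 1)) with hmid
  have hb : b.val < ω.length := b.isLt
  have hmlen : mid.length = b.val - (a.val + 1) := by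
    rw [hmid, List.length_take, List.length_drop]
    omega
  have hdec : ω = ω.take a.val ++ x :: (mid ++ x :: ω.drop (b.val + 1)) := by
    have h1 : ω.drop b.val = ω.get b :: ω.drop (b.val + 1) := by
      rw [List.get_eq_getElem]
      exact List.drop_eq_getElem_cons hb
    have h2 : mid ++ ω.drop b.val = ω.drop (a.val + 1) := by
      rw [hmid]
      have := List.take_append_drop (b.val - (a.val + 1)) (ω.drop (a.val + 1))
      rw [List.drop_drop] at this
      have hbe : a.val + 1 + (b.val - (a.val + 1)) = b.val := by omega
      rwa [hbe] at this
    have h3 : ω.drop a.val = ω.get a :: ω.drop (a.val + 1) := by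
      rw [List.get_eq_getElem]
      exact List.drop_eq_getElem_cons a.isLt
    conv_lhs => rw [← List.take_append_drop a.val ω, h3]
    rw [← h2, h1, ← hk, ← hx]
  have hcomm : Commute (cs.simple x) (cs.wordProd mid) := by
    rw [CoxeterSystem.wordProd]
    apply Commute.list_prod_right
    intro y hy
    rw [List.mem_map] at hy
    obtain ⟨m, hm, rfl⟩ := hy
    rw [List.mem_iff_getElem] at hm
    obtain ⟨i, hi, rfl⟩ := hm
    have hival : i < b.val - (a.val + 1) := by rwa [hmlen] at hi
    have hcval : a.val + 1 + i < ω.length := by omega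
    have hgm : mid[i] = ω[a.val + 1 + i] := by
      simp [hmid, List.getElem_take, List.getElem_drop]
    rw [hgm]
    exact hcon ⟨a.val + 1 + i, hcval⟩ (by show a.val < a.val + 1 + i; omega)
      (by show a.val + 1 + i < b.val; omega)
  have hprod : cs.wordProd ω
      = cs.wordProd (ω.take a.val ++ (mid ++ ω.drop (b.val + 1))) := by
    conv_lhs => rw [hdec]
    rw [cs.wordProd_append, cs.wordProd_cons, cs.wordProd_append, cs.wordProd_cons,
      cs.wordProd_append, cs.wordProd_append]
    congr 1
    rw [← mul_assoc, hcomm.eq, mul_assoc, ← mul_assoc (cs.simple x),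
      cs.simple_mul_simple_self, one_mul]
  have hlen := cs.length_wordProd_le (ω.take a.val ++ (mid ++ ω.drop (b.val + 1)))
  rw [← hprod, hred] at hlen
  simp only [List.length_append, List.length_take, List.length_drop, hmlen] at hlen
  omega

/-- Equal-label positions are comparable in the heap: the later one is below. -/
lemma heapLT_of_same_label (cs : CoxeterSystem M W) {ω : List B} (hred : cs.IsReduced ω)
    {p q : Fin ω.length} (hk : ω.get p = ω.get q) (hpq : p.val < q.val) :
    heapLT cs ω q p := by
  obtain ⟨c, h1, h2, h3⟩ := heap_exists_between cs hred hk hpq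
  have hqc : heapLT cs ω q c :=
    Relation.TransGen.single ⟨h2, by rw [← hk]; exact h3⟩
  have hcp : heapLT cs ω c p :=
    Relation.TransGen.single ⟨h1, fun h => h3 h.symm⟩
  exact hqc.trans hcp

/-- The invariant maintained by the toggles: the set is an ideal differing from `I` by at
most one labeled element. -/
def TogInv (cs : CoxeterSystem M W) (ω : List B) (k : B) (I J : Finset (Fin ω.length)) :
    Prop :=
  HeapIdeal cs ω J ∧ (J = I ∨
    (∃ p, ω.get p = k ∧ p ∉ I ∧ J = insert p I) ∨
    (∃ p, ω.get p = k ∧ p ∈ I ∧ J = I.erase p))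

lemma togInv_step (cs : CoxeterSystem M W) {ω : List B} (hred : cs.IsReduced ω) {k : B}
    {I : Finset (Fin ω.length)} (hI : HeapIdeal cs ω I)
    {q : Fin ω.length} (hq : ω.get q = k) {J : Finset (Fin ω.length)}
    (hJ : TogInv cs ω k I J) : TogInv cs ω k I (rtoggle (heapLT cs ω) q J) := by
  obtain ⟨hJideal, hJcase⟩ := hJ
  unfold rtoggle
  split_ifs with h1 h2
  · -- erase branch
    obtain ⟨hqJ, hqmax⟩ := h1
    constructor
    · intro x y hy hxy
      rw [Finset.mem_erase] at hy ⊢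
      refine ⟨?_, hJideal hy.2 hxy⟩
      rintro rfl
      exact hqmax y hy.2 hxy
    · rcases hJcase with rfl | ⟨p, hpk, hpI, rfl⟩ | ⟨p, hpk, hpI, rfl⟩
      · exact Or.inr (Or.inr ⟨q, hq, hqJ, rfl⟩)
      · by_cases hpq : q = p
        · subst hpq
          exact Or.inl (Finset.erase_insert hpI)
        · have hqI : q ∈ I := by
            rcases Finset.mem_insert.mp hqJ with h | h
            · exact absurd h hpq
            · exact h
          have hvne : p.val ≠ q.val := fun h => hpq (Fin.ext h.symm)
          rcases lt_or_gt_of_ne hvne with hlt | hlt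
          · exact absurd (heapLT_of_same_label cs hred (hpk.trans hq.symm) hlt)
              (hqmax p (Finset.mem_insert_self p I))
          · exact absurd (hI hqI (heapLT_of_same_label cs hred (hq.trans hpk.symm) hlt))
              hpI
      · exfalso
        rw [Finset.mem_erase] at hqJ
        obtain ⟨hqp, hqI⟩ := hqJ
        have hvne : p.val ≠ q.val := fun h => hqp (Fin.ext h.symm)
        rcases lt_or_gt_of_ne hvne with hlt | hlt
        · -- p earlier: between p and q
          obtain ⟨c, hc1, hc2, hc3⟩ := heap_exists_between cs hred (hpk.trans hq.symm) hlt
          have hqc : heapLT cs ω q c :=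
            Relation.TransGen.single ⟨hc2, by
              rw [hq, ← hpk]; exact hc3⟩
          have hcp : heapLT cs ω c p := Relation.TransGen.single ⟨hc1, fun h => hc3 h.symm⟩
          have hcI : c ∈ I := hI hpI hcp
          have hcJ : c ∈ I.erase p :=
            Finset.mem_erase.mpr ⟨fun h => absurd (h ▸ hc1) (lt_irrefl _), hcI⟩
          exact hqmax c hcJ hqc
        · -- q earlier: heapLT p q, but J ideal misses p
          exact (Finset.notMem_erase p I) (hJideal (Finset.mem_erase.mpr ⟨hqp, hqI⟩)
            (heapLT_of_same_label cs hred (hq.trans hpk.symm) hlt))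
  · -- insert branch
    obtain ⟨hqJ, hqins⟩ := h2
    constructor
    · intro x y hy hxy
      exact hqins hy hxy
    · rcases hJcase with rfl | ⟨p, hpk, hpI, rfl⟩ | ⟨p, hpk, hpI, rfl⟩
      · exact Or.inr (Or.inl ⟨q, hq, hqJ, rfl⟩)
      · exfalso
        have hpq : q ≠ p := fun h => hqJ (h ▸ Finset.mem_insert_self p I)
        have hvne : p.val ≠ q.val := fun h => hpq (Fin.ext h.symm)
        rcases lt_or_gt_of_ne hvne with hlt | hlt
        · -- p earlier: heapLT q p, J ideal contains p ⇒ q ∈ J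
          exact hqJ (hJideal (Finset.mem_insert_self p I)
            (heapLT_of_same_label cs hred (hpk.trans hq.symm) hlt))
        · -- q earlier: between q and p
          obtain ⟨c, hc1, hc2, hc3⟩ := heap_exists_between cs hred (hq.trans hpk.symm) hlt
          have hcq : heapLT cs ω c q := Relation.TransGen.single ⟨hc1, fun h => hc3 h.symm⟩
          have hpc : heapLT cs ω p c :=
            Relation.TransGen.single ⟨hc2, by rw [hpk, ← hq]; exact hc3⟩
          have hcins : c ∈ insert q (insert p I) :=
            hqins (Finset.mem_insert_self q _) hcq
          have hcne_q : c ≠ q := fun h => absurd (h ▸ hc1) (lt_irrefl _)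
          have hcne_p : c ≠ p := fun h => absurd (h ▸ hc2) (lt_irrefl _)
          have hcI : c ∈ I := by
            rcases Finset.mem_insert.mp hcins with h | h
            · exact absurd h hcne_q
            · rcases Finset.mem_insert.mp h with h' | h'
              · exact absurd h' hcne_p
              · exact h'
          exact hpI (hI hcI hpc)
      · by_cases hpq : q = p
        · subst hpq
          exact Or.inl (Finset.insert_erase hpI)
        · exfalso
          have hqI : q ∉ I := fun h => hqJ (Finset.mem_erase.mpr ⟨hpq, h⟩)
          have hvne : p.val ≠ q.val := fun h => hpq (Fin.ext h.symm)
          rcases lt_or_gt_of_ne hvne with hlt | hlt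
          · -- p earlier: heapLT q p, p ∈ I ideal ⇒ q ∈ I
            exact hqI (hI hpI (heapLT_of_same_label cs hred (hpk.trans hq.symm) hlt))
          · -- q earlier: heapLT p q, insert q J ideal ⇒ p ∈ insert q J
            have hpmem : p ∈ insert q (I.erase p) :=
              hqins (Finset.mem_insert_self q _)
                (heapLT_of_same_label cs hred (hq.trans hpk.symm) hlt)
            rcases Finset.mem_insert.mp hpmem with h | h
            · exact hpq h.symm
            · exact (Finset.notMem_erase p I) h
  · exact ⟨hJideal, hJcase⟩

lemma togInv_foldr (cs : CoxeterSystem M W) {ω : List B} (hred : cs.IsReduced ω) {k : B}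
    {I : Finset (Fin ω.length)} (hI : HeapIdeal cs ω I)
    (L : List (Fin ω.length)) (hL : ∀ j ∈ L, ω.get j = k) {J : Finset (Fin ω.length)}
    (hJ : TogInv cs ω k I J) : TogInv cs ω k I (L.foldr (rtoggle (heapLT cs ω)) J) := by
  induction L with
  | nil => exact hJ
  | cons h t ih =>
    exact togInv_step cs hred hI (hL h List.mem_cons_self)
      (ih fun j hj => hL j (List.mem_cons_of_mem h hj))

end Aux

open Heap in
/-- Applying, in any order, the toggles at all heap elements labeled by a fixed generator
`s_k` to an order ideal of the heap changes the ideal in at most one element. -/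
theorem toggles_of_label_class_change_at_most_one
    {B : Type*} {W : Type*} [Group W] {M : CoxeterMatrix B}
    (cs : CoxeterSystem M W) (ω : List B)
    (hred : cs.IsReduced ω) (hfc : FullyCommutative cs (cs.wordProd ω))
    (k : B) (I : Finset (Fin ω.length)) (hI : HeapIdeal cs ω I)
    (L : List (Fin ω.length)) (hLnd : L.Nodup)
    (hLmem : ∀ j : Fin ω.length, j ∈ L ↔ ω.get j = k) :
    ((L.foldr (rtoggle (heapLT cs ω)) I \ I) ∪ (I \ L.foldr (rtoggle (heapLT cs ω)) I)).card
      ≤ 1 := by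
  have hinv : TogInv cs ω k I (L.foldr (rtoggle (heapLT cs ω)) I) :=
    togInv_foldr cs hred hI L (fun j hj => (hLmem j).mp hj) ⟨hI, Or.inl rfl⟩
  set F := L.foldr (rtoggle (heapLT cs ω)) I with hF
  rcases hinv.2 with hFe | ⟨p, _, hpI, hFe⟩ | ⟨p, _, hpI, hFe⟩
  · rw [hFe]
    simp
  · have hsub : (F \ I ∪ I \ F) ⊆ {p} := by
      intro x hx
      rw [Finset.mem_union, Finset.mem_sdiff, Finset.mem_sdiff, hFe] at hx
      rw [Finset.mem_singleton]
      rcases hx with ⟨hx1, hx2⟩ | ⟨hx1, hx2⟩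
      · rcases Finset.mem_insert.mp hx1 with h | h
        · exact h
        · exact absurd h hx2
      · exact absurd (Finset.mem_insert_of_mem hx1) hx2
    calc (F \ I ∪ I \ F).card ≤ ({p} : Finset (Fin ω.length)).card :=
          Finset.card_le_card hsub
      _ = 1 := Finset.card_singleton p
  · have hsub : (F \ I ∪ I \ F) ⊆ {p} := by
      intro x hx
      rw [Finset.mem_union, Finset.mem_sdiff, Finset.mem_sdiff, hFe] at hx
      rw [Finset.mem_singleton]
      rcases hx with ⟨hx1, hx2⟩ | ⟨hx1, hx2⟩
      · exact absurd (Finset.mem_of_mem_erase hx1) hx2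
      · by_contra hne
        exact hx2 (Finset.mem_erase.mpr ⟨hne, hx1⟩)
    calc (F \ I ∪ I \ F).card ≤ ({p} : Finset (Fin ω.length)).card :=
          Finset.card_le_card hsub
      _ = 1 := Finset.card_singleton p
end

section
/- Let (W, S) be a Coxeter system, let w ∈ W be fully commutative with reduced word s_{i_1} ⋯ s_{i_ℓ} and heap P_w, let φ : J(P_w) → {x ∈ W : x ≤_L w} be the bijection reading an order ideal as a word, let I be an order ideal of P_w with u = φ(I), and fix a generator s_k. Then there exists a maximal element p₀ of I whose label is s_k if and only if ℓ(s_k u) < ℓ(u); and in that case φ(I ∖ {p₀}) = s_k u. -/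
namespace HeapAux

open Heap List Relation

variable {B : Type*} {W : Type*} [Group W] {M : CoxeterMatrix B} (cs : CoxeterSystem M W)

local prefix:100 "π" => cs.wordProd
local prefix:100 "σs" => cs.simple

lemma commSwap_symm {l₁ l₂ : List B} (h : CommSwap cs l₁ l₂) : CommSwap cs l₂ l₁ := by
  obtain ⟨a, b, x, y, hc, h1, h2⟩ := h
  exact ⟨a, b, y, x, hc.symm, h2, h1⟩

lemma wordProd_commSwap {l₁ l₂ : List B} (h : CommSwap cs l₁ l₂) : π l₁ = π l₂ := by
  obtain ⟨a, b, x, y, hc, h1, h2⟩ := h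
  subst h1 h2
  simp only [cs.wordProd_append, cs.wordProd_cons, ← mul_assoc]
  rw [mul_assoc (cs.wordProd a), hc.eq, ← mul_assoc]

lemma length_commSwap {l₁ l₂ : List B} (h : CommSwap cs l₁ l₂) : l₁.length = l₂.length := by
  obtain ⟨a, b, x, y, _, h1, h2⟩ := h
  subst h1 h2; simp

lemma wordProd_reflTransGen {l₁ l₂ : List B} (h : ReflTransGen (CommSwap cs) l₁ l₂) :
    π l₁ = π l₂ := by
  induction h with
  | refl => rfl
  | tail _ hstep ih => exact ih.trans (wordProd_commSwap cs hstep)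

lemma length_reflTransGen {l₁ l₂ : List B} (h : ReflTransGen (CommSwap cs) l₁ l₂) :
    l₁.length = l₂.length := by
  induction h with
  | refl => rfl
  | tail _ hstep ih => exact ih.trans (length_commSwap cs hstep)

lemma wordProd_cons_of_comm (t : B) (l : List B) (h : ∀ b ∈ l, Commute (σs t) (σs b)) :
    π (t :: l) = π l * σs t := by
  induction l with
  | nil => simp [cs.wordProd_cons]
  | cons b l ih =>
      have hb : Commute (σs t) (σs b) := h b (by simp)
      have ih' := ih (fun b hb => h b (by simp [hb]))
      rw [cs.wordProd_cons t (b :: l), cs.wordProd_cons b l, ← mul_assoc, hb.eq, mul_assoc,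
        ← cs.wordProd_cons t l, ih', ← mul_assoc, ← cs.wordProd_cons b l]

/-- Shoving a letter that commutes with everything after it to the end. -/
lemma wordProd_eraseIdx (l : List B) (i : ℕ) (hi : i < l.length)
    (h : ∀ j (hj : j < l.length), i < j → Commute (σs l[i]) (σs l[j])) :
    π l = π (l.eraseIdx i) * σs l[i] := by
  have hdecomp : l = l.take i ++ l[i] :: l.drop (i + 1) := by
    conv_lhs => rw [← List.take_append_drop i l]
    congr 1
    exact (List.drop_eq_getElem_cons hi).symm ▸ rfl
  have herase : l.eraseIdx i = l.take i ++ l.drop (i + 1) := List.eraseIdx_eq_take_drop_succ l i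
  have hcomm : ∀ b ∈ l.drop (i + 1), Commute (σs l[i]) (σs b) := by
    intro b hb
    obtain ⟨j, hj, rfl⟩ := List.mem_iff_getElem.mp hb
    rw [List.getElem_drop]
    exact h _ (by have := hj; simp [List.length_drop] at this; omega) (by omega)
  calc π l = π (l.take i) * π (l[i] :: l.drop (i + 1)) := by
        conv_lhs => rw [hdecomp]
        rw [cs.wordProd_append]
    _ = π (l.take i) * (π (l.drop (i + 1)) * σs l[i]) := by
        rw [wordProd_cons_of_comm cs _ _ hcomm]
    _ = π (l.eraseIdx i) * σs l[i] := by rw [herase, cs.wordProd_append, mul_assoc]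

lemma heapLT_val {ω : List B} {x y : Fin ω.length} (h : heapLT cs ω x y) : y.val < x.val := by
  induction h with
  | single h => exact h.1
  | tail _ h ih => exact h.1.trans ih

lemma heapLT_of_not_commute {ω : List B} {x y : Fin ω.length} (hv : y.val < x.val)
    (h : ¬ Commute (σs (ω.get x)) (σs (ω.get y))) : heapLT cs ω x y :=
  Relation.TransGen.single ⟨hv, h⟩

/-- Two noncommuting positions are comparable. -/
lemma comm_of_incomparable {ω : List B} {x y : Fin ω.length}
    (h1 : ¬ heapLT cs ω x y) (h2 : ¬ heapLT cs ω y x) :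
    Commute (σs (ω.get x)) (σs (ω.get y)) := by
  by_contra hc
  rcases lt_trichotomy x.val y.val with h | h | h
  · exact h2 (heapLT_of_not_commute cs h (fun hcc => hc hcc.symm))
  · exact hc (by rw [Fin.ext (h : x.val = y.val)])
  · exact h1 (heapLT_of_not_commute cs h hc)

end HeapAux
namespace HeapAux

open Heap List Relation

variable {B : Type*} {W : Type*} [Group W] {M : CoxeterMatrix B} (cs : CoxeterSystem M W)

local prefix:100 "π" => cs.wordProd
local prefix:100 "σs" => cs.simple

/-- The word read off a permutation of the positions of `ω`. -/
def Wd (ω : List B) (ρ : Equiv.Perm (Fin ω.length)) : List B :=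
  List.ofFn (fun a => ω.get (ρ a))

@[simp] lemma length_Wd (ω : List B) (ρ : Equiv.Perm (Fin ω.length)) :
    (Wd ω ρ).length = ω.length := by simp [Wd]

lemma getElem_Wd (ω : List B) (ρ : Equiv.Perm (Fin ω.length)) (j : ℕ)
    (hj : j < (Wd ω ρ).length) :
    (Wd ω ρ)[j] = ω.get (ρ ⟨j, by simpa using hj⟩) := by
  simp [Wd]

lemma getElem_take_Wd (ω : List B) (ρ : Equiv.Perm (Fin ω.length)) (c j : ℕ)
    (hcn : c ≤ ω.length) (hj : j < c) (h : j < ((Wd ω ρ).take c).length) :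
    ((Wd ω ρ).take c)[j] = ω.get (ρ ⟨j, by omega⟩) := by
  rw [List.getElem_take, getElem_Wd]

/-- Peeling off a maximal element of `J`: a new linear extension enumerating `J.erase m`
first, whose word has the same product as the old one after multiplying by the label. -/
lemma exists_peel (ω : List B) {ρ : Equiv.Perm (Fin ω.length)} {J : Finset (Fin ω.length)}
    {c : ℕ} (hρ : IsLinearExtension cs ω ρ) (hen : ∀ a, ρ a ∈ J ↔ a.val < c)
    (hc : c ≤ ω.length) {m : Fin ω.length} (hm : m ∈ J)
    (hmax : ∀ y ∈ J, ¬ heapLT cs ω m y) :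
    ∃ ρ' : Equiv.Perm (Fin ω.length), IsLinearExtension cs ω ρ' ∧
      (∀ a, ρ' a ∈ J.erase m ↔ a.val < c - 1) ∧
      π ((Wd ω ρ).take c) = π ((Wd ω ρ').take (c - 1)) * σs (ω.get m) := by
  set i : Fin ω.length := ρ.symm m with hidef
  have hρi : ρ i = m := ρ.apply_symm_apply m
  have hi : i.val < c := (hen i).1 (by rw [hρi]; exact hm)
  have hcpos : 0 < c := by omega
  have hc1n : c - 1 < ω.length := by omega
  -- the cycle
  set f : Fin ω.length → Fin ω.length := fun a =>
    if a.val = c - 1 then i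
    else if h2 : i.val ≤ a.val ∧ a.val < c - 1 then ⟨a.val + 1, by omega⟩
    else a with hf
  have hfval : ∀ a : Fin ω.length, (f a).val =
      if a.val = c - 1 then i.val
      else if i.val ≤ a.val ∧ a.val < c - 1 then a.val + 1 else a.val := by
    intro a
    rw [hf]
    dsimp only
    split_ifs <;> rfl
  have hinj : Function.Injective f := by
    intro a b hab
    have hab' : (f a).val = (f b).val := by rw [hab]
    rw [hfval, hfval] at hab'
    have ha := a.isLt
    have hb := b.isLt
    apply Fin.ext
    split_ifs at hab' <;> omega
  have hbij : Function.Bijective f := Finite.injective_iff_bijective.mp hinj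
  set cy : Equiv.Perm (Fin ω.length) := Equiv.ofBijective f hbij with hcy
  set ρ' : Equiv.Perm (Fin ω.length) := cy.trans ρ with hρ'def
  have hρ'app : ∀ a, ρ' a = ρ (f a) := fun a => rfl
  refine ⟨ρ', ?_, ?_, ?_⟩
  · -- linear extension
    intro x y h
    rw [hρ'app, hρ'app] at h
    have hxy : f x < f y := hρ _ _ h
    have hxyv : (f x).val < (f y).val := hxy
    rw [hfval, hfval] at hxyv
    rw [Fin.lt_def]
    by_cases hx : x.val = c - 1
    · -- needs maximality
      have hfx : f x = i := by rw [hf]; simp [hx]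
      rw [hfx, hρi] at h
      by_cases hy : y.val = c - 1
      · exfalso
        have : x = y := Fin.ext (by omega)
        rw [this] at hxyv
        simp at hxyv
      · by_cases hy2 : (f y).val < c
        · exfalso
          exact hmax _ ((hen (f y)).2 hy2) h
        · rw [hfval] at hy2
          split_ifs at hxyv hy2 <;> omega
    · split_ifs at hxyv <;> omega
  · -- enumeration
    intro a
    rw [hρ'app, Finset.mem_erase]
    have hmem : ρ (f a) ∈ J ↔ (f a).val < c := hen (f a)
    have hne : ρ (f a) = m ↔ f a = i := by
      rw [hidef, Equiv.eq_symm_apply]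
    have hfa := hfval a
    have ha := a.isLt
    constructor
    · rintro ⟨h1, h2⟩
      rw [hmem] at h2
      have h1' : (f a).val ≠ i.val := fun hv => h1 (hne.mpr (Fin.ext hv))
      split_ifs at hfa <;> omega
    · intro h
      have h1 : (f a).val ≠ i.val := by split_ifs at hfa <;> omega
      have h2 : (f a).val < c := by split_ifs at hfa <;> omega
      exact ⟨fun he => h1 (congrArg Fin.val (hne.mp he)), hmem.mpr h2⟩
  · -- word product equation
    set l : List B := (Wd ω ρ).take c with hl
    have hllen : l.length = c := by simp [hl, hc]
    have hiv : i.val < l.length := by omega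
    have hli : l[i.val] = ω.get m := by
      simp only [hl, List.getElem_take, getElem_Wd]
      rw [← hρi]
    have hcomm : ∀ j (hj : j < l.length), i.val < j →
        Commute (σs l[i.val]) (σs l[j]) := by
      intro j hj hij
      have hjc : j < c := by omega
      have hlj : l[j] = ω.get (ρ ⟨j, by omega⟩) := by
        simp only [hl, List.getElem_take, getElem_Wd]
      rw [hli, hlj]
      have hjJ : ρ ⟨j, by omega⟩ ∈ J := (hen _).2 hjc
      apply comm_of_incomparable cs
      · exact hmax _ hjJ
      · intro hlt
        have hlt' : heapLT cs ω (ρ ⟨j, by omega⟩) (ρ i) := by rw [hρi]; exact hlt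
        have := hρ _ _ hlt'
        rw [Fin.lt_def] at this
        simp only at this
        omega
    have hmain := wordProd_eraseIdx cs l i.val hiv (fun j hj hij => hcomm j hj hij)
    rw [hli] at hmain
    rw [hmain]
    congr 2
    -- l.eraseIdx i.val = (Wd ω ρ').take (c-1)
    apply List.ext_getElem
    · have hlen1 : (l.eraseIdx i.val).length + 1 = l.length := List.length_eraseIdx_add_one hiv
      simp only [List.length_take, length_Wd]
      omega
    · intro j h1 h2
      have hj1 : j < c - 1 := by
        have := List.length_eraseIdx_add_one (show i.val < l.length by omega)
        omega
      simp only [List.getElem_take, getElem_Wd, hρ'app]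
      by_cases hji : j < i.val
      · rw [List.getElem_eraseIdx_of_lt h1 hji]
        simp only [hl, List.getElem_take, getElem_Wd]
        congr 2
        apply Fin.ext
        rw [hfval]
        simp only [Fin.val_mk]
        split_ifs <;> omega
      · rw [List.getElem_eraseIdx_of_ge h1 (by omega)]
        simp only [hl, List.getElem_take, getElem_Wd]
        congr 2
        apply Fin.ext
        rw [hfval]
        simp only [Fin.val_mk]
        split_ifs <;> omega

/-- The product of the first `c` letters is the same for any two linear extensions
enumerating the same set first. -/
lemma prod_take_eq (ω : List B) : ∀ (c : ℕ), c ≤ ω.length →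
    ∀ (J : Finset (Fin ω.length)) (ρ σ : Equiv.Perm (Fin ω.length)),
    IsLinearExtension cs ω ρ → IsLinearExtension cs ω σ →
    (∀ a, ρ a ∈ J ↔ a.val < c) → (∀ a, σ a ∈ J ↔ a.val < c) →
    π ((Wd ω ρ).take c) = π ((Wd ω σ).take c) := by
  intro c
  induction c with
  | zero => intro _ J ρ σ _ _ _ _; simp
  | succ c ih =>
    intro hc J ρ σ hρ hσ henρ henσ
    have hcn : c < ω.length := by omega
    set m : Fin ω.length := σ ⟨c, hcn⟩ with hm
    have hmJ : m ∈ J := (henσ ⟨c, hcn⟩).2 (by simp)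
    have hmax : ∀ y ∈ J, ¬ heapLT cs ω m y := by
      intro y hy hlt
      have hy' : y = σ (σ.symm y) := (σ.apply_symm_apply y).symm
      rw [hy'] at hlt
      have h1 := hσ _ _ hlt
      have h2 := (henσ (σ.symm y)).1 (by rw [← hy']; exact hy)
      rw [Fin.lt_def] at h1
      simp only at h1
      omega
    obtain ⟨ρ', hρ', hen', hπ⟩ := exists_peel cs ω hρ henρ hc hmJ hmax
    simp only [Nat.add_sub_cancel] at hen' hπ
    have henσ' : ∀ a, σ a ∈ J.erase m ↔ a.val < c := by
      intro a
      rw [Finset.mem_erase]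
      constructor
      · rintro ⟨h1, h2⟩
        have := (henσ a).1 h2
        have hne : a ≠ ⟨c, hcn⟩ := fun he => h1 (by rw [he])
        have : a.val ≠ c := fun hv => hne (Fin.ext hv)
        omega
      · intro h
        refine ⟨fun he => ?_, (henσ a).2 (by omega)⟩
        have := σ.injective he
        have : a.val = c := congrArg Fin.val this
        omega
    have hrec := ih (by omega) (J.erase m) ρ' σ hρ' hσ hen' henσ'
    have hσtake : π ((Wd ω σ).take (c + 1)) = π ((Wd ω σ).take c) * σs (ω.get m) := by
      have hcl : c < (Wd ω σ).length := by simpa using hcn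
      have := List.take_concat_get hcl
      rw [← this, List.concat_eq_append, cs.wordProd_append, cs.wordProd_singleton]
      congr 2
      rw [getElem_Wd]
    rw [hπ, hrec, hσtake]

lemma revPerm_linext (ω : List B) : IsLinearExtension cs ω Fin.revPerm := by
  intro a b h
  have hv := heapLT_val cs h
  simp only [Fin.revPerm_apply, Fin.val_rev] at hv
  have := a.isLt
  have := b.isLt
  rw [Fin.lt_def]
  omega

lemma Wd_revPerm (ω : List B) : Wd ω Fin.revPerm = ω.reverse := by
  apply List.ext_getElem (by simp)
  intro j h1 h2
  rw [getElem_Wd, List.getElem_reverse]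
  simp only [Fin.revPerm_apply, List.get_eq_getElem]
  congr 1
  simp [Fin.val_rev]
  omega

lemma wordProd_Wd (ω : List B) (ρ : Equiv.Perm (Fin ω.length))
    (hρ : IsLinearExtension cs ω ρ) : π (Wd ω ρ) = (π ω)⁻¹ := by
  have h := prod_take_eq cs ω ω.length le_rfl Finset.univ ρ Fin.revPerm hρ
    (revPerm_linext cs ω) (fun a => by simpa using a.isLt) (fun a => by simpa using a.isLt)
  rw [List.take_of_length_le (by simp), List.take_of_length_le (by simp), Wd_revPerm] at h
  rw [h, cs.wordProd_reverse]

end HeapAux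
namespace HeapAux

open Heap List Relation

variable {B : Type*} {W : Type*} [Group W] {M : CoxeterMatrix B} (cs : CoxeterSystem M W)

local prefix:100 "π" => cs.wordProd
local prefix:100 "σs" => cs.simple

lemma lis_getD (N : List B) (j : ℕ) (hj : j < N.length) :
    (cs.leftInvSeq N).getD j 1 = π (N.take j) * σs N[j] * (π (N.take j))⁻¹ := by
  rw [cs.getD_leftInvSeq]
  congr
  rw [List.getElem?_eq_getElem hj]
  rfl

lemma simple_conj_comm {x y : B} (h : Commute (σs x) (σs y)) :
    σs y * σs x * σs y = σs x := by
  rw [h.symm.eq, mul_assoc, cs.simple_mul_simple_self, mul_one]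

section ListHelpers

variable {α : Type*}

lemma getElem_mid0 (al bl : List α) (x y : α) (h : al.length < (al ++ x :: y :: bl).length) :
    (al ++ x :: y :: bl)[al.length] = x := by
  rw [List.getElem_append_right (le_refl al.length)]
  simp

lemma getElem_mid1 (al bl : List α) (x y : α) (h : al.length + 1 < (al ++ x :: y :: bl).length) :
    (al ++ x :: y :: bl)[al.length + 1] = y := by
  rw [List.getElem_append_right (by omega)]
  simp

lemma getElem_midhi (al bl : List α) (x y : α) (i : ℕ) (hi : al.length + 2 ≤ i)
    (h : i < (al ++ x :: y :: bl).length)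
    (h' : i - al.length - 2 < bl.length) :
    (al ++ x :: y :: bl)[i] = bl[i - al.length - 2] := by
  rw [List.getElem_append_right (by omega)]
  have h2 : i - al.length = (i - al.length - 2) + 2 := by omega
  rw [getElem_congr_idx h2]
  simp

lemma take_mid1 (al bl : List α) (x y : α) :
    (al ++ x :: y :: bl).take (al.length + 1) = al ++ [x] := by
  rw [List.take_append]
  simp

lemma take_midhi (al bl : List α) (x y : α) (i : ℕ) (hi : al.length + 2 ≤ i) :
    (al ++ x :: y :: bl).take i = al ++ x :: y :: bl.take (i - al.length - 2) := by
  rw [List.take_append]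
  have h2 : i - al.length = (i - al.length - 2) + 2 := by omega
  rw [List.take_of_length_le (by omega), h2]
  simp

lemma take_lo (al l : List α) (i : ℕ) (hi : i ≤ al.length) :
    (al ++ l).take i = al.take i := by
  rw [List.take_append, Nat.sub_eq_zero_of_le hi]
  simp

end ListHelpers

/-- There is an occurrence of `k` preceded only by letters commuting with `s k`. -/
def GoodWord (k : B) (N : List B) : Prop :=
  ∃ (i : ℕ) (h : i < N.length), N[i] = k ∧
    ∀ b ∈ N.take i, Commute (cs.simple k) (cs.simple b)

lemma goodWord_commSwap {k : B} {N N' : List B} (h : CommSwap cs N N')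
    (hg : GoodWord cs k N) : GoodWord cs k N' := by
  obtain ⟨al, bl, zx, zy, hzc, rfl, rfl⟩ := h
  obtain ⟨i, hi, hik, hcomm⟩ := hg
  have hlen : (al ++ zx :: zy :: bl).length = al.length + 2 + bl.length := by simp; omega
  have hlen' : (al ++ zy :: zx :: bl).length = al.length + 2 + bl.length := by simp; omega
  rcases lt_trichotomy i al.length with hiq | hiq | hiq
  · -- i < al.length
    refine ⟨i, by omega, ?_, ?_⟩
    · rw [List.getElem_append_left (by omega)]
      rwa [List.getElem_append_left (by omega)] at hik
    · intro b hb
      rw [take_lo _ _ _ (by omega)] at hb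
      apply hcomm
      rw [take_lo _ _ _ (by omega)]
      exact hb
  · -- i = al.length : the letter is zx
    subst hiq
    have hxk : zx = k := by rw [getElem_mid0 al bl zx zy hi] at hik; exact hik
    refine ⟨al.length + 1, by omega, ?_, ?_⟩
    · rw [getElem_mid1 al bl zy zx (by omega)]
      exact hxk
    · intro b hb
      rw [take_mid1 al bl zy zx] at hb
      rw [List.mem_append] at hb
      rcases hb with hb | hb
      · apply hcomm
        rw [take_lo _ _ _ (le_refl _), List.take_length]
        exact hb
      · have hbz : b = zy := by simpa using hb
        subst hbz
        rw [← hxk]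
        exact hzc
  · rcases Nat.eq_or_lt_of_le (by omega : al.length + 1 ≤ i) with hiq1 | hiq1
    · -- i = al.length + 1 : the letter is zy
      subst hiq1
      have hyk : zy = k := by
        rw [getElem_mid1 al bl zx zy hi] at hik
        exact hik
      refine ⟨al.length, by omega, ?_, ?_⟩
      · rw [getElem_mid0 al bl zy zx (by omega)]
        exact hyk
      · intro b hb
        rw [take_lo _ _ _ (le_refl _), List.take_length] at hb
        apply hcomm
        rw [take_mid1 al bl zx zy, List.mem_append]
        exact Or.inl hb
    · -- i > al.length + 1
      have hi2 : al.length + 2 ≤ i := by omega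
      have hbl : i - al.length - 2 < bl.length := by omega
      refine ⟨i, by omega, ?_, ?_⟩
      · rw [getElem_midhi al bl zy zx i hi2 (by omega) hbl]
        rw [getElem_midhi al bl zx zy i hi2 (by omega) hbl] at hik
        exact hik
      · intro b hb
        rw [take_midhi al bl zy zx i hi2] at hb
        apply hcomm
        rw [take_midhi al bl zx zy i hi2]
        simp only [List.mem_append, List.mem_cons] at hb ⊢
        tauto

lemma goodWord_reflTransGen {k : B} {N N' : List B}
    (h : ReflTransGen (CommSwap cs) N N') (hg : GoodWord cs k N) : GoodWord cs k N' := by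
  induction h with
  | refl => exact hg
  | tail _ hstep ih => exact goodWord_commSwap cs hstep ih

end HeapAux
namespace HeapAux

open Heap List Relation

variable {B : Type*} {W : Type*} [Group W] {M : CoxeterMatrix B} (cs : CoxeterSystem M W)

local prefix:100 "π" => cs.wordProd
local prefix:100 "σs" => cs.simple

/-- Invariant tracking a letter `t` along a path of commutation swaps: there is a
position whose left inversion is `s t` and whose deletion gives a word reachable
from `b₁` by commutation swaps. -/
def TrackInv (t : B) (b₁ : List B) (N : List B) : Prop :=
  ∃ p : ℕ, p < N.length ∧ (cs.leftInvSeq N).getD p 1 = cs.simple t ∧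
    ReflTransGen (CommSwap cs) b₁ (N.eraseIdx p)

lemma trackInv_commSwap {t : B} {b₁ N N' : List B} (h : CommSwap cs N N')
    (hg : TrackInv cs t b₁ N) : TrackInv cs t b₁ N' := by
  obtain ⟨al, bl, zx, zy, hzc, rfl, rfl⟩ := h
  obtain ⟨p, hp, hlis, hpath⟩ := hg
  have hlen : (al ++ zx :: zy :: bl).length = al.length + 2 + bl.length := by simp; omega
  have hlen' : (al ++ zy :: zx :: bl).length = al.length + 2 + bl.length := by simp; omega
  rcases lt_trichotomy p al.length with hpq | hpq | hpq
  · -- p < al.length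
    refine ⟨p, by omega, ?_, ?_⟩
    · rw [lis_getD cs _ p (by omega)] at hlis ⊢
      rw [take_lo _ _ _ (by omega), List.getElem_append_left (by omega)] at hlis ⊢
      exact hlis
    · refine hpath.tail ?_
      rw [List.eraseIdx_append_of_lt_length hpq, List.eraseIdx_append_of_lt_length hpq]
      exact ⟨al.eraseIdx p, bl, zx, zy, hzc, rfl, rfl⟩
  · -- p = al.length : tracked letter is zx, moves to al.length + 1
    subst hpq
    refine ⟨al.length + 1, by omega, ?_, ?_⟩
    · rw [lis_getD cs _ _ (by omega)] at hlis
      rw [lis_getD cs _ _ (by omega)]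
      rw [take_lo _ _ _ (le_refl _), List.take_length,
        getElem_mid0 al bl zx zy (by omega)] at hlis
      rw [take_mid1 al bl zy zx, getElem_mid1 al bl zy zx (by omega)]
      rw [cs.wordProd_append, cs.wordProd_singleton, mul_inv_rev, cs.inv_simple]
      calc π al * σs zy * σs zx * (σs zy * (π al)⁻¹)
          = π al * (σs zy * σs zx * σs zy) * (π al)⁻¹ := by group
        _ = π al * σs zx * (π al)⁻¹ := by rw [simple_conj_comm cs hzc]
        _ = σs t := hlis
    · have e1 : (al ++ zx :: zy :: bl).eraseIdx al.length = al ++ zy :: bl := by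
        rw [List.eraseIdx_append_of_length_le (le_refl _)]
        simp
      have e2 : (al ++ zy :: zx :: bl).eraseIdx (al.length + 1) = al ++ zy :: bl := by
        rw [List.eraseIdx_append_of_length_le (by omega)]
        have : al.length + 1 - al.length = 1 := by omega
        rw [this]
        simp
      rw [e2, ← e1]
      exact hpath
  · rcases Nat.eq_or_lt_of_le (by omega : al.length + 1 ≤ p) with hpq1 | hpq1
    · -- p = al.length + 1 : tracked letter is zy, moves to al.length
      subst hpq1
      refine ⟨al.length, by omega, ?_, ?_⟩
      · rw [lis_getD cs _ _ (by omega)] at hlis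
        rw [lis_getD cs _ _ (by omega)]
        rw [take_mid1 al bl zx zy, getElem_mid1 al bl zx zy (by omega)] at hlis
        rw [take_lo _ _ _ (le_refl _), List.take_length,
          getElem_mid0 al bl zy zx (by omega)]
        rw [cs.wordProd_append, cs.wordProd_singleton, mul_inv_rev, cs.inv_simple] at hlis
        calc π al * σs zy * (π al)⁻¹
            = π al * (σs zx * σs zy * σs zx) * (π al)⁻¹ := by
              rw [simple_conj_comm cs hzc.symm]
          _ = π al * σs zx * σs zy * (σs zx * (π al)⁻¹) := by group
          _ = σs t := hlis
      · have e1 : (al ++ zx :: zy :: bl).eraseIdx (al.length + 1) = al ++ zx :: bl := by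
          rw [List.eraseIdx_append_of_length_le (by omega)]
          have : al.length + 1 - al.length = 1 := by omega
          rw [this]
          simp
        have e2 : (al ++ zy :: zx :: bl).eraseIdx al.length = al ++ zx :: bl := by
          rw [List.eraseIdx_append_of_length_le (le_refl _)]
          simp
        rw [e2, ← e1]
        exact hpath
    · -- p > al.length + 1
      have hp2 : al.length + 2 ≤ p := by omega
      have hbl : p - al.length - 2 < bl.length := by omega
      refine ⟨p, by omega, ?_, ?_⟩
      · rw [lis_getD cs _ _ (by omega)] at hlis
        rw [lis_getD cs _ _ (by omega)]
        rw [take_midhi al bl zx zy p hp2, getElem_midhi al bl zx zy p hp2 (by omega) hbl]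
          at hlis
        rw [take_midhi al bl zy zx p hp2, getElem_midhi al bl zy zx p hp2 (by omega) hbl]
        have hprod : π (al ++ zy :: zx :: bl.take (p - al.length - 2))
            = π (al ++ zx :: zy :: bl.take (p - al.length - 2)) :=
          (wordProd_commSwap cs ⟨al, bl.take (p - al.length - 2), zx, zy, hzc, rfl, rfl⟩).symm
        rw [hprod]
        exact hlis
      · refine hpath.tail ?_
        have e1 : (al ++ zx :: zy :: bl).eraseIdx p
            = al ++ zx :: zy :: bl.eraseIdx (p - al.length - 2) := by
          rw [List.eraseIdx_append_of_length_le (by omega)]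
          have : p - al.length = (p - al.length - 2) + 2 := by omega
          rw [this]
          simp
        have e2 : (al ++ zy :: zx :: bl).eraseIdx p
            = al ++ zy :: zx :: bl.eraseIdx (p - al.length - 2) := by
          rw [List.eraseIdx_append_of_length_le (by omega)]
          have : p - al.length = (p - al.length - 2) + 2 := by omega
          rw [this]
          simp
        rw [e1, e2]
        exact ⟨al, bl.eraseIdx (p - al.length - 2), zx, zy, hzc, rfl, rfl⟩

lemma trackInv_reflTransGen {t : B} {b₁ N N' : List B}
    (h : ReflTransGen (CommSwap cs) N N') (hg : TrackInv cs t b₁ N) : TrackInv cs t b₁ N' := by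
  induction h with
  | refl => exact hg
  | tail _ hstep ih => exact trackInv_commSwap cs hstep ih

/-- One-step heredity: a full commutative element stays fully commutative after removing
an initial letter of a reduced word. -/
lemma fullyCommutative_of_cons {x : B} {α : List B} (hr : cs.IsReduced (x :: α))
    (h : FullyCommutative cs (π (x :: α))) : FullyCommutative cs (π α) := by
  have hα : cs.IsReduced α := by
    have := hr.drop 1
    simpa using this
  intro b₁ b₂ hb₁ hb₂
  have hlen1 : b₁.length = α.length := by
    rw [← hb₁.2, hb₁.1, hα]
  have hlen2 : b₂.length = α.length := by
    rw [← hb₂.2, hb₂.1, hα]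
  have hx1 : IsReducedWordFor cs (π (x :: α)) (x :: b₁) := by
    constructor
    · rw [cs.wordProd_cons, cs.wordProd_cons, hb₁.1]
    · show cs.length (π (x :: b₁)) = (x :: b₁).length
      rw [cs.wordProd_cons, hb₁.1, ← cs.wordProd_cons]
      rw [hr]
      simp [hlen1]
  have hx2 : IsReducedWordFor cs (π (x :: α)) (x :: b₂) := by
    constructor
    · rw [cs.wordProd_cons, cs.wordProd_cons, hb₂.1]
    · show cs.length (π (x :: b₂)) = (x :: b₂).length
      rw [cs.wordProd_cons, hb₂.1, ← cs.wordProd_cons]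
      rw [hr]
      simp [hlen2]
  have hpath := h _ _ hx1 hx2
  have hbase : TrackInv cs x b₁ (x :: b₁) := by
    refine ⟨0, by simp, ?_, ?_⟩
    · rw [lis_getD cs _ 0 (by simp)]
      simp
    · show ReflTransGen (CommSwap cs) b₁ ((x :: b₁).eraseIdx 0)
      exact ReflTransGen.refl
  have hfin := trackInv_reflTransGen cs hpath hbase
  obtain ⟨p, hp, hlis, hΓ⟩ := hfin
  have hred2 : cs.IsReduced (x :: b₂) := hx2.2
  have hnodup := hred2.nodup_leftInvSeq
  have hlis0 : (cs.leftInvSeq (x :: b₂)).getD 0 1 = σs x := by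
    rw [lis_getD cs _ 0 (by simp)]
    simp
  have hp0 : p = 0 := by
    have hl : (cs.leftInvSeq (x :: b₂)).length = (x :: b₂).length := by
      simp [CoxeterSystem.length_leftInvSeq]
    have h1 : (cs.leftInvSeq (x :: b₂))[p]'(by omega) = (cs.leftInvSeq (x :: b₂))[0]'(by omega) := by
      rw [← List.getD_eq_getElem _ 1 (by omega), ← List.getD_eq_getElem _ 1 (by omega),
        hlis, hlis0]
    exact (hnodup.getElem_inj_iff).mp h1
  subst hp0
  simpa using hΓ

/-- Heredity of full commutativity along suffixes of a reduced word. -/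
lemma fullyCommutative_of_append (D : List B) : ∀ a : List B, cs.IsReduced (D ++ a) →
    FullyCommutative cs (π (D ++ a)) → FullyCommutative cs (π a) := by
  induction D with
  | nil => intro a _ h; simpa using h
  | cons x D ih =>
    intro a hr h
    apply ih
    · have := hr.drop 1
      simpa using this
    · exact fullyCommutative_of_cons cs (by simpa using hr) (by simpa using h)

end HeapAux
open Heap in
/-- For an order ideal `I` of the heap of a fully commutative element `w` with
`u = φ(I)`, there is a maximal element `p₀` of `I` labeled `s_k` iff
`ℓ(s_k u) < ℓ(u)`; in that case `φ(I ∖ {p₀}) = s_k u`. -/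
theorem phiWord_erase_of_maximal_label
    {B : Type*} {W : Type*} [Group W] {M : CoxeterMatrix B}
    (cs : CoxeterSystem M W) (ω : List B)
    (hred : cs.IsReduced ω) (hfc : FullyCommutative cs (cs.wordProd ω))
    (k : B) (I : Finset (Fin ω.length)) (hI : HeapIdeal cs ω I)
    (ρ : Equiv.Perm (Fin ω.length)) (hρ : IsLinearExtension cs ω ρ)
    (hen : EnumeratesFirst ω ρ I) :
    ((∃ p₀ ∈ I, ω.get p₀ = k ∧ ∀ y ∈ I, ¬ heapLT cs ω p₀ y) ↔
        cs.length (cs.simple k * phiWord cs ω ρ I) < cs.length (phiWord cs ω ρ I)) ∧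
    (∀ p₀ ∈ I, ω.get p₀ = k → (∀ y ∈ I, ¬ heapLT cs ω p₀ y) →
      ∀ σ : Equiv.Perm (Fin ω.length), IsLinearExtension cs ω σ →
        EnumeratesFirst ω σ (I.erase p₀) →
        phiWord cs ω σ (I.erase p₀) = cs.simple k * phiWord cs ω ρ I) := by
  classical
  have hc : I.card ≤ ω.length := by
    have := Finset.card_le_univ I
    simpa using this
  have hL : cs.wordProd (HeapAux.Wd ω ρ) = (cs.wordProd ω)⁻¹ := HeapAux.wordProd_Wd cs ω ρ hρ
  have hLlen : (HeapAux.Wd ω ρ).length = ω.length := by simp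
  have hu : phiWord cs ω ρ I = cs.wordProd (((HeapAux.Wd ω ρ).take I.card).reverse) := rfl
  have hLrev : (HeapAux.Wd ω ρ).reverse
      = ((HeapAux.Wd ω ρ).drop I.card).reverse ++ ((HeapAux.Wd ω ρ).take I.card).reverse := by
    rw [← List.reverse_append, List.take_append_drop]
  have hπLrev : cs.wordProd (HeapAux.Wd ω ρ).reverse = cs.wordProd ω := by
    rw [cs.wordProd_reverse, hL, inv_inv]
  have hredLrev : cs.IsReduced (HeapAux.Wd ω ρ).reverse := by
    show cs.length _ = _
    rw [hπLrev, List.length_reverse, hLlen]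
    exact hred
  have hredarev : cs.IsReduced (((HeapAux.Wd ω ρ).take I.card).reverse) := by
    rw [hLrev] at hredLrev
    have := hredLrev.drop (((HeapAux.Wd ω ρ).drop I.card).reverse).length
    rwa [List.drop_left] at this
  have harevlen : (((HeapAux.Wd ω ρ).take I.card).reverse).length = I.card := by
    simp [hc]
  have hℓu : cs.length (phiWord cs ω ρ I) = I.card := by
    rw [hu, hredarev, harevlen]
  -- ### the common peeling construction, given a maximal element labeled k
  have peel : ∀ p₀ ∈ I, ω.get p₀ = k → (∀ y ∈ I, ¬ heapLT cs ω p₀ y) →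
      ∃ ρ' : Equiv.Perm (Fin ω.length), IsLinearExtension cs ω ρ' ∧
        (∀ a, ρ' a ∈ I.erase p₀ ↔ a.val < I.card - 1) ∧
        cs.simple k * phiWord cs ω ρ I
          = (cs.wordProd ((HeapAux.Wd ω ρ').take (I.card - 1)))⁻¹ := by
    intro p₀ hmem hk hmax
    obtain ⟨ρ', h1, h2, h3⟩ := HeapAux.exists_peel cs ω hρ (fun a => hen a) hc hmem hmax
    refine ⟨ρ', h1, h2, ?_⟩
    rw [hk] at h3
    rw [hu, cs.wordProd_reverse, h3, mul_inv_rev, cs.inv_simple, ← mul_assoc,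
      cs.simple_mul_simple_self, one_mul]
  constructor
  · constructor
    · -- forward: maximal element labeled k gives a left descent
      rintro ⟨p₀, hmem, hk, hmax⟩
      obtain ⟨ρ', _, _, h3⟩ := peel p₀ hmem hk hmax
      have hcpos : 0 < I.card := Finset.card_pos.mpr ⟨p₀, hmem⟩
      rw [h3, hℓu]
      calc cs.length (cs.wordProd ((HeapAux.Wd ω ρ').take (I.card - 1)))⁻¹
          = cs.length (cs.wordProd ((HeapAux.Wd ω ρ').take (I.card - 1))) := cs.length_inv _
        _ ≤ ((HeapAux.Wd ω ρ').take (I.card - 1)).length := cs.length_wordProd_le _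
        _ ≤ I.card - 1 := by simp
        _ < I.card := by omega
    · -- backward: a left descent gives a maximal element labeled k
      intro hdesc
      rw [hℓu] at hdesc
      have hcpos : 0 < I.card := by omega
      -- u is fully commutative
      have hufc : FullyCommutative cs (phiWord cs ω ρ I) := by
        have h1 : cs.IsReduced (((HeapAux.Wd ω ρ).drop I.card).reverse
            ++ ((HeapAux.Wd ω ρ).take I.card).reverse) := by rwa [← hLrev]
        have h2 : cs.wordProd (((HeapAux.Wd ω ρ).drop I.card).reverse
            ++ ((HeapAux.Wd ω ρ).take I.card).reverse) = cs.wordProd ω := by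
          rw [← hLrev, hπLrev]
        have h3 := HeapAux.fullyCommutative_of_append cs
          (((HeapAux.Wd ω ρ).drop I.card).reverse)
          (((HeapAux.Wd ω ρ).take I.card).reverse) h1 (by rwa [h2])
        exact h3
      -- a reduced word for u starting with k
      obtain ⟨τ, hτlen, hτπ⟩ := cs.exists_reduced_word (cs.simple k * phiWord cs ω ρ I)
      have hsku : cs.length (cs.simple k * phiWord cs ω ρ I) + 1 = I.card := by
        rcases cs.length_simple_mul (phiWord cs ω ρ I) k with h | h
        · omega
        · rw [hℓu] at h; exact h
      have hkτ : IsReducedWordFor cs (phiWord cs ω ρ I) (k :: τ) := by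
        constructor
        · rw [cs.wordProd_cons, ← hτπ, ← mul_assoc, cs.simple_mul_simple_self, one_mul]
        · show cs.length _ = _
          rw [cs.wordProd_cons, ← hτπ, ← mul_assoc, cs.simple_mul_simple_self, one_mul,
            hℓu]
          simp only [List.length_cons, ← hτlen.eq, ← hτπ]
          omega
      have harev : IsReducedWordFor cs (phiWord cs ω ρ I)
          (((HeapAux.Wd ω ρ).take I.card).reverse) := ⟨rfl, hredarev⟩
      have hpath := hufc _ _ harev hkτ
      have hpath' : Relation.ReflTransGen (CommSwap cs) (k :: τ)
          (((HeapAux.Wd ω ρ).take I.card).reverse) :=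
        @Std.Symm.symm _ (Relation.ReflTransGen (CommSwap cs))
          (@Relation.ReflTransGen.stdSymm _ _ ⟨fun _ _ h => HeapAux.commSwap_symm cs h⟩) _ _ hpath
      have hgood0 : HeapAux.GoodWord cs k (k :: τ) :=
        ⟨0, by simp, by simp, by simp⟩
      have hgood := HeapAux.goodWord_reflTransGen cs hpath' hgood0
      obtain ⟨i', hi', hik, hcm⟩ := hgood
      have hi'c : i' < I.card := by rwa [harevlen] at hi'
      have hiN : I.card - 1 - i' < ω.length := by omega
      have hk' : ω.get (ρ ⟨I.card - 1 - i', hiN⟩) = k := by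
        rw [← hik, List.getElem_reverse,
          getElem_congr_idx (show ((HeapAux.Wd ω ρ).take I.card).length - 1 - i'
            = I.card - 1 - i' by rw [List.length_take]; omega),
          HeapAux.getElem_take_Wd ω ρ I.card _ hc (by omega)]
      refine ⟨ρ ⟨I.card - 1 - i', hiN⟩,
        (hen _).mpr (by show I.card - 1 - i' < I.card; omega), hk', ?_⟩
      · -- maximality
        intro y hy hlt
        obtain ⟨z, hz1, hz2⟩ := Relation.TransGen.head'_iff.mp hlt
        have hzI : z ∈ I := by
          rcases (Relation.reflTransGen_iff_eq_or_transGen.mp hz2) with h | h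
          · rwa [← h]
          · exact hI hy h
        set b : Fin ω.length := ρ.symm z with hbdef
        have hzb : z = ρ b := (ρ.apply_symm_apply z).symm
        have hbc : b.val < I.card := (hen b).mp (by rwa [← hzb])
        have hstep : heapLT cs ω (ρ ⟨I.card - 1 - i', hiN⟩) (ρ b) := by
          rw [← hzb]
          exact Relation.TransGen.single hz1
        have hlt2 := hρ _ _ hstep
        rw [Fin.lt_def] at hlt2
        simp only at hlt2
        -- the letter of z appears among the first i' letters of the reversed word
        have hj' : I.card - 1 - b.val < i' := by omega
        have hmem2 : ω.get z ∈ (((HeapAux.Wd ω ρ).take I.card).reverse).take i' := by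
          have hj'' : I.card - 1 - b.val < ((((HeapAux.Wd ω ρ).take I.card).reverse).take i').length := by
            rw [List.length_take, harevlen]
            omega
          have heq : ((((HeapAux.Wd ω ρ).take I.card).reverse).take i')[I.card - 1 - b.val] = ω.get z := by
            rw [List.getElem_take, List.getElem_reverse,
              getElem_congr_idx (show ((HeapAux.Wd ω ρ).take I.card).length - 1 - (I.card - 1 - b.val)
                = b.val by rw [List.length_take]; omega),
              HeapAux.getElem_take_Wd ω ρ I.card _ hc hbc, hzb]
          rw [← heq]
          exact List.getElem_mem hj''
        have hcomm := hcm _ hmem2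
        exact hz1.2 (by rwa [← hk'] at hcomm)
  · -- part 2 : the value of φ on the erased ideal
    intro p₀ hmem hk hmax σ hσ hσen
    obtain ⟨ρ', h1, h2, h3⟩ := peel p₀ hmem hk hmax
    have hcard' : (I.erase p₀).card = I.card - 1 := Finset.card_erase_of_mem hmem
    have hAstar := HeapAux.prod_take_eq cs ω (I.card - 1) (by omega) (I.erase p₀) σ ρ' hσ h1
      (fun a => by rw [← hcard']; exact hσen a) h2
    show cs.wordProd (((HeapAux.Wd ω σ).take (I.erase p₀).card).reverse) = _
    rw [hcard', cs.wordProd_reverse, hAstar, ← h3]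
end

section
/- (q-Lucas theorem) Let d be a positive integer and let ζ ∈ ℂ be a primitive d-th root of unity. Let n and k be nonnegative integers, and write n = n'd + r and k = k'd + s with 0 ≤ r, s ≤ d − 1. Then the Gaussian binomial coefficient [n choose k]_q, evaluated at q = ζ, equals the ordinary binomial coefficient C(n', k') times the evaluation at q = ζ of the Gaussian binomial coefficient [r choose s]_q. -/
/-- The `q`-integer `[a]_q = 1 + q + ⋯ + q^(a-1)` as a polynomial in `ℤ[q]`. -/
noncomputable def qInt (a : ℕ) : Polynomial ℤ := ∑ i ∈ Finset.range a, Polynomial.X ^ i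


open Polynomial Finset

lemma qInt_zero : qInt 0 = 0 := by simp [qInt]

lemma qInt_ne_zero {a : ℕ} (ha : 0 < a) : qInt a ≠ 0 := fun h => by
  have := congrArg (Polynomial.eval (1 : ℤ)) h
  simp [qInt, Polynomial.eval_finset_sum] at this
  omega

lemma X_sub_one_ne_zero : (X - 1 : Polynomial ℤ) ≠ 0 := fun h => by
  have := congrArg (Polynomial.eval (0 : ℤ)) h
  simp at this

noncomputable def qT (d j : ℕ) : Polynomial ℤ := ∑ m ∈ Finset.range j, (Polynomial.X ^ d) ^ m

lemma qInt_mul_eq (d j : ℕ) : qInt (d * j) = qInt d * qT d j := by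
  apply mul_right_cancel₀ X_sub_one_ne_zero
  calc qInt (d*j) * (X - 1) = X^(d*j) - 1 := geom_sum_mul _ _
    _ = (X^d)^j - 1 := by rw [pow_mul]
    _ = qT d j * (X^d - 1) := (geom_sum_mul _ _).symm
    _ = qT d j * (qInt d * (X - 1)) := by rw [qInt, geom_sum_mul]
    _ = qInt d * qT d j * (X - 1) := by ring

noncomputable def qg (d m : ℕ) : Polynomial ℤ := if d ∣ m then qT d (m / d) else qInt m

lemma extraction (d : ℕ) (t : ℕ) :
    ∏ m ∈ Ioc 0 t, qInt m = (qInt d) ^ (t / d) * ∏ m ∈ Ioc 0 t, qg d m := by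
  induction t with
  | zero => simp
  | succ t ih =>
    rw [Finset.prod_Ioc_succ_top (by omega), Finset.prod_Ioc_succ_top (Nat.zero_le _), ih,
      Nat.succ_div]
    by_cases h : d ∣ (t + 1)
    · have h1 : qInt (t+1) = qInt d * qT d ((t+1)/d) := by
        obtain ⟨j, hj⟩ := h
        have h0 : 0 < d := Nat.pos_of_ne_zero (by rintro rfl; omega)
        rw [hj, qInt_mul_eq, Nat.mul_div_cancel_left _ h0]
      rw [if_pos h, h1, qg, if_pos h, pow_add]
      ring
    · rw [if_neg h, qg, if_neg h, pow_add]
      ring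


lemma aeval_qInt (ζ : ℂ) (a : ℕ) : aeval ζ (qInt a) = ∑ i ∈ range a, ζ ^ i := by
  simp [qInt]

lemma zeta_ne_one {d : ℕ} {ζ : ℂ} (hζ : IsPrimitiveRoot ζ d) (hd : 2 ≤ d) : ζ ≠ 1 := by
  intro h
  have := Nat.le_of_dvd one_pos (hζ.dvd_of_pow_eq_one 1 (by rw [pow_one, h]))
  omega

lemma f_ne_zero {d : ℕ} {ζ : ℂ} (hζ : IsPrimitiveRoot ζ d) (hd : 0 < d) {m : ℕ}
    (hm : ¬ d ∣ m) : aeval ζ (qInt m) ≠ 0 := by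
  have hd2 : 2 ≤ d := by
    by_contra hlt
    have : d = 1 := by omega
    subst this
    exact hm (one_dvd m)
  have hζ1 : ζ ≠ 1 := zeta_ne_one hζ hd2
  rw [aeval_qInt, geom_sum_eq hζ1]
  exact div_ne_zero (sub_ne_zero.2 (fun hh => hm ((hζ.pow_eq_one_iff_dvd m).1 hh)))
    (sub_ne_zero.2 hζ1)

lemma aeval_qT {d : ℕ} {ζ : ℂ} (hζ : IsPrimitiveRoot ζ d) (j : ℕ) :
    aeval ζ (qT d j) = (j : ℂ) := by
  simp [qT, hζ.pow_eq_one]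

lemma f_add_d {d : ℕ} {ζ : ℂ} (hζ : IsPrimitiveRoot ζ d) (hd : 2 ≤ d) (m : ℕ) :
    aeval ζ (qInt (m + d)) = aeval ζ (qInt m) := by
  rw [aeval_qInt, aeval_qInt, Finset.sum_range_add]
  have : ∑ i ∈ range d, ζ ^ (m + i) = ζ ^ m * ∑ i ∈ range d, ζ ^ i := by
    rw [Finset.mul_sum]; exact Finset.sum_congr rfl fun i _ => by rw [pow_add]
  rw [this, hζ.geom_sum_eq_zero hd, mul_zero, add_zero]

lemma f_mod {d : ℕ} {ζ : ℂ} (hζ : IsPrimitiveRoot ζ d) (hd : 2 ≤ d) (m : ℕ) :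
    aeval ζ (qInt m) = aeval ζ (qInt (m % d)) := by
  induction m using Nat.strong_induction_on with
  | _ m ih =>
    by_cases h : m < d
    · rw [Nat.mod_eq_of_lt h]
    · push_neg at h
      have h1 : m = (m - d) + d := by omega
      rw [h1, f_add_d hζ hd, ih (m - d) (by omega), Nat.add_mod_right]

lemma Phi_formula {d : ℕ} {ζ : ℂ} (hζ : IsPrimitiveRoot ζ d) (hd : 0 < d) (t : ℕ) :
    ∏ m ∈ Ioc 0 t, aeval ζ (qg d m) =
      (Nat.factorial (t / d) : ℂ) * (∏ c ∈ Ioc 0 (d - 1), aeval ζ (qInt c)) ^ (t / d)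
        * ∏ c ∈ Ioc 0 (t % d), aeval ζ (qInt c) := by
  induction t with
  | zero => simp
  | succ t ih =>
    rw [Finset.prod_Ioc_succ_top (Nat.zero_le _), ih]
    have hdm := Nat.div_add_mod t d
    have hlt : t % d < d := Nat.mod_lt t hd
    by_cases h : d ∣ (t + 1)
    · have e2 : (t + 1) / d = t / d + 1 := by rw [Nat.succ_div, if_pos h]
      have e3 : t % d = d - 1 := by
        obtain ⟨j, hj⟩ := h
        have hj1 : t / d < j := by
          by_contra hc
          push_neg at hc
          have := Nat.mul_le_mul_left d hc
          omega
        have hmul : t % d + 1 = d * (j - t / d) := by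
          rw [Nat.mul_sub]
          omega
        have hge : d ≤ t % d + 1 :=
          Nat.le_of_dvd (by omega) ⟨j - t / d, hmul⟩
        omega
      have e1 : (t + 1) % d = 0 := by
        obtain ⟨j, hj⟩ := h
        rw [hj, Nat.mul_mod_right]
      rw [qg, if_pos h, aeval_qT hζ, e1, e2, e3]
      simp only [Finset.Ioc_self, Finset.prod_empty, Nat.factorial_succ]
      push_cast
      ring
    · have hd2 : 2 ≤ d := by
        by_contra hlt2
        have : d = 1 := by omega
        subst this
        exact h (one_dvd _)
      have hlt' : t % d + 1 < d := by
        by_contra hc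
        push_neg at hc
        have heq : t % d + 1 = d := by omega
        exact h ⟨t / d + 1, by rw [Nat.mul_succ]; omega⟩
      have key : t + 1 = (t % d + 1) + d * (t / d) := by omega
      have e1 : (t + 1) % d = t % d + 1 := by
        rw [key, Nat.add_mul_mod_self_left, Nat.mod_eq_of_lt hlt']
      have e2 : (t + 1) / d = t / d := by
        rw [Nat.succ_div, if_neg h, Nat.add_zero]
      rw [qg, if_neg h, f_mod hζ hd2 (t + 1), e1, e2,
        Finset.prod_Ioc_succ_top (Nat.zero_le _)]
      ring


lemma qLucas_reindex {M : Type*} [CommMonoid M] (f : ℕ → M) (a b : ℕ) (h : b ≤ a) :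
    ∏ i ∈ Finset.Ioc 0 b, f (a + i - b) = ∏ m ∈ Finset.Ioc (a - b) a, f m := by
  have hmap : Finset.Ioc (a - b) a = Finset.map (addLeftEmbedding (a - b)) (Finset.Ioc 0 b) := by
    rw [Finset.map_add_left_Ioc]
    congr 1
    omega
  rw [hmap, Finset.prod_map]
  refine Finset.prod_congr rfl fun i hi => ?_
  simp only [Finset.mem_Ioc] at hi
  simp only [addLeftEmbedding_apply]
  congr 1
  omega

lemma qdiv_helper {d : ℕ} (hd : 0 < d) (a : ℕ) {b : ℕ} (hb : b < d) : (a * d + b) / d = a := by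
  rw [mul_comm, Nat.mul_add_div hd, Nat.div_eq_of_lt hb, add_zero]

lemma qmod_helper {d : ℕ} (hd : 0 < d) (a : ℕ) {b : ℕ} (hb : b < d) : (a * d + b) % d = b := by
  rw [mul_comm, Nat.mul_add_mod, Nat.mod_eq_of_lt hb]

lemma small_prod_ne_zero {d : ℕ} {ζ : ℂ} (hζ : IsPrimitiveRoot ζ d) (hd : 0 < d) {u : ℕ}
    (hu : u < d) : ∏ c ∈ Finset.Ioc 0 u, aeval ζ (qInt c) ≠ 0 := by
  rw [Finset.prod_ne_zero_iff]
  intro c hc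
  simp only [Finset.mem_Ioc] at hc
  exact f_ne_zero hζ hd fun hdvd => by have := Nat.le_of_dvd (by omega) hdvd; omega

lemma g_prod_ne_zero {d : ℕ} {ζ : ℂ} (hζ : IsPrimitiveRoot ζ d) (hd : 0 < d) (t : ℕ) :
    ∏ m ∈ Finset.Ioc 0 t, aeval ζ (qg d m) ≠ 0 := by
  rw [Finset.prod_ne_zero_iff]
  intro m hm
  simp only [Finset.mem_Ioc] at hm
  rw [qg]
  by_cases h : d ∣ m
  · rw [if_pos h, aeval_qT hζ]
    have h1 := Nat.le_of_dvd (by omega) h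
    have h2 : 1 ≤ m / d := (Nat.one_le_div_iff hd).2 h1
    exact Nat.cast_ne_zero.mpr (by omega)
  · rw [if_neg h]
    exact f_ne_zero hζ hd h

lemma prod_qInt_pos_ne_zero (t : ℕ) : ∏ m ∈ Finset.Ioc 0 t, qInt m ≠ 0 := by
  rw [Finset.prod_ne_zero_iff]
  intro m hm
  simp only [Finset.mem_Ioc] at hm
  exact qInt_ne_zero hm.1

/-- The `q`-Lucas theorem: if `ζ` is a primitive `d`-th root of unity,
`n = n'd + r` and `k = k'd + s` with `0 ≤ r, s ≤ d − 1`, then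
`[n choose k]_{q=ζ} = C(n', k') · [r choose s]_{q=ζ}`.  The Gaussian binomial
coefficients are characterized by `[n choose k]_q · ∏_{i=1}^k [i]_q = ∏_{i=1}^k [n−k+i]_q`. -/
theorem q_lucas (d : ℕ) (hd : 0 < d) (ζ : ℂ) (hζ : IsPrimitiveRoot ζ d)
    (n k n' k' r s : ℕ) (hn : n = n' * d + r) (hk : k = k' * d + s)
    (hr : r ≤ d - 1) (hs : s ≤ d - 1)
    (Bnk Brs : Polynomial ℤ)
    (hBnk : Bnk * ∏ i ∈ Finset.Icc 1 k, qInt i = ∏ i ∈ Finset.Icc 1 k, qInt (n + i - k))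
    (hBrs : Brs * ∏ i ∈ Finset.Icc 1 s, qInt i = ∏ i ∈ Finset.Icc 1 s, qInt (r + i - s)) :
    Polynomial.aeval ζ Bnk = (n'.choose k' : ℂ) * Polynomial.aeval ζ Brs := by
  have hrd : r < d := by omega
  have hsd : s < d := by omega
  rw [show Finset.Icc 1 k = Finset.Ioc 0 k from Finset.Icc_add_one_left_eq_Ioc 0 k] at hBnk
  rw [show Finset.Icc 1 s = Finset.Ioc 0 s from Finset.Icc_add_one_left_eq_Ioc 0 s] at hBrs
  have hBrs0 : r < s → Brs = 0 := by
    intro hsr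
    have hmem : s - r ∈ Finset.Ioc 0 s := by simp only [Finset.mem_Ioc]; omega
    have hzero : ∏ i ∈ Finset.Ioc 0 s, qInt (r + i - s) = 0 :=
      Finset.prod_eq_zero hmem (by rw [show r + (s - r) - s = 0 by omega, qInt_zero])
    rw [hzero] at hBrs
    rcases mul_eq_zero.1 hBrs with h | h
    · exact h
    · exact absurd h (prod_qInt_pos_ne_zero s)
  by_cases hkn : k ≤ n
  · -- main case : k ≤ n
    have hnum : ∏ i ∈ Finset.Ioc 0 k, qInt (n + i - k) = ∏ m ∈ Finset.Ioc (n - k) n, qInt m :=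
      qLucas_reindex qInt n k hkn
    have hsplit : (∏ m ∈ Finset.Ioc 0 (n - k), qInt m) * ∏ m ∈ Finset.Ioc (n - k) n, qInt m
        = ∏ m ∈ Finset.Ioc 0 n, qInt m :=
      Finset.prod_Ioc_consecutive _ (Nat.zero_le _) (Nat.sub_le n k)
    have key : Bnk * ((∏ m ∈ Finset.Ioc 0 k, qInt m) * ∏ m ∈ Finset.Ioc 0 (n - k), qInt m)
        = ∏ m ∈ Finset.Ioc 0 n, qInt m := by
      rw [← hsplit, ← hnum, ← hBnk]; ring
    rw [extraction d k, extraction d (n - k), extraction d n] at key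
    have hkd : k / d = k' := by rw [hk]; exact qdiv_helper hd k' hsd
    have hkm : k % d = s := by rw [hk]; exact qmod_helper hd k' hsd
    have hnd : n / d = n' := by rw [hn]; exact qdiv_helper hd n' hrd
    have hnm : n % d = r := by rw [hn]; exact qmod_helper hd n' hrd
    have hk'n' : k' ≤ n' := by
      by_contra hc
      have h1 : (n' + 1) * d ≤ k' * d := Nat.mul_le_mul_right d (by omega)
      have h2 : (n' + 1) * d = n' * d + d := by ring
      omega
    by_cases hsr : s ≤ r
    · -- case C : k ≤ n, s ≤ r
      have hnk1 : n - k = (n' - k') * d + (r - s) := by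
        have e : (n' - k') * d + k' * d = n' * d := by
          rw [← Nat.add_mul]; congr 1; omega
        omega
      have hnkd : (n - k) / d = n' - k' := by rw [hnk1]; exact qdiv_helper hd _ (by omega)
      have hnkm : (n - k) % d = r - s := by rw [hnk1]; exact qmod_helper hd _ (by omega)
      rw [hkd, hnkd, hnd] at key
      have hps : (qInt d) ^ n' = qInt d ^ k' * qInt d ^ (n' - k') := by
        rw [← pow_add]; congr 1; omega
      have key2 : (Bnk * ((∏ m ∈ Finset.Ioc 0 k, qg d m) * ∏ m ∈ Finset.Ioc 0 (n - k), qg d m))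
            * (qInt d ^ k' * qInt d ^ (n' - k'))
          = (∏ m ∈ Finset.Ioc 0 n, qg d m) * (qInt d ^ k' * qInt d ^ (n' - k')) := by
        rw [hps] at key
        linear_combination key
      have key3 := mul_right_cancel₀
        (mul_ne_zero (pow_ne_zero _ (qInt_ne_zero hd)) (pow_ne_zero _ (qInt_ne_zero hd))) key2
      have keyC := congrArg (Polynomial.aeval ζ) key3
      simp only [map_mul, map_prod] at keyC
      have Pk := Phi_formula hζ hd k
      rw [hkd, hkm] at Pk
      have Pnk := Phi_formula hζ hd (n - k)
      rw [hnkd, hnkm] at Pnk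
      have Pn := Phi_formula hζ hd n
      rw [hnd, hnm] at Pn
      rw [Pk, Pnk, Pn] at keyC
      have hnum2 : ∏ i ∈ Finset.Ioc 0 s, qInt (r + i - s) = ∏ m ∈ Finset.Ioc (r - s) r, qInt m :=
        qLucas_reindex qInt r s hsr
      have hsplit2 : (∏ m ∈ Finset.Ioc 0 (r - s), qInt m) * ∏ m ∈ Finset.Ioc (r - s) r, qInt m
          = ∏ m ∈ Finset.Ioc 0 r, qInt m :=
        Finset.prod_Ioc_consecutive _ (Nat.zero_le _) (Nat.sub_le r s)
      have keyB : Brs * ((∏ m ∈ Finset.Ioc 0 s, qInt m) * ∏ m ∈ Finset.Ioc 0 (r - s), qInt m)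
          = ∏ m ∈ Finset.Ioc 0 r, qInt m := by
        rw [← hsplit2, ← hnum2, ← hBrs]; ring
      have keyB' := congrArg (Polynomial.aeval ζ) keyB
      simp only [map_mul, map_prod] at keyB'
      set A := Polynomial.aeval ζ Bnk with hA
      set B := Polynomial.aeval ζ Brs with hB
      set F := ∏ c ∈ Finset.Ioc 0 (d - 1), Polynomial.aeval ζ (qInt c) with hF
      set Sv := ∏ c ∈ Finset.Ioc 0 s, Polynomial.aeval ζ (qInt c) with hSv
      set Tv := ∏ c ∈ Finset.Ioc 0 (r - s), Polynomial.aeval ζ (qInt c) with hTv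
      set Rv := ∏ c ∈ Finset.Ioc 0 r, Polynomial.aeval ζ (qInt c) with hRv
      have hFne : F ≠ 0 := small_prod_ne_zero hζ hd (by omega)
      have hSne : Sv ≠ 0 := small_prod_ne_zero hζ hd (by omega)
      have hTne : Tv ≠ 0 := small_prod_ne_zero hζ hd (by omega)
      have hfact : (n'.choose k' : ℂ) * (k'.factorial : ℂ) * ((n' - k').factorial : ℂ)
          = (n'.factorial : ℂ) := by
        exact_mod_cast congrArg (Nat.cast : ℕ → ℂ)
          (Nat.choose_mul_factorial_mul_factorial hk'n')
      have hpow : F ^ n' = F ^ k' * F ^ (n' - k') := by rw [← pow_add]; congr 1; omega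
      have hM : ((k'.factorial : ℂ) * ((n' - k').factorial : ℂ) * F ^ n' * Sv * Tv) ≠ 0 := by
        refine mul_ne_zero (mul_ne_zero (mul_ne_zero (mul_ne_zero ?_ ?_) ?_) ?_) ?_
        · exact Nat.cast_ne_zero.2 (Nat.factorial_ne_zero _)
        · exact Nat.cast_ne_zero.2 (Nat.factorial_ne_zero _)
        · exact pow_ne_zero _ hFne
        · exact hSne
        · exact hTne
      apply mul_right_cancel₀ hM
      linear_combination keyC + (A * (k'.factorial : ℂ) * ((n' - k').factorial : ℂ) * Sv * Tv) * hpow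
        - ((n'.factorial : ℂ) * F ^ n') * keyB'
        - (B * Sv * Tv * F ^ n') * hfact
    · -- case B : k ≤ n, r < s
      push_neg at hsr
      have hd2 : 2 ≤ d := by omega
      have hk'lt : k' < n' := by
        rcases lt_or_eq_of_le hk'n' with h | h
        · exact h
        · exfalso; subst h; omega
      have hnk1 : n - k = (n' - k' - 1) * d + (d + r - s) := by
        have e : (n' - k' - 1) * d + (k' + 1) * d = n' * d := by
          rw [← Nat.add_mul]; congr 1; omega
        have e2 : (k' + 1) * d = k' * d + d := by ring
        omega
      have hnkd : (n - k) / d = n' - k' - 1 := by rw [hnk1]; exact qdiv_helper hd _ (by omega)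
      rw [hkd, hnkd, hnd] at key
      have hps : (qInt d) ^ n' = qInt d * (qInt d ^ k' * qInt d ^ (n' - k' - 1)) := by
        rw [← pow_add, ← pow_succ']; congr 1; omega
      have key2 : (Bnk * ((∏ m ∈ Finset.Ioc 0 k, qg d m) * ∏ m ∈ Finset.Ioc 0 (n - k), qg d m))
            * (qInt d ^ k' * qInt d ^ (n' - k' - 1))
          = (qInt d * ∏ m ∈ Finset.Ioc 0 n, qg d m) * (qInt d ^ k' * qInt d ^ (n' - k' - 1)) := by
        rw [hps] at key
        linear_combination key
      have key3 := mul_right_cancel₀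
        (mul_ne_zero (pow_ne_zero _ (qInt_ne_zero hd)) (pow_ne_zero _ (qInt_ne_zero hd))) key2
      have keyC := congrArg (Polynomial.aeval ζ) key3
      simp only [map_mul, map_prod] at keyC
      have hfd : Polynomial.aeval ζ (qInt d) = 0 := by
        rw [aeval_qInt]; exact hζ.geom_sum_eq_zero hd2
      rw [hfd, zero_mul] at keyC
      have hAz : Polynomial.aeval ζ Bnk = 0 := by
        rcases mul_eq_zero.1 keyC with h | h
        · exact h
        · exact absurd h (mul_ne_zero (g_prod_ne_zero hζ hd k) (g_prod_ne_zero hζ hd (n - k)))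
      rw [hAz, hBrs0 hsr, map_zero, mul_zero]
  · -- case A : k > n
    push_neg at hkn
    have hBnk0 : Bnk = 0 := by
      have hmem : k - n ∈ Finset.Ioc 0 k := by simp only [Finset.mem_Ioc]; omega
      have hzero : ∏ i ∈ Finset.Ioc 0 k, qInt (n + i - k) = 0 :=
        Finset.prod_eq_zero hmem (by rw [show n + (k - n) - k = 0 by omega, qInt_zero])
      rw [hzero] at hBnk
      rcases mul_eq_zero.1 hBnk with h | h
      · exact h
      · exact absurd h (prod_qInt_pos_ne_zero k)
    rw [hBnk0, map_zero]
    by_cases hk'n' : k' ≤ n'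
    · have hk'e : k' = n' := by
        by_contra hne
        have h1 : (k' + 1) * d ≤ n' * d := Nat.mul_le_mul_right d (by omega)
        have h2 : (k' + 1) * d = k' * d + d := by ring
        omega
      subst hk'e
      have hsr : r < s := by omega
      rw [hBrs0 hsr, map_zero, mul_zero]
    · rw [Nat.choose_eq_zero_of_lt (by omega)]
      simp
end
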